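/- arXiv:2009.08678 — 4 statements merged into one kernel-verified Lean document; each statement's English description precedes it below -/
import Mathlib

section
/- With probability one, lim_{N→∞} M_N / log_{1/√(pq)} N = 1; that is, the length of the longest run of consecutive switches in the first N trials, divided by the base-(1/√(pq)) logarithm of N, converges almost surely to 1. -/
open MeasureTheory ProbabilityTheory Filter
open scoped Classical

/-- `switchCount X n m ω` is the number of switches `S_n^{(m)}` in the `n` trials
`X_m, …, X_{m+n-1}`. -/
def switchCount {Ω : Type*} (X : ℕ → Ω → ℕ) (n m : ℕ) (ω : Ω) : ℕ :=
  ∑ i ∈ Finset.Icc (m + 1) (n + m - 1),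
    ((1 - X (i - 1) ω) * X i ω + X (i - 1) ω * (1 - X i ω))

/-- `longestSwitch X N m ω` is `M_N^{(m)}`, the length of the longest run of consecutive
switches in the trials `X_m, …, X_{m+N-1}`. -/
noncomputable def longestSwitch {Ω : Type*} (X : ℕ → Ω → ℕ) (N m : ℕ) (ω : Ω) : ℕ :=
  ((Finset.Icc 1 N).filter fun n =>
      ∃ i ∈ Finset.Icc m (m + N - n + 1), switchCount X n i ω = n - 1).sup
    fun n => n - 1

namespace AltAux

variable {Ω : Type*} {X : ℕ → Ω → ℕ}

/-- The event that `X i` matches the alternating pattern with parity shift `b`. -/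
def patSet (X : ℕ → Ω → ℕ) (b i : ℕ) : Set Ω := {ω | X i ω = (i + b) % 2}

/-- The event that `X i, …, X (i+n-1)` all match the alternating pattern with shift `b`. -/
def blockSet (X : ℕ → Ω → ℕ) (b i n : ℕ) : Set Ω := ⋂ k ∈ Finset.range n, patSet X b (i + k)

/-- The event that `X i, …, X (i+n-1)` alternate. -/
def altSet (X : ℕ → Ω → ℕ) (n i : ℕ) : Set Ω :=
  {ω | ∀ j ∈ Finset.Icc (i + 1) (n + i - 1), X (j - 1) ω ≠ X j ω}

lemma term_eq (x y : ℕ) (hx : x ≤ 1) (hy : y ≤ 1) :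
    (1 - x) * y + x * (1 - y) = if x = y then 0 else 1 := by
  interval_cases x <;> interval_cases y <;> simp

lemma switchCount_eq_iff (hval : ∀ i ω, X i ω ≤ 1) (n i : ℕ) (ω : Ω) :
    switchCount X n i ω = n - 1 ↔ ω ∈ altSet X n i := by
  have hcard : (Finset.Icc (i + 1) (n + i - 1)).card = n - 1 := by
    rw [Nat.card_Icc]; omega
  have hterm : ∀ j, ((1 - X (j - 1) ω) * X j ω + X (j - 1) ω * (1 - X j ω))
      = if X (j - 1) ω = X j ω then 0 else 1 := fun j => term_eq _ _ (hval _ _) (hval _ _)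
  unfold switchCount altSet
  simp only [Set.mem_setOf_eq]
  rw [Finset.sum_congr rfl fun j _ => hterm j]
  constructor
  · intro h j hj
    by_contra hne
    have hlt : ∑ j ∈ Finset.Icc (i + 1) (n + i - 1),
        (if X (j - 1) ω = X j ω then 0 else 1) < ∑ j ∈ Finset.Icc (i + 1) (n + i - 1), 1 := by
      refine Finset.sum_lt_sum (fun k _ => by split <;> omega) ⟨j, hj, by simp [hne]⟩
    rw [Finset.sum_const, smul_eq_mul, mul_one, hcard] at hlt
    omega
  · intro h
    rw [Finset.sum_congr rfl fun j hj => if_neg (h j hj), Finset.sum_const, smul_eq_mul,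
      mul_one, hcard]

lemma altSet_mono {n m i I : ℕ} (hiI : i ≤ I) (hm : I + m ≤ i + n) :
    altSet X n i ⊆ altSet X m I := by
  intro ω h j hj
  refine h j ?_
  simp only [Finset.mem_Icc] at hj ⊢
  omega

lemma blockSet_subset_altSet (b i n : ℕ) : blockSet X b i n ⊆ altSet X n i := by
  intro ω hω
  simp only [blockSet, Set.mem_iInter, Finset.mem_range] at hω
  intro j hj
  simp only [Finset.mem_Icc] at hj
  have h1 := hω (j - 1 - i) (by omega)
  have h2 := hω (j - i) (by omega)
  rw [show i + (j - 1 - i) = j - 1 by omega] at h1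
  rw [show i + (j - i) = j by omega] at h2
  rw [h1, h2]
  omega

lemma altSet_eq_union (hval : ∀ i ω, X i ω ≤ 1) {n : ℕ} (i : ℕ) (hn : 1 ≤ n) :
    altSet X n i = blockSet X 0 i n ∪ blockSet X 1 i n := by
  ext ω
  constructor
  · intro hω
    have hkey : ∀ k, k < n → X (i + k) ω = (i + k + ((X i ω + i) % 2)) % 2 := by
      intro k
      induction k with
      | zero =>
        intro _
        have e : i + 0 = i := by omega
        rw [e]
        have := hval i ω
        omega
      | succ k ih =>
        intro hk
        have hne : X (i + k) ω ≠ X (i + k + 1) ω := by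
          have := hω (i + k + 1) (Finset.mem_Icc.mpr (by omega))
          rwa [show i + k + 1 - 1 = i + k by omega] at this
        have e : i + (k + 1) = i + k + 1 := by omega
        rw [e]
        have h1 := hval (i + k) ω
        have h2 := hval (i + k + 1) ω
        have := ih (by omega)
        omega
    have hb : (X i ω + i) % 2 = 0 ∨ (X i ω + i) % 2 = 1 := Nat.mod_two_eq_zero_or_one _
    rcases hb with hb | hb
    · left
      simp only [blockSet, Set.mem_iInter, Finset.mem_range, patSet, Set.mem_setOf_eq]
      intro k hk
      have := hkey k hk
      omega
    · right
      simp only [blockSet, Set.mem_iInter, Finset.mem_range, patSet, Set.mem_setOf_eq]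
      intro k hk
      have := hkey k hk
      omega
  · rintro (hω | hω) <;> exact blockSet_subset_altSet _ _ _ hω

lemma switchCount_one (i : ℕ) (ω : Ω) : switchCount X 1 i ω = 0 := by
  unfold switchCount
  rw [Finset.Icc_eq_empty (by omega)]
  simp

lemma le_longestSwitch (X : ℕ → Ω → ℕ) {N n i : ℕ} (ω : Ω) (hn1 : 1 ≤ n) (hnN : n ≤ N)
    (hi1 : 1 ≤ i) (hi2 : i ≤ 1 + N - n + 1) (h : switchCount X n i ω = n - 1) :
    n - 1 ≤ longestSwitch X N 1 ω := by
  apply Finset.le_sup (f := fun n => n - 1)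
  simp only [Finset.mem_filter, Finset.mem_Icc]
  exact ⟨⟨hn1, hnN⟩, i, ⟨hi1, hi2⟩, h⟩

lemma longestSwitch_le (X : ℕ → Ω → ℕ) {N : ℕ} (ω : Ω) (m : ℕ)
    (h : ∀ n i, 1 ≤ n → n ≤ N → 1 ≤ i → i ≤ 1 + N - n + 1 →
      switchCount X n i ω = n - 1 → n - 1 ≤ m) :
    longestSwitch X N 1 ω ≤ m := by
  apply Finset.sup_le
  intro n hn
  simp only [Finset.mem_filter, Finset.mem_Icc] at hn
  obtain ⟨⟨hn1, hnN⟩, i, hi, hsc⟩ := hn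
  exact h n i hn1 hnN hi.1 hi.2 hsc

/-- The weight of position `j` in an alternating pattern. -/
noncomputable def wgt (p q : ℝ) (j : ℕ) : ℝ := if j % 2 = 1 then p else q

variable [MeasurableSpace Ω] {μ : Measure Ω} [IsProbabilityMeasure μ] {p q : ℝ}

lemma measurable_patSet (hmeas : ∀ i, Measurable (X i)) (b i : ℕ) :
    MeasurableSet (patSet X b i) := by
  have : patSet X b i = X i ⁻¹' {(i + b) % 2} := by ext ω; simp [patSet]
  rw [this]
  exact hmeas i (measurableSet_singleton _)

lemma measurable_blockSet (hmeas : ∀ i, Measurable (X i)) (b i n : ℕ) :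
    MeasurableSet (blockSet X b i n) :=
  MeasurableSet.biInter (Finset.range n).countable_toSet
    fun k _ => measurable_patSet hmeas b (i + k)

lemma meas_eq_zero (hp0 : 0 < p) (hp1 : p < 1) (hq : q = 1 - p)
    (hmeas : ∀ i, Measurable (X i)) (hval : ∀ i ω, X i ω ≤ 1)
    (hdist : ∀ i, μ {ω | X i ω = 1} = ENNReal.ofReal p) (i : ℕ) :
    μ {ω | X i ω = 0} = ENNReal.ofReal q := by
  have hc : {ω | X i ω = 0} = {ω | X i ω = 1}ᶜ := by
    ext ω; have := hval i ω; simp only [Set.mem_setOf_eq, Set.mem_compl_iff]; omega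
  have hm : MeasurableSet {ω | X i ω = 1} := by
    have : {ω | X i ω = 1} = X i ⁻¹' {1} := by ext ω; simp
    rw [this]; exact hmeas i (measurableSet_singleton _)
  rw [hc, measure_compl hm (measure_ne_top μ _), hdist i, measure_univ, hq,
    ← ENNReal.ofReal_one, ← ENNReal.ofReal_sub _ hp0.le]

lemma meas_patSet (hp0 : 0 < p) (hp1 : p < 1) (hq : q = 1 - p)
    (hmeas : ∀ i, Measurable (X i)) (hval : ∀ i ω, X i ω ≤ 1)
    (hdist : ∀ i, μ {ω | X i ω = 1} = ENNReal.ofReal p) (b i : ℕ) :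
    μ (patSet X b i) = ENNReal.ofReal (wgt p q (i + b)) := by
  unfold patSet wgt
  rcases Nat.mod_two_eq_zero_or_one (i + b) with h | h <;> rw [h]
  · rw [if_neg (by norm_num)]
    exact meas_eq_zero hp0 hp1 hq hmeas hval hdist i
  · rw [if_pos rfl]
    exact hdist i

/-- Main product formula: probability of matching a pattern on an arbitrary finite index set. -/
lemma meas_biInter_pattern (hindep : iIndepFun X μ)
    (b : ℕ) (s : Finset ℕ) :
    μ (⋂ i ∈ s, patSet X b i) = ∏ i ∈ s, μ (patSet X b i) := by
  refine hindep.meas_biInter (S := s) (s := fun i => patSet X b i) fun i _ => ?_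
  exact ⟨{(i + b) % 2}, measurableSet_singleton _, by ext ω; simp [patSet]⟩

lemma blockSet_eq_biInter (b i n : ℕ) :
    blockSet X b i n = ⋂ j ∈ (Finset.range n).map ⟨(i + ·), add_right_injective i⟩, patSet X b j := by
  unfold blockSet
  ext ω
  simp only [Set.mem_iInter, Finset.mem_map, Finset.mem_range, Function.Embedding.coeFn_mk]
  constructor
  · rintro h j ⟨k, hk, rfl⟩; exact h k hk
  · intro h k hk; exact h (i + k) ⟨k, hk, rfl⟩

lemma meas_blockSet (hp0 : 0 < p) (hp1 : p < 1) (hq : q = 1 - p)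
    (hmeas : ∀ i, Measurable (X i)) (hval : ∀ i ω, X i ω ≤ 1)
    (hdist : ∀ i, μ {ω | X i ω = 1} = ENNReal.ofReal p)
    (hindep : iIndepFun X μ) (b i n : ℕ) :
    μ (blockSet X b i n) = ENNReal.ofReal (∏ k ∈ Finset.range n, wgt p q (i + k + b)) := by
  rw [blockSet_eq_biInter, meas_biInter_pattern hindep, Finset.prod_map,
    ENNReal.ofReal_prod_of_nonneg]
  · refine Finset.prod_congr rfl fun k _ => ?_
    exact meas_patSet hp0 hp1 hq hmeas hval hdist b (i + k)
  · intro k _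
    unfold wgt
    split <;> [exact le_of_lt hp0; linarith]

lemma wgt_nonneg (hp0 : 0 < p) (hp1 : p < 1) (hq : q = 1 - p) (j : ℕ) : 0 ≤ wgt p q j := by
  unfold wgt; split <;> [linarith; linarith]

lemma wgt_le_one (hp0 : 0 < p) (hp1 : p < 1) (hq : q = 1 - p) (j : ℕ) : wgt p q j ≤ 1 := by
  unfold wgt; split <;> [linarith; linarith]

lemma pq_le_wgt (hp0 : 0 < p) (hp1 : p < 1) (hq : q = 1 - p) (j : ℕ) : p * q ≤ wgt p q j := by
  unfold wgt; split <;> nlinarith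

lemma wgt_mul_consec (hp0 : 0 < p) (hp1 : p < 1) (hq : q = 1 - p) (j : ℕ) :
    wgt p q j * wgt p q (j + 1) = p * q := by
  unfold wgt
  rcases Nat.mod_two_eq_zero_or_one j with h | h
  · rw [if_neg (by omega), if_pos (by omega)]; ring
  · rw [if_pos h, if_neg (by omega)]

section r

lemma hpq_pos (hp0 : 0 < p) (hp1 : p < 1) (hq : q = 1 - p) : 0 < p * q := by nlinarith

lemma hr_pos (hp0 : 0 < p) (hp1 : p < 1) (hq : q = 1 - p) : 0 < Real.sqrt (p * q) :=
  Real.sqrt_pos.mpr (hpq_pos hp0 hp1 hq)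

lemma hr_sq (hp0 : 0 < p) (hp1 : p < 1) (hq : q = 1 - p) :
    Real.sqrt (p * q) ^ 2 = p * q := Real.sq_sqrt (hpq_pos hp0 hp1 hq).le

lemma hr_le_half (hp0 : 0 < p) (hp1 : p < 1) (hq : q = 1 - p) :
    Real.sqrt (p * q) ≤ 1 / 2 := by
  rw [show (1 : ℝ) / 2 = Real.sqrt ((1 : ℝ) / 4) by
    rw [show (1 : ℝ) / 4 = (1 / 2) ^ 2 by norm_num, Real.sqrt_sq (by norm_num)]]
  refine Real.sqrt_le_sqrt (by subst hq; nlinarith [sq_nonneg (2 * p - 1)])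

lemma hr_lt_one (hp0 : 0 < p) (hp1 : p < 1) (hq : q = 1 - p) :
    Real.sqrt (p * q) < 1 := lt_of_le_of_lt (hr_le_half hp0 hp1 hq) (by norm_num)

lemma prod_wgt_bounds (hp0 : 0 < p) (hp1 : p < 1) (hq : q = 1 - p) (i : ℕ) : ∀ n : ℕ,
    Real.sqrt (p * q) ^ (n + 1) ≤ ∏ k ∈ Finset.range n, wgt p q (i + k) ∧
    ∏ k ∈ Finset.range n, wgt p q (i + k) ≤ Real.sqrt (p * q) ^ (n - 1) := by
  set r := Real.sqrt (p * q) with hr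
  have hr0 : 0 < r := hr_pos hp0 hp1 hq
  have hr1 : r < 1 := hr_lt_one hp0 hp1 hq
  have hr2 : r ^ 2 = p * q := hr_sq hp0 hp1 hq
  intro n
  induction n using Nat.twoStepInduction with
  | zero =>
    simp only [Finset.range_zero, Finset.prod_empty]
    constructor
    · rw [pow_one]; linarith
    · norm_num
  | one =>
    simp only [Finset.range_one, Finset.prod_singleton]
    constructor
    · rw [show (1 : ℕ) + 1 = 2 from rfl, hr2]
      exact pq_le_wgt hp0 hp1 hq (i + 0)
    · simpa using wgt_le_one hp0 hp1 hq (i + 0)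
  | more n ih _ =>
    have hprod : ∏ k ∈ Finset.range (n + 2), wgt p q (i + k)
        = (∏ k ∈ Finset.range n, wgt p q (i + k)) * (p * q) := by
      rw [Finset.prod_range_succ, Finset.prod_range_succ, mul_assoc,
        show i + (n + 1) = (i + n) + 1 by omega, wgt_mul_consec hp0 hp1 hq]
    rw [hprod]
    have hpn : 0 ≤ ∏ k ∈ Finset.range n, wgt p q (i + k) :=
      Finset.prod_nonneg fun k _ => wgt_nonneg hp0 hp1 hq _
    constructor
    · calc r ^ (n + 2 + 1) = r ^ (n + 1) * r ^ 2 := by ring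
        _ ≤ (∏ k ∈ Finset.range n, wgt p q (i + k)) * (p * q) := by
            rw [hr2]
            exact mul_le_mul_of_nonneg_right ih.1 (hpq_pos hp0 hp1 hq).le
    · calc (∏ k ∈ Finset.range n, wgt p q (i + k)) * (p * q)
          ≤ r ^ (n - 1) * r ^ 2 := by
            rw [hr2]
            exact mul_le_mul_of_nonneg_right ih.2 (hpq_pos hp0 hp1 hq).le
        _ ≤ r ^ (n + 2 - 1) := by
            rcases Nat.eq_zero_or_pos n with hn | hn
            · subst hn
              simp only [Nat.zero_sub, pow_zero, one_mul]
              calc r ^ 2 = r * r := sq r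
                _ ≤ 1 * r := by nlinarith
                _ = r ^ (0 + 2 - 1) := by norm_num
            · rw [← pow_add, show n - 1 + 2 = n + 2 - 1 by omega]

end r

section Bounds

variable [MeasurableSpace Ω] {μ : Measure Ω} [IsProbabilityMeasure μ] {p q : ℝ}

lemma meas_blockSet_le (hp0 : 0 < p) (hp1 : p < 1) (hq : q = 1 - p)
    (hmeas : ∀ i, Measurable (X i)) (hval : ∀ i ω, X i ω ≤ 1)
    (hdist : ∀ i, μ {ω | X i ω = 1} = ENNReal.ofReal p)
    (hindep : iIndepFun X μ) (b i n : ℕ) :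
    μ (blockSet X b i n) ≤ ENNReal.ofReal (Real.sqrt (p * q) ^ (n - 1)) := by
  rw [meas_blockSet hp0 hp1 hq hmeas hval hdist hindep b i n]
  refine ENNReal.ofReal_le_ofReal ?_
  calc ∏ k ∈ Finset.range n, wgt p q (i + k + b)
      = ∏ k ∈ Finset.range n, wgt p q ((i + b) + k) := by
        refine Finset.prod_congr rfl fun k _ => ?_
        rw [show i + k + b = i + b + k by omega]
    _ ≤ Real.sqrt (p * q) ^ (n - 1) := (prod_wgt_bounds hp0 hp1 hq (i + b) n).2

lemma meas_blockSet_ge (hp0 : 0 < p) (hp1 : p < 1) (hq : q = 1 - p)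
    (hmeas : ∀ i, Measurable (X i)) (hval : ∀ i ω, X i ω ≤ 1)
    (hdist : ∀ i, μ {ω | X i ω = 1} = ENNReal.ofReal p)
    (hindep : iIndepFun X μ) (b i n : ℕ) :
    ENNReal.ofReal (Real.sqrt (p * q) ^ (n + 1)) ≤ μ (blockSet X b i n) := by
  rw [meas_blockSet hp0 hp1 hq hmeas hval hdist hindep b i n]
  refine ENNReal.ofReal_le_ofReal ?_
  calc Real.sqrt (p * q) ^ (n + 1)
      ≤ ∏ k ∈ Finset.range n, wgt p q ((i + b) + k) := (prod_wgt_bounds hp0 hp1 hq (i + b) n).1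
    _ = ∏ k ∈ Finset.range n, wgt p q (i + k + b) := by
        refine Finset.prod_congr rfl fun k _ => ?_
        rw [show i + b + k = i + k + b by omega]

lemma meas_altSet_le (hp0 : 0 < p) (hp1 : p < 1) (hq : q = 1 - p)
    (hmeas : ∀ i, Measurable (X i)) (hval : ∀ i ω, X i ω ≤ 1)
    (hdist : ∀ i, μ {ω | X i ω = 1} = ENNReal.ofReal p)
    (hindep : iIndepFun X μ) (i : ℕ) {n : ℕ} (hn : 1 ≤ n) :
    μ (altSet X n i) ≤ ENNReal.ofReal (2 * Real.sqrt (p * q) ^ (n - 1)) := by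
  rw [altSet_eq_union hval i hn]
  calc μ (blockSet X 0 i n ∪ blockSet X 1 i n)
      ≤ μ (blockSet X 0 i n) + μ (blockSet X 1 i n) := measure_union_le _ _
    _ ≤ ENNReal.ofReal (Real.sqrt (p * q) ^ (n - 1)) +
        ENNReal.ofReal (Real.sqrt (p * q) ^ (n - 1)) :=
        add_le_add (meas_blockSet_le hp0 hp1 hq hmeas hval hdist hindep 0 i n)
          (meas_blockSet_le hp0 hp1 hq hmeas hval hdist hindep 1 i n)
    _ = ENNReal.ofReal (2 * Real.sqrt (p * q) ^ (n - 1)) := by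
        rw [← ENNReal.ofReal_add (by positivity) (by positivity)]
        ring_nf

lemma pairwise_disjoint_blocks {ℓ : ℕ} (hℓ : 1 ≤ ℓ) :
    ∀ j₁ j₂ : ℕ, j₁ ≠ j₂ →
      Disjoint ((Finset.range ℓ).map ⟨((j₁ * ℓ + 1) + ·), add_right_injective _⟩)
        ((Finset.range ℓ).map ⟨((j₂ * ℓ + 1) + ·), add_right_injective _⟩) := by
  have key : ∀ j₁ j₂ : ℕ, j₁ < j₂ →
      Disjoint ((Finset.range ℓ).map ⟨((j₁ * ℓ + 1) + ·), add_right_injective _⟩)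
        ((Finset.range ℓ).map ⟨((j₂ * ℓ + 1) + ·), add_right_injective _⟩) := by
    intro j₁ j₂ hj
    rw [Finset.disjoint_left]
    rintro a ha hb
    simp only [Finset.mem_map, Finset.mem_range, Function.Embedding.coeFn_mk] at ha hb
    obtain ⟨k₁, hk₁, rfl⟩ := ha
    obtain ⟨k₂, hk₂, he⟩ := hb
    have h1 : (j₁ + 1) * ℓ ≤ j₂ * ℓ := Nat.mul_le_mul_right ℓ hj
    rw [add_mul, one_mul] at h1
    omega
  intro j₁ j₂ hj
  rcases lt_or_gt_of_ne hj with h | h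
  · exact key _ _ h
  · exact (key _ _ h).symm

lemma iIndepSet_blocks (hp0 : 0 < p) (hp1 : p < 1) (hq : q = 1 - p)
    (hmeas : ∀ i, Measurable (X i)) (hval : ∀ i ω, X i ω ≤ 1)
    (hdist : ∀ i, μ {ω | X i ω = 1} = ENNReal.ofReal p)
    (hindep : iIndepFun X μ) {ℓ : ℕ} (hℓ : 1 ≤ ℓ) :
    iIndepSet (fun j => blockSet X 0 (j * ℓ + 1) ℓ) μ := by
  rw [iIndepSet_iff_meas_biInter (fun j => measurable_blockSet hmeas 0 (j * ℓ + 1) ℓ)]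
  intro s
  have hre : (⋂ j ∈ s, blockSet X 0 (j * ℓ + 1) ℓ)
      = ⋂ i ∈ s.biUnion (fun j =>
          (Finset.range ℓ).map ⟨((j * ℓ + 1) + ·), add_right_injective _⟩), patSet X 0 i := by
    simp_rw [blockSet_eq_biInter]
    rw [Finset.set_biInter_biUnion]
  rw [hre, meas_biInter_pattern hindep, Finset.prod_biUnion]
  · refine Finset.prod_congr rfl fun j _ => ?_
    rw [blockSet_eq_biInter, meas_biInter_pattern hindep]
  · intro j₁ _ j₂ _ hne
    exact pairwise_disjoint_blocks hℓ j₁ j₂ hne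

lemma meas_biInter_compl_blocks (hp0 : 0 < p) (hp1 : p < 1) (hq : q = 1 - p)
    (hmeas : ∀ i, Measurable (X i)) (hval : ∀ i ω, X i ω ≤ 1)
    (hdist : ∀ i, μ {ω | X i ω = 1} = ENNReal.ofReal p)
    (hindep : iIndepFun X μ) {ℓ : ℕ} (hℓ : 1 ≤ ℓ) (K : ℕ) :
    μ (⋂ j ∈ Finset.range K, (blockSet X 0 (j * ℓ + 1) ℓ)ᶜ)
      = ∏ j ∈ Finset.range K, μ ((blockSet X 0 (j * ℓ + 1) ℓ)ᶜ) := by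
  have h := (iIndepSet_iff_iIndep _ μ).mp
    (iIndepSet_blocks hp0 hp1 hq hmeas hval hdist hindep hℓ)
  refine h.meas_biInter (S := Finset.range K)
    (s := fun j => (blockSet X 0 (j * ℓ + 1) ℓ)ᶜ) fun j _ => MeasurableSet.compl ?_
  exact MeasurableSpace.measurableSet_generateFrom (Set.mem_singleton _)

lemma meas_bad_le (hp0 : 0 < p) (hp1 : p < 1) (hq : q = 1 - p)
    (hmeas : ∀ i, Measurable (X i)) (hval : ∀ i ω, X i ω ≤ 1)
    (hdist : ∀ i, μ {ω | X i ω = 1} = ENNReal.ofReal p)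
    (hindep : iIndepFun X μ) {ℓ : ℕ} (hℓ : 1 ≤ ℓ) (K : ℕ) :
    μ (⋂ j ∈ Finset.range K, (blockSet X 0 (j * ℓ + 1) ℓ)ᶜ)
      ≤ ENNReal.ofReal (Real.exp (-(K * Real.sqrt (p * q) ^ (ℓ + 1)))) := by
  set r := Real.sqrt (p * q) with hr
  have hr0 : 0 < r := hr_pos hp0 hp1 hq
  have hr1 : r < 1 := hr_lt_one hp0 hp1 hq
  have hx1 : r ^ (ℓ + 1) ≤ 1 := pow_le_one₀ hr0.le hr1.le
  have hx0 : 0 ≤ r ^ (ℓ + 1) := by positivity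
  rw [meas_biInter_compl_blocks hp0 hp1 hq hmeas hval hdist hindep hℓ K]
  calc ∏ j ∈ Finset.range K, μ ((blockSet X 0 (j * ℓ + 1) ℓ)ᶜ)
      ≤ ∏ _j ∈ Finset.range K, ENNReal.ofReal (1 - r ^ (ℓ + 1)) := by
        refine Finset.prod_le_prod' fun j _ => ?_
        rw [measure_compl (measurable_blockSet hmeas 0 (j * ℓ + 1) ℓ) (measure_ne_top μ _),
          measure_univ]
        calc 1 - μ (blockSet X 0 (j * ℓ + 1) ℓ)
            ≤ 1 - ENNReal.ofReal (r ^ (ℓ + 1)) :=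
              tsub_le_tsub_left (meas_blockSet_ge hp0 hp1 hq hmeas hval hdist hindep _ _ _) 1
          _ = ENNReal.ofReal (1 - r ^ (ℓ + 1)) := by
              rw [← ENNReal.ofReal_one, ← ENNReal.ofReal_sub _ hx0]
    _ = ENNReal.ofReal ((1 - r ^ (ℓ + 1)) ^ K) := by
        rw [Finset.prod_const, Finset.card_range, ← ENNReal.ofReal_pow (by linarith)]
    _ ≤ ENNReal.ofReal (Real.exp (-(K * r ^ (ℓ + 1)))) := by
        refine ENNReal.ofReal_le_ofReal ?_
        calc (1 - r ^ (ℓ + 1)) ^ K ≤ Real.exp (-(r ^ (ℓ + 1))) ^ K := by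
              refine pow_le_pow_left₀ (by linarith) ?_ K
              linarith [Real.add_one_le_exp (-(r ^ (ℓ + 1)))]
          _ = Real.exp (-(K * r ^ (ℓ + 1))) := by
              rw [← Real.exp_nat_mul]; ring_nf

end Bounds

section Asymptotics

lemma tsum_ne_top_of_eventually_le {f g : ℕ → ENNReal} (hf : ∀ n, f n ≤ 1)
    (h : ∀ᶠ n in atTop, f n ≤ g n) (hg : (∑' n, g n) ≠ ⊤) : (∑' n, f n) ≠ ⊤ := by
  obtain ⟨N₀, hN₀⟩ := eventually_atTop.mp h
  have hb : ∀ n, f n ≤ g n + (if n < N₀ then 1 else 0) := by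
    intro n
    by_cases hn : n < N₀
    · simp only [hn, if_true]
      exact le_add_left (hf n)
    · simp only [hn, if_false, add_zero]
      exact hN₀ n (by omega)
  have hle : ∑' n, f n ≤ ∑' n, (g n + (if n < N₀ then 1 else 0)) := ENNReal.tsum_le_tsum hb
  rw [ENNReal.tsum_add] at hle
  have h2 : ∑' n, (if n < N₀ then (1 : ENNReal) else 0) = N₀ := by
    rw [tsum_eq_sum (s := Finset.range N₀)
      (by intro n hn; rw [Finset.mem_range] at hn; simp [hn])]
    rw [Finset.sum_ite_of_true (by intro n hn; rwa [Finset.mem_range] at hn)]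
    simp
  refine ne_top_of_le_ne_top ?_ hle
  rw [h2]
  exact ENNReal.add_ne_top.mpr ⟨hg, ENNReal.natCast_ne_top N₀⟩

lemma r_rpow_logb {r : ℝ} (hr0 : 0 < r) (hr1 : r < 1) {x : ℝ} (hx : 0 < x) :
    r ^ (Real.logb (1 / r) x) = x⁻¹ := by
  have hb0 : (0 : ℝ) < 1 / r := by positivity
  have hb1 : 1 < 1 / r := by rw [lt_div_iff₀ hr0]; linarith
  have hrr : r = (1 / r)⁻¹ := by field_simp
  calc r ^ (Real.logb (1 / r) x) = ((1 / r)⁻¹) ^ (Real.logb (1 / r) x) := by rw [← hrr]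
    _ = ((1 / r) ^ (Real.logb (1 / r) x))⁻¹ := Real.inv_rpow hb0.le _
    _ = x⁻¹ := by rw [Real.rpow_logb hb0 (ne_of_gt hb1) hx]

lemma ofReal_tsum_ne_top {f : ℕ → ℝ} (hf : ∀ n, 0 ≤ f n) (hsum : Summable f) :
    (∑' n, ENNReal.ofReal (f n)) ≠ ⊤ := by
  rw [← ENNReal.ofReal_tsum_of_nonneg hf hsum]
  exact ENNReal.ofReal_ne_top

variable [MeasurableSpace Ω] {μ : Measure Ω} [IsProbabilityMeasure μ] {p q : ℝ}

lemma upper_ae (hp0 : 0 < p) (hp1 : p < 1) (hq : q = 1 - p)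
    (hmeas : ∀ i, Measurable (X i)) (hval : ∀ i ω, X i ω ≤ 1)
    (hdist : ∀ i, μ {ω | X i ω = 1} = ENNReal.ofReal p)
    (hindep : iIndepFun X μ) {ε : ℝ} (hε : 0 < ε) :
    ∀ᵐ ω ∂μ, ∀ᶠ N : ℕ in atTop, (longestSwitch X N 1 ω : ℝ)
      ≤ (1 + ε) * Real.logb (1 / Real.sqrt (p * q)) N := by
  set r := Real.sqrt (p * q) with hrdef
  have hr0 : 0 < r := hr_pos hp0 hp1 hq
  have hr1 : r < 1 := hr_lt_one hp0 hp1 hq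
  have hrhalf : r ≤ 1 / 2 := hr_le_half hp0 hp1 hq
  set L : ℕ → ℝ := fun N => Real.logb (1 / r) N with hLdef
  have hb1 : 1 < 1 / r := by rw [lt_div_iff₀ hr0]; linarith
  have hLmono : ∀ {i j : ℕ}, 1 ≤ i → i ≤ j → L i ≤ L j := by
    intro i j hi hij
    exact Real.logb_le_logb_of_le hb1 (by exact_mod_cast hi) (by exact_mod_cast hij)
  have hLnonneg : ∀ {i : ℕ}, 1 ≤ i → 0 ≤ L i := by
    intro i hi
    exact Real.logb_nonneg hb1 (by exact_mod_cast hi)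
  set c : ℕ → ℕ := fun i => ⌈(1 + ε / 2) * L i⌉₊ + 1 with hcdef
  have hcmono : ∀ {i j : ℕ}, 1 ≤ i → i ≤ j → c i ≤ c j := by
    intro i j hi hij
    have : (1 + ε / 2) * L i ≤ (1 + ε / 2) * L j :=
      mul_le_mul_of_nonneg_left (hLmono hi hij) (by linarith)
    simp only [hcdef]
    exact Nat.add_le_add_right (Nat.ceil_le_ceil this) 1
  -- the events
  set D : ℕ → Set Ω := fun i => altSet X (c i) i with hDdef
  -- Borel-Cantelli
  have hBC : ∀ᵐ ω ∂μ, ∀ᶠ i in atTop, ω ∉ D i := by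
    refine MeasureTheory.ae_eventually_notMem (tsum_ne_top_of_eventually_le
      (fun i => prob_le_one) ?_ (ofReal_tsum_ne_top
        (f := fun i => 2 * ((i : ℝ) ^ ((1 : ℝ) + ε / 2))⁻¹) (fun i => by positivity) ?_))
    · rw [eventually_atTop]
      refine ⟨1, fun i hi => ?_⟩
      have h1 : μ (D i) ≤ ENNReal.ofReal (2 * r ^ (c i - 1)) :=
        meas_altSet_le hp0 hp1 hq hmeas hval hdist hindep i (by simp [hcdef])
      refine h1.trans (ENNReal.ofReal_le_ofReal ?_)
      have hci : (c i - 1 : ℕ) = ⌈(1 + ε / 2) * L i⌉₊ := by simp [hcdef]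
      have hipos : (0 : ℝ) < i := by exact_mod_cast hi
      have h2 : r ^ (c i - 1 : ℕ) ≤ ((i : ℝ) ^ ((1 : ℝ) + ε / 2))⁻¹ := by
        rw [← Real.rpow_natCast r (c i - 1), hci]
        calc r ^ ((⌈(1 + ε / 2) * L i⌉₊ : ℝ))
            ≤ r ^ ((1 + ε / 2) * L i) :=
              Real.rpow_le_rpow_of_exponent_ge hr0 hr1.le (Nat.le_ceil _)
          _ = (r ^ (L i)) ^ (1 + ε / 2) := by
              rw [← Real.rpow_mul hr0.le, mul_comm]
          _ = ((i : ℝ)⁻¹) ^ ((1 : ℝ) + ε / 2) := by rw [r_rpow_logb hr0 hr1 hipos]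
          _ = ((i : ℝ) ^ ((1 : ℝ) + ε / 2))⁻¹ := Real.inv_rpow (by positivity) _
      linarith
    · have hs : Summable (fun i : ℕ => 1 / (i : ℝ) ^ ((1 : ℝ) + ε / 2)) :=
        Real.summable_one_div_nat_rpow.mpr (by linarith)
      simpa [one_div] using hs.mul_left 2
  filter_upwards [hBC] with ω hω
  obtain ⟨I₀, hI₀⟩ := eventually_atTop.mp hω
  set I : ℕ := max I₀ 1 with hIdef
  have hI : ∀ i, I ≤ i → ω ∉ D i := fun i hi => hI₀ i (le_trans (le_max_left _ _) hi)
  have hI1 : 1 ≤ I := le_max_right _ _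
  -- deterministic bound
  have hdet : ∀ N : ℕ, longestSwitch X N 1 ω ≤ max (I + c I) (c (N + 1)) := by
    intro N
    refine longestSwitch_le X ω _ (fun n i hn1 hnN hi1 hi2 hsc => ?_)
    have hω' : ω ∈ altSet X n i := (switchCount_eq_iff hval n i ω).mp hsc
    have hiN : i ≤ N + 1 := by omega
    rcases le_or_gt I i with hcase | hcase
    · -- i ≥ I : no run of length c i at i, so n < c i
      have hn_lt : n < c i := by
        by_contra hge
        push_neg at hge
        exact hI i hcase (altSet_mono le_rfl (by omega) hω')
      have : n - 1 ≤ c (N + 1) := by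
        have := hcmono (le_trans hI1 hcase) hiN
        omega
      omega
    · rcases le_or_gt (i + n) (I + c I) with hcase2 | hcase2
      · have : n - 1 ≤ I + c I := by omega
        omega
      · exfalso
        exact hI I le_rfl (altSet_mono hcase.le (by omega) hω')
  -- eventual comparison
  have hLtop : Tendsto (fun N : ℕ => L N) atTop atTop :=
    (Real.tendsto_logb_atTop hb1).comp tendsto_natCast_atTop_atTop
  have hev1 : ∀ᶠ N : ℕ in atTop, (I + c I : ℝ) ≤ (1 + ε) * L N := by
    have h1 : ∀ᶠ N : ℕ in atTop, (I + c I : ℝ) ≤ L N := hLtop.eventually_ge_atTop _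
    filter_upwards [h1, eventually_ge_atTop 1] with N hN h1N
    nlinarith [hLnonneg h1N]
  have hev2 : ∀ᶠ N : ℕ in atTop, (c (N + 1) : ℝ) ≤ (1 + ε) * L N := by
    have h1 : ∀ᶠ N : ℕ in atTop, (3 + ε / 2) + (1 + ε / 2) ≤ (ε / 2) * L N := by
      have := hLtop.eventually_ge_atTop ((3 + ε / 2 + (1 + ε / 2)) / (ε / 2))
      filter_upwards [this] with N hN
      rw [div_le_iff₀ (by linarith)] at hN
      linarith
    filter_upwards [h1, eventually_ge_atTop 2] with N hN hN2
    have hN1 : (1 : ℕ) ≤ N := by omega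
    -- c (N+1) ≤ (1+ε/2) L (N+1) + 2
    have h2 : (c (N + 1) : ℝ) ≤ (1 + ε / 2) * L (N + 1) + 2 := by
      simp only [hcdef]
      push_cast
      have := Nat.ceil_lt_add_one (show 0 ≤ (1 + ε / 2) * L (N + 1) by
        have := hLnonneg (show 1 ≤ N + 1 by omega)
        positivity)
      linarith
    -- L (N+1) ≤ L N + 1
    have h3 : L (N + 1) ≤ L N + 1 := by
      have hN2r : (2 : ℝ) ≤ N := by exact_mod_cast hN2
      have hNpos : (0 : ℝ) < N := by linarith
      have e1 : L (N + 1) ≤ Real.logb (1 / r) (2 * N) := by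
        refine Real.logb_le_logb_of_le hb1 (by positivity) ?_
        push_cast
        linarith [hN2r]
      have e2 : Real.logb (1 / r) (2 * N) = Real.logb (1 / r) 2 + L N := by
        rw [Real.logb_mul (by norm_num) (ne_of_gt hNpos)]
      have e3 : Real.logb (1 / r) 2 ≤ 1 := by
        have h2b : (2 : ℝ) ≤ 1 / r := by
          rw [le_div_iff₀ hr0]; linarith
        calc Real.logb (1 / r) 2 ≤ Real.logb (1 / r) (1 / r) :=
              Real.logb_le_logb_of_le hb1 (by norm_num) h2b
          _ = 1 := Real.logb_self_eq_one hb1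
      linarith
    have h4 := hLnonneg hN1
    nlinarith
  filter_upwards [hev1, hev2] with N h1 h2
  calc (longestSwitch X N 1 ω : ℝ) ≤ ((max (I + c I) (c (N + 1)) : ℕ) : ℝ) := by
        exact_mod_cast hdet N
    _ ≤ max ((I + c I : ℕ) : ℝ) ((c (N + 1) : ℕ) : ℝ) := by
        rw [Nat.cast_max]
    _ ≤ (1 + ε) * L N := max_le (by exact_mod_cast h1) h2

set_option maxHeartbeats 1000000 in
lemma lower_ae (hp0 : 0 < p) (hp1 : p < 1) (hq : q = 1 - p)
    (hmeas : ∀ i, Measurable (X i)) (hval : ∀ i ω, X i ω ≤ 1)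
    (hdist : ∀ i, μ {ω | X i ω = 1} = ENNReal.ofReal p)
    (hindep : iIndepFun X μ) {ε : ℝ} (hε : 0 < ε) (hε1 : ε < 1) :
    ∀ᵐ ω ∂μ, ∀ᶠ N : ℕ in atTop,
      (1 - ε) * Real.logb (1 / Real.sqrt (p * q)) N ≤ (longestSwitch X N 1 ω : ℝ) := by
  set r := Real.sqrt (p * q) with hrdef
  have hr0 : 0 < r := hr_pos hp0 hp1 hq
  have hr1 : r < 1 := hr_lt_one hp0 hp1 hq
  set L : ℕ → ℝ := fun N => Real.logb (1 / r) N with hLdef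
  have hb1 : 1 < 1 / r := by rw [lt_div_iff₀ hr0]; linarith
  have hLnonneg : ∀ {i : ℕ}, 1 ≤ i → 0 ≤ L i := by
    intro i hi
    exact Real.logb_nonneg hb1 (by exact_mod_cast hi)
  set l : ℕ → ℕ := fun N => ⌈(1 - ε) * L N⌉₊ + 1 with hldef
  have hl1 : ∀ N, 1 ≤ l N := fun N => by simp [hldef]
  set K : ℕ → ℕ := fun N => N / l N with hKdef
  set Bad : ℕ → Set Ω := fun N =>
    ⋂ j ∈ Finset.range (K N), (blockSet X 0 (j * l N + 1) (l N))ᶜ with hBaddef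
  have hbad : ∀ N, μ (Bad N) ≤ ENNReal.ofReal (Real.exp (-(K N * r ^ (l N + 1)))) :=
    fun N => meas_bad_le hp0 hp1 hq hmeas hval hdist hindep (hl1 N) (K N)
  -- eventual side conditions
  have hrpow_tendsto : ∀ {δ : ℝ}, 0 < δ →
      Tendsto (fun N : ℕ => (N : ℝ) ^ (δ : ℝ)) atTop atTop := by
    intro δ hδ
    exact (tendsto_rpow_atTop hδ).comp tendsto_natCast_atTop_atTop
  have hlog_ev : ∀ (c : ℝ), 0 < c → ∀ᶠ N : ℕ in atTop, Real.log N ≤ c * (N : ℝ) ^ (ε / 2 : ℝ) := by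
    intro c hc
    have h := (isLittleO_log_rpow_atTop (show 0 < ε / 2 by linarith)).bound hc
    have h2 := (tendsto_natCast_atTop_atTop (R := ℝ)).eventually h
    filter_upwards [h2, eventually_ge_atTop 1] with N hN hN1
    have hN1r : (1 : ℝ) ≤ N := by exact_mod_cast hN1
    have : |Real.log N| ≤ c * |(N : ℝ) ^ (ε / 2 : ℝ)| := by
      simpa [Real.norm_eq_abs] using hN
    have habs1 : |Real.log N| = Real.log N := abs_of_nonneg (Real.log_nonneg hN1r)
    have habs2 : |(N : ℝ) ^ (ε / 2 : ℝ)| = (N : ℝ) ^ (ε / 2 : ℝ) :=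
      abs_of_nonneg (Real.rpow_nonneg (by positivity) _)
    rw [habs1, habs2] at this
    exact this
  have hA_ev : ∀ᶠ N : ℕ in atTop, (l N : ℝ) ≤ (N : ℝ) ^ (ε / 2 : ℝ) := by
    have hlogb_pos : 0 < Real.log (1 / r) := Real.log_pos hb1
    filter_upwards [hlog_ev (Real.log (1 / r) / 2) (by positivity),
      (hrpow_tendsto (show 0 < ε / 2 by linarith)).eventually_ge_atTop 4,
      eventually_ge_atTop 1] with N h1 h2 hN1
    have hN1r : (1 : ℝ) ≤ N := by exact_mod_cast hN1
    have hLN : L N ≤ (N : ℝ) ^ (ε / 2 : ℝ) / 2 := by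
      have : L N = Real.log N / Real.log (1 / r) := by
        simp [hLdef, Real.logb]
      rw [this, div_le_div_iff₀ hlogb_pos (by norm_num)]
      nlinarith
    have hceil : (l N : ℝ) ≤ (1 - ε) * L N + 2 := by
      simp only [hldef]
      push_cast
      have := Nat.ceil_lt_add_one (show 0 ≤ (1 - ε) * L N by
        have := hLnonneg hN1
        nlinarith)
      linarith
    have hLN0 := hLnonneg hN1
    nlinarith
  have hA2_ev : ∀ᶠ N : ℕ in atTop, (N : ℝ) ^ (ε / 2 : ℝ) ≤ (N : ℝ) / 2 := by
    filter_upwards [(hrpow_tendsto (show 0 < 1 - ε / 2 by linarith)).eventually_ge_atTop 2,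
      eventually_ge_atTop 1] with N h2 hN1
    have hNpos : (0 : ℝ) < N := by exact_mod_cast hN1
    have hsplit : (N : ℝ) = (N : ℝ) ^ (ε / 2 : ℝ) * (N : ℝ) ^ (1 - ε / 2 : ℝ) := by
      rw [← Real.rpow_add hNpos]
      norm_num
    have hApos : (0 : ℝ) < (N : ℝ) ^ (ε / 2 : ℝ) := Real.rpow_pos_of_pos hNpos _
    nlinarith
  -- the key exponential bound
  have hkey : ∀ᶠ N : ℕ in atTop, 2 * Real.log N ≤ (K N : ℝ) * r ^ (l N + 1) := by
    filter_upwards [hA_ev, hA2_ev, hlog_ev (r ^ 3 / 8) (by positivity),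
      eventually_ge_atTop 1] with N hA hA2 hlog hN1
    have hN1r : (1 : ℝ) ≤ N := by exact_mod_cast hN1
    have hNpos : (0 : ℝ) < N := by linarith
    set A := (N : ℝ) ^ (ε / 2 : ℝ) with hAdef
    set B := (N : ℝ) ^ (1 - ε : ℝ) with hBdef
    have hApos : 0 < A := Real.rpow_pos_of_pos hNpos _
    have hBpos : 0 < B := Real.rpow_pos_of_pos hNpos _
    have hNeq : (N : ℝ) = A * A * B := by
      rw [hAdef, hBdef, ← Real.rpow_add hNpos, ← Real.rpow_add hNpos]
      norm_num
    have hlpos : (0 : ℝ) < l N := by exact_mod_cast hl1 N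
    -- r ^ (l N + 1) ≥ r ^ 3 * B⁻¹
    have h2 : r ^ 3 * B⁻¹ ≤ r ^ (l N + 1) := by
      have hle : ((l N + 1 : ℕ) : ℝ) ≤ (1 - ε) * L N + 3 := by
        simp only [hldef]
        push_cast
        have := Nat.ceil_lt_add_one (show 0 ≤ (1 - ε) * L N by
          have := hLnonneg hN1
          nlinarith)
        linarith
      calc r ^ 3 * B⁻¹ = r ^ ((1 - ε) * L N + 3) := by
            rw [show ((1 - ε) * L N + 3) = L N * (1 - ε) + 3 by ring, Real.rpow_add hr0,
              Real.rpow_mul hr0.le, r_rpow_logb hr0 hr1 hNpos, Real.inv_rpow (by positivity),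
              show (3 : ℝ) = ((3 : ℕ) : ℝ) by norm_num, Real.rpow_natCast, hBdef, mul_comm]
        _ ≤ r ^ ((l N + 1 : ℕ) : ℝ) :=
            Real.rpow_le_rpow_of_exponent_ge hr0 hr1.le hle
        _ = r ^ (l N + 1) := Real.rpow_natCast r _
    -- K * l ≥ N / 2
    have h1 : (N : ℝ) / 2 ≤ (K N : ℝ) * l N := by
      have hdiv : N < K N * l N + l N := by
        simpa [hKdef] using Nat.lt_div_mul_add (hl1 N)
      have hdivr : (N : ℝ) < (K N : ℝ) * l N + l N := by exact_mod_cast hdiv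
      have hlA : (l N : ℝ) ≤ A := hA
      nlinarith
    have hKpos : (0 : ℝ) ≤ K N := Nat.cast_nonneg _
    have s2 : (N : ℝ) / (2 * A) ≤ K N := by
      rw [div_le_iff₀ (by positivity)]
      have : (K N : ℝ) * l N ≤ K N * A := by nlinarith
      nlinarith
    have s1 : (N : ℝ) / (2 * A) * (r ^ 3 * B⁻¹) = r ^ 3 / 2 * A := by
      rw [hNeq]
      field_simp
    calc 2 * Real.log N ≤ 2 * (r ^ 3 / 8 * A) := by linarith
      _ ≤ r ^ 3 / 2 * A := by nlinarith [mul_pos (pow_pos hr0 3) hApos]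
      _ = (N : ℝ) / (2 * A) * (r ^ 3 * B⁻¹) := s1.symm
      _ ≤ (K N : ℝ) * r ^ (l N + 1) := by
          refine mul_le_mul s2 h2 (by positivity) hKpos
  -- Borel-Cantelli
  have hBC : ∀ᵐ ω ∂μ, ∀ᶠ N in atTop, ω ∉ Bad N := by
    refine MeasureTheory.ae_eventually_notMem (tsum_ne_top_of_eventually_le
      (fun N => prob_le_one) ?_ (ofReal_tsum_ne_top
        (f := fun N => ((N : ℝ) ^ (2 : ℝ))⁻¹) (fun N => by positivity) ?_))
    · filter_upwards [hkey, eventually_ge_atTop 1] with N hk hN1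
      have hN1r : (1 : ℝ) ≤ N := by exact_mod_cast hN1
      have hNpos : (0 : ℝ) < N := by linarith
      refine (hbad N).trans (ENNReal.ofReal_le_ofReal ?_)
      calc Real.exp (-(K N * r ^ (l N + 1))) ≤ Real.exp (-(2 * Real.log N)) := by
            exact Real.exp_le_exp.mpr (by linarith)
        _ = ((N : ℝ) ^ (2 : ℝ))⁻¹ := by
            rw [Real.rpow_def_of_pos hNpos, ← Real.exp_neg]
            ring_nf
    · have hs : Summable (fun N : ℕ => 1 / (N : ℝ) ^ (2 : ℝ)) :=
        Real.summable_one_div_nat_rpow.mpr (by norm_num)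
      simpa [one_div] using hs
  filter_upwards [hBC] with ω hω
  filter_upwards [hω, hA_ev, hA2_ev, eventually_ge_atTop 1] with N hnot hA hA2 hN1
  have hN1r : (1 : ℝ) ≤ N := by exact_mod_cast hN1
  have hlN : l N ≤ N := by
    have : (l N : ℝ) ≤ (N : ℝ) := by
      calc (l N : ℝ) ≤ (N : ℝ) ^ (ε / 2 : ℝ) := hA
        _ ≤ (N : ℝ) / 2 := hA2
        _ ≤ N := by linarith
    exact_mod_cast this
  -- some block alternates
  obtain ⟨j, hjK, hmem⟩ : ∃ j, j ∈ Finset.range (K N) ∧ ω ∈ blockSet X 0 (j * l N + 1) (l N) := by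
    by_contra hcon
    push_neg at hcon
    refine hnot ?_
    simp only [hBaddef, Set.mem_iInter, Set.mem_compl_iff]
    exact fun j hj => hcon j hj
  rw [Finset.mem_range] at hjK
  have halt : ω ∈ altSet X (l N) (j * l N + 1) := blockSet_subset_altSet _ _ _ hmem
  have hsc : switchCount X (l N) (j * l N + 1) ω = l N - 1 :=
    (switchCount_eq_iff hval _ _ ω).mpr halt
  have hKl : K N * l N ≤ N := Nat.div_mul_le_self N (l N)
  have hjl : (j + 1) * l N ≤ K N * l N := Nat.mul_le_mul_right _ (by omega)
  rw [add_mul, one_mul] at hjl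
  have hM : l N - 1 ≤ longestSwitch X N 1 ω :=
    le_longestSwitch X ω (hl1 N) hlN (by omega) (by omega) hsc
  have hMr : ((l N - 1 : ℕ) : ℝ) ≤ (longestSwitch X N 1 ω : ℝ) := by exact_mod_cast hM
  have hceil : ((l N - 1 : ℕ) : ℝ) = (⌈(1 - ε) * L N⌉₊ : ℝ) := by
    simp [hldef]
  have hge : (1 - ε) * L N ≤ (⌈(1 - ε) * L N⌉₊ : ℝ) := Nat.le_ceil _
  rw [hceil] at hMr
  linarith

end Asymptotics

end AltAux

theorem longestSwitch_div_logb_tendsto_one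
    {Ω : Type*} [MeasurableSpace Ω] (μ : Measure Ω) [IsProbabilityMeasure μ]
    (p q : ℝ) (hp0 : 0 < p) (hp1 : p < 1) (hq : q = 1 - p)
    (X : ℕ → Ω → ℕ)
    (hmeas : ∀ i, Measurable (X i))
    (hval : ∀ i ω, X i ω ≤ 1)
    (hdist : ∀ i, μ {ω | X i ω = 1} = ENNReal.ofReal p)
    (hindep : iIndepFun X μ) :
    ∀ᵐ ω ∂μ, Tendsto
      (fun N : ℕ => (longestSwitch X N 1 ω : ℝ) / Real.logb (1 / Real.sqrt (p * q)) (N : ℝ))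
      atTop (nhds 1) := by
  set r := Real.sqrt (p * q) with hrdef
  have hr0 : 0 < r := AltAux.hr_pos hp0 hp1 hq
  have hr1 : r < 1 := AltAux.hr_lt_one hp0 hp1 hq
  have hb1 : 1 < 1 / r := by rw [lt_div_iff₀ hr0]; linarith
  set L : ℕ → ℝ := fun N => Real.logb (1 / r) N with hLdef
  have key : ∀ k : ℕ, ∀ᵐ ω ∂μ, ∀ᶠ N : ℕ in atTop,
      (1 - 1 / (k + 2 : ℝ)) * L N ≤ (longestSwitch X N 1 ω : ℝ) ∧
      (longestSwitch X N 1 ω : ℝ) ≤ (1 + 1 / (k + 2 : ℝ)) * L N := by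
    intro k
    have hεpos : (0 : ℝ) < 1 / (k + 2 : ℝ) := by positivity
    have hε1 : (1 : ℝ) / (k + 2 : ℝ) < 1 := by
      rw [div_lt_one (by positivity)]
      have : (0 : ℝ) ≤ (k : ℝ) := Nat.cast_nonneg k
      linarith
    have h1 := AltAux.upper_ae hp0 hp1 hq hmeas hval hdist hindep hεpos
    have h2 := AltAux.lower_ae hp0 hp1 hq hmeas hval hdist hindep hεpos hε1
    filter_upwards [h1, h2] with ω hu hl
    filter_upwards [hu, hl] with N hN1 hN2
    exact ⟨hN2, hN1⟩
  have hLtop : Tendsto L atTop atTop :=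
    (Real.tendsto_logb_atTop hb1).comp tendsto_natCast_atTop_atTop
  filter_upwards [MeasureTheory.ae_all_iff.mpr key] with ω hω
  rw [Metric.tendsto_atTop]
  intro δ hδ
  obtain ⟨k, hk⟩ := exists_nat_one_div_lt hδ
  have hcomb := (hω k).and (hLtop.eventually_ge_atTop 1)
  obtain ⟨N₀, hN₀⟩ := eventually_atTop.mp hcomb
  refine ⟨N₀, fun N hN => ?_⟩
  obtain ⟨⟨hlow, hup⟩, hL1⟩ := hN₀ N hN
  have hLpos : (0 : ℝ) < L N := by linarith
  set M := (longestSwitch X N 1 ω : ℝ) with hMdef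
  have hd1 : M / L N - 1 ≤ 1 / (k + 2 : ℝ) := by
    rw [sub_le_iff_le_add, div_le_iff₀ hLpos]
    nlinarith
  have hd2 : -(1 / (k + 2 : ℝ)) ≤ M / L N - 1 := by
    rw [le_sub_iff_add_le, le_div_iff₀ hLpos]
    nlinarith
  have habs : |M / L N - 1| ≤ 1 / (k + 2 : ℝ) := abs_le.mpr ⟨hd2, hd1⟩
  have hlt : (1 : ℝ) / (k + 2 : ℝ) < δ := by
    refine lt_of_le_of_lt ?_ hk
    refine one_div_le_one_div_of_le (by positivity) ?_
    push_cast
    linarith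
  rw [Real.dist_eq]
  calc |M / L N - 1| ≤ 1 / (k + 2 : ℝ) := habs
    _ < δ := hlt
end

section
/- With probability one, liminf_{N→∞} M_N / log_{1/√(pq)} N ≥ 1. -/
open MeasureTheory ProbabilityTheory Filter
open scoped Classical

noncomputable section ERAux

/-- the alternating pattern, starting with the more likely digit. -/
def pat (p q : ℝ) (t : ℕ) : ℕ := if q ≤ p then (t + 1) % 2 else t % 2

/-- probability of digit `pat p q t`. -/
def pr (p q : ℝ) (t : ℕ) : ℝ := if pat p q t = 1 then p else q

variable {p q : ℝ}

lemma pat_le_one (t : ℕ) : pat p q t ≤ 1 := by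
  unfold pat; split <;> omega

lemma pat_succ (t : ℕ) : pat p q (t + 1) = 1 - pat p q t := by
  unfold pat; split <;> omega

lemma pr_mul_succ (t : ℕ) : pr p q t * pr p q (t + 1) = p * q := by
  have h1 := pat_le_one (p := p) (q := q) t
  have h2 := pat_succ (p := p) (q := q) t
  unfold pr
  interval_cases h : pat p q t <;> simp [h2, h] <;> ring

lemma pr_zero_eq_max : pr p q 0 = max p q := by
  unfold pr pat
  rcases le_total q p with h | h
  · simp [h, max_eq_left h]
  · rcases eq_or_lt_of_le h with rfl | h'
    · simp
    · simp [not_le.2 h', max_eq_right h]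

section pq
variable (hp0 : 0 < p) (hp1 : p < 1) (hq : q = 1 - p)

include hp0 hp1 hq

lemma hq0 : 0 < q := by rw [hq]; linarith
lemma hq1 : q < 1 := by rw [hq]; linarith

lemma pr_nonneg (t : ℕ) : 0 ≤ pr p q t := by
  unfold pr; split
  · exact hp0.le
  · exact (hq0 hp0 hp1 hq).le

lemma pr_le_one (t : ℕ) : pr p q t ≤ 1 := by
  unfold pr; split
  · exact hp1.le
  · exact (hq1 hp0 hp1 hq).le

lemma sqrtpq_pos : 0 < Real.sqrt (p * q) :=
  Real.sqrt_pos.2 (mul_pos hp0 (hq0 hp0 hp1 hq))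

lemma sqrtpq_lt_one : Real.sqrt (p * q) < 1 := by
  have hq' := hq0 hp0 hp1 hq
  have : p * q < 1 := by nlinarith
  calc Real.sqrt (p * q) < Real.sqrt 1 := by
        exact Real.sqrt_lt_sqrt (by positivity) this
  _ = 1 := Real.sqrt_one

lemma sq_sqrtpq : Real.sqrt (p * q) ^ 2 = p * q := by
  have hq' := hq0 hp0 hp1 hq
  rw [Real.sq_sqrt]; positivity

/-- lower bound for the probability of the alternating pattern. -/
lemma prod_pr_ge (k : ℕ) :
    Real.sqrt (p * q) ^ k ≤ ∏ t ∈ Finset.range k, pr p q t := by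
  induction k using Nat.strong_induction_on with
  | _ k ih =>
    match k with
    | 0 => simp
    | 1 =>
      simp only [Finset.prod_range_one, pow_one, pr_zero_eq_max]
      have hq' := hq0 hp0 hp1 hq
      have h1 : Real.sqrt (p * q) ≤ Real.sqrt (max p q * max p q) := by
        apply Real.sqrt_le_sqrt
        rcases le_total q p with h | h
        · rw [max_eq_left h]; nlinarith
        · rw [max_eq_right h]; nlinarith
      calc Real.sqrt (p*q) ≤ Real.sqrt (max p q * max p q) := h1
        _ = max p q := by
            rw [Real.sqrt_mul_self]
            rcases le_total q p with h | h
            · rw [max_eq_left h]; exact hp0.le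
            · rw [max_eq_right h]; exact hq'.le
    | (k + 2) =>
      have hk := ih k (by omega)
      have : ∏ t ∈ Finset.range (k + 2), pr p q t
          = (∏ t ∈ Finset.range k, pr p q t) * (pr p q k * pr p q (k+1)) := by
        rw [Finset.prod_range_succ, Finset.prod_range_succ]; ring
      have hr0 := (sqrtpq_pos hp0 hp1 hq).le
      have hsq := sq_sqrtpq hp0 hp1 hq
      rw [this, pr_mul_succ]
      calc Real.sqrt (p*q) ^ (k+2) = Real.sqrt (p*q) ^ k * Real.sqrt (p*q) ^ 2 := by ring
        _ ≤ (∏ t ∈ Finset.range k, pr p q t) * Real.sqrt (p*q) ^ 2 := by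
            apply mul_le_mul_of_nonneg_right hk (by positivity)
        _ = (∏ t ∈ Finset.range k, pr p q t) * (p * q) := by rw [hsq]

/-- generic upper bound: any alternating-probability sequence has small products. -/
lemma prod_alt_le (c : ℕ → ℝ) (h0 : ∀ t, 0 ≤ c t) (h1 : ∀ t, c t ≤ 1)
    (hpair : ∀ t, c t * c (t + 1) = p * q) (k : ℕ) :
    ∏ t ∈ Finset.range (k + 1), c t ≤ Real.sqrt (p * q) ^ k := by
  induction k using Nat.strong_induction_on with
  | _ k ih =>
    match k with
    | 0 => simpa using h1 0
    | 1 =>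
      simp only [pow_one]
      have : ∏ t ∈ Finset.range 2, c t = c 0 * c 1 := by
        rw [Finset.prod_range_succ, Finset.prod_range_one]
      rw [this, hpair 0]
      have hr1 := sqrtpq_lt_one hp0 hp1 hq
      have hr0 := sqrtpq_pos hp0 hp1 hq
      have hsq := sq_sqrtpq hp0 hp1 hq
      nlinarith
    | (k + 2) =>
      have hk := ih k (by omega)
      have he : ∏ t ∈ Finset.range (k + 3), c t
          = (∏ t ∈ Finset.range (k+1), c t) * (c (k+1) * c (k+2)) := by
        rw [Finset.prod_range_succ, Finset.prod_range_succ]; ring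
      rw [he, hpair (k+1)]
      have hr0 := (sqrtpq_pos hp0 hp1 hq).le
      have hsq := sq_sqrtpq hp0 hp1 hq
      calc (∏ t ∈ Finset.range (k+1), c t) * (p * q)
          = (∏ t ∈ Finset.range (k+1), c t) * Real.sqrt (p*q)^2 := by rw [hsq]
        _ ≤ Real.sqrt (p*q) ^ k * Real.sqrt (p*q) ^ 2 := by
            apply mul_le_mul_of_nonneg_right hk (by positivity)
        _ = Real.sqrt (p*q) ^ (k + 2) := by ring

end pq
end ERAux

noncomputable section ERAux2


variable {Ω : Type*} [MeasurableSpace Ω] {μ : Measure Ω} [IsProbabilityMeasure μ]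
  {p q : ℝ} {X : ℕ → Ω → ℕ}

section meas
variable (hp0 : 0 < p) (hp1 : p < 1) (hq : q = 1 - p)
  (hmeas : ∀ i, Measurable (X i)) (hval : ∀ i ω, X i ω ≤ 1)
  (hdist : ∀ i, μ {ω | X i ω = 1} = ENNReal.ofReal p)
  (hindep : iIndepFun X μ)

set_option linter.unusedSectionVars false
include hp0 hp1 hq hmeas hval hdist hindep

lemma cyl (s : Finset ℕ) (b : ℕ → ℕ) :
    μ (⋂ i ∈ s, {ω | X i ω = b i}) = ∏ i ∈ s, μ {ω | X i ω = b i} := by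
  have h := hindep.measure_inter_preimage_eq_mul s
    (sets := fun i => ({b i} : Set ℕ)) (fun i _ => measurableSet_singleton _)
  simpa [Set.preimage, Set.mem_singleton_iff] using h

lemma marg0 (i : ℕ) : μ {ω | X i ω = 0} = ENNReal.ofReal q := by
  have hset : {ω | X i ω = 0} = {ω | X i ω = 1}ᶜ := by
    ext ω; have := hval i ω; simp only [Set.mem_setOf_eq, Set.mem_compl_iff]; omega
  have hm : MeasurableSet {ω | X i ω = 1} := (hmeas i) (measurableSet_singleton 1)
  rw [hset, prob_compl_eq_one_sub hm, hdist i, hq]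
  rw [← ENNReal.ofReal_one, ← ENNReal.ofReal_sub _ hp0.le]

lemma marg_pat (i t : ℕ) : μ {ω | X i ω = pat p q t} = ENNReal.ofReal (pr p q t) := by
  have : pat p q t ≤ 1 := by unfold pat; split <;> omega
  unfold pr
  interval_cases h : pat p q t
  · simp only [if_neg (by omega : ¬(0 = 1))]
    exact marg0 hp0 hp1 hq hmeas hval hdist hindep i
  · simp only [if_pos rfl]; exact hdist i

/-- probability of a window `[a, a+k)` showing pattern `g`. -/
lemma window_meas (a k : ℕ) (g : ℕ → ℕ) :
    μ (⋂ i ∈ Finset.Ico a (a + k), {ω | X i ω = g i})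
      = ∏ t ∈ Finset.range k, μ {ω | X (a + t) ω = g (a + t)} := by
  rw [cyl hp0 hp1 hq hmeas hval hdist hindep, Finset.prod_Ico_eq_prod_range]
  simp

end meas
end ERAux2

noncomputable section ERAux3

variable {Ω : Type*} [MeasurableSpace Ω] {μ : Measure Ω} [IsProbabilityMeasure μ]
  {p q : ℝ} {X : ℕ → Ω → ℕ}

/-- the event that block `j` (of length `k`, starting at `1 + j*k`) shows the
alternating pattern. -/
def blockEvt (X : ℕ → Ω → ℕ) (p q : ℝ) (k j : ℕ) : Set Ω :=
  ⋂ i ∈ Finset.Ico (1 + j * k) (1 + j * k + k), {ω | X i ω = pat p q ((i - 1) % k)}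

section meas2
variable (hp0 : 0 < p) (hp1 : p < 1) (hq : q = 1 - p)
  (hmeas : ∀ i, Measurable (X i)) (hval : ∀ i ω, X i ω ≤ 1)
  (hdist : ∀ i, μ {ω | X i ω = 1} = ENNReal.ofReal p)
  (hindep : iIndepFun X μ)

set_option linter.unusedSectionVars false
include hp0 hp1 hq hmeas hval hdist hindep

lemma blockEvt_measurable (k j : ℕ) : MeasurableSet (blockEvt X p q k j) :=
  Finset.measurableSet_biInter _ fun i _ => (hmeas i) (measurableSet_singleton _)

lemma blockEvt_meas (k j : ℕ) :
    μ (blockEvt X p q k j) = ENNReal.ofReal (∏ t ∈ Finset.range k, pr p q t) := by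
  unfold blockEvt
  rw [window_meas hp0 hp1 hq hmeas hval hdist hindep]
  rw [ENNReal.ofReal_prod_of_nonneg (fun t _ => pr_nonneg hp0 hp1 hq t)]
  apply Finset.prod_congr rfl
  intro t ht
  have htk : t < k := Finset.mem_range.1 ht
  have h1 : 1 + j * k + t - 1 = t + j * k := by omega
  have h2 : (t + j * k) % k = t := by
    rw [Nat.add_mul_mod_self_right, Nat.mod_eq_of_lt htk]
  rw [h1, h2, marg_pat hp0 hp1 hq hmeas hval hdist hindep]

lemma block_disjoint {k : ℕ} (hk : 1 ≤ k) {j j' : ℕ} (hjj : j ≠ j') :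
    Disjoint (Finset.Ico (1 + j * k) (1 + j * k + k))
      (Finset.Ico (1 + j' * k) (1 + j' * k + k)) := by
  rw [Finset.disjoint_left]
  intro i hi hi'
  rw [Finset.mem_Ico] at hi hi'
  rcases Nat.lt_or_ge j j' with h | h
  · have h2 : (j + 1) * k ≤ j' * k := Nat.mul_le_mul_right k h
    rw [Nat.succ_mul] at h2
    omega
  · have hlt : j' < j := by omega
    have h2 : (j' + 1) * k ≤ j * k := Nat.mul_le_mul_right k hlt
    rw [Nat.succ_mul] at h2
    omega

lemma blockEvt_iIndepSet {k : ℕ} (hk : 1 ≤ k) :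
    iIndepSet (fun j => blockEvt X p q k j) μ := by
  rw [iIndepSet_iff_meas_biInter
    (fun j => blockEvt_measurable hp0 hp1 hq hmeas hval hdist hindep k j)]
  intro S
  unfold blockEvt
  rw [← Finset.set_biInter_biUnion S (fun j => Finset.Ico (1 + j * k) (1 + j * k + k))]
  rw [cyl hp0 hp1 hq hmeas hval hdist hindep]
  rw [Finset.prod_biUnion (fun j _ j' _ hjj => block_disjoint hp0 hp1 hq hmeas hval hdist
    hindep hk hjj)]
  apply Finset.prod_congr rfl
  intro j _
  rw [cyl hp0 hp1 hq hmeas hval hdist hindep]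

lemma blockEvt_compl_meas {k : ℕ} (hk : 1 ≤ k) (M : ℕ) :
    μ (⋂ j ∈ Finset.range M, (blockEvt X p q k j)ᶜ)
      = ENNReal.ofReal (1 - ∏ t ∈ Finset.range k, pr p q t) ^ M := by
  have hI := (iIndepSet_iff_iIndep _ _).1
    (blockEvt_iIndepSet hp0 hp1 hq hmeas hval hdist hindep hk)
  have hmb : ∀ j ∈ Finset.range M,
      MeasurableSet[MeasurableSpace.generateFrom {blockEvt X p q k j}]
        (blockEvt X p q k j)ᶜ := fun j _ =>
    (MeasurableSpace.measurableSet_generateFrom (Set.mem_singleton _)).compl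
  rw [hI.meas_biInter hmb]
  have hc : ∀ j : ℕ, μ (blockEvt X p q k j)ᶜ
      = ENNReal.ofReal (1 - ∏ t ∈ Finset.range k, pr p q t) := by
    intro j
    rw [prob_compl_eq_one_sub (blockEvt_measurable hp0 hp1 hq hmeas hval hdist hindep k j),
      blockEvt_meas hp0 hp1 hq hmeas hval hdist hindep k j,
      ← ENNReal.ofReal_one, ← ENNReal.ofReal_sub]
    exact Finset.prod_nonneg fun t _ => pr_nonneg hp0 hp1 hq t
  calc ∏ j ∈ Finset.range M, μ (blockEvt X p q k j)ᶜ
      = ∏ _j ∈ Finset.range M, ENNReal.ofReal (1 - ∏ t ∈ Finset.range k, pr p q t) :=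
        Finset.prod_congr rfl fun j _ => hc j
    _ = _ := by rw [Finset.prod_const, Finset.card_range]

end meas2
end ERAux3

noncomputable section ERDet

variable {Ω : Type*} {p q : ℝ} {X : ℕ → Ω → ℕ}

lemma term_eq_one {u v : ℕ} (hu : u ≤ 1) (hv : v ≤ 1) (huv : u ≠ v) :
    (1 - u) * v + u * (1 - v) = 1 := by
  interval_cases u <;> interval_cases v <;> simp_all

lemma term_le_one {u v : ℕ} (hu : u ≤ 1) (hv : v ≤ 1) :
    (1 - u) * v + u * (1 - v) ≤ 1 := by
  interval_cases u <;> interval_cases v <;> simp_all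

lemma term_ne {u v : ℕ} (hu : u ≤ 1) (hv : v ≤ 1)
    (h : (1 - u) * v + u * (1 - v) = 1) : u ≠ v := by
  interval_cases u <;> interval_cases v <;> simp_all

/-- if `ω` lies in the block event then the longest switch run is long. -/
lemma blockEvt_longestSwitch (hval : ∀ i ω, X i ω ≤ 1) {k j N : ℕ} (hk : 1 ≤ k)
    (hkN : (j + 1) * k ≤ N) {ω : Ω} (hω : ω ∈ blockEvt X p q k j) :
    k - 1 ≤ longestSwitch X N 1 ω := by
  set i := 1 + j * k with hi
  have hjk : j * k + k ≤ N := by have := hkN; rw [Nat.succ_mul] at this; omega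
  have hω' : ∀ t < k, X (i + t) ω = pat p q t := by
    intro t ht
    have hmem : i + t ∈ Finset.Ico (1 + j * k) (1 + j * k + k) := by
      rw [Finset.mem_Ico]; omega
    have := Set.mem_iInter₂.1 hω (i + t) hmem
    simp only [Set.mem_setOf_eq] at this
    rw [this]
    congr 1
    have h1 : i + t - 1 = t + j * k := by omega
    rw [h1, Nat.add_mul_mod_self_right, Nat.mod_eq_of_lt ht]
  -- switch count over the block is k - 1
  have hsc : switchCount X k i ω = k - 1 := by
    unfold switchCount
    have hcongr : ∀ x ∈ Finset.Icc (i + 1) (k + i - 1),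
        (1 - X (x - 1) ω) * X x ω + X (x - 1) ω * (1 - X x ω) = 1 := by
      intro x hx
      rw [Finset.mem_Icc] at hx
      set t := x - i with htdef
      have ht1 : 1 ≤ t := by omega
      have htk : t < k := by omega
      have hx1 : x - 1 = i + (t - 1) := by omega
      have hx2 : x = i + t := by omega
      have e1 : X (x - 1) ω = pat p q (t - 1) := by rw [hx1]; exact hω' (t-1) (by omega)
      have e2 : X x ω = pat p q t := by rw [hx2]; exact hω' t htk
      have hne : pat p q (t - 1) ≠ pat p q t := by
        have := pat_succ (p := p) (q := q) (t - 1)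
        have ht : t - 1 + 1 = t := by omega
        rw [ht] at this
        have := pat_le_one (p := p) (q := q) (t - 1)
        omega
      rw [e1, e2]
      exact term_eq_one (pat_le_one _) (pat_le_one _) hne
    rw [Finset.sum_congr rfl hcongr, Finset.sum_const, smul_eq_mul, mul_one,
      Nat.card_Icc]
    omega
  -- conclude
  unfold longestSwitch
  apply Finset.le_sup (f := fun n => n - 1) (b := k)
  simp only [Finset.mem_filter, Finset.mem_Icc]
  exact ⟨⟨hk, by omega⟩, i, ⟨by omega, by omega⟩, hsc⟩

/-- if the longest switch run is at least `m + 1` then some window of length `m + 1`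
alternates. -/
lemma longestSwitch_window (hval : ∀ i ω, X i ω ≤ 1) {m N : ℕ} {ω : Ω}
    (h : m + 1 ≤ longestSwitch X N 1 ω) :
    ∃ i, 1 ≤ i ∧ i ≤ N + 1 ∧ X i ω ≤ 1 ∧ ∀ t ≤ m, X (i + t) ω = (X i ω + t) % 2 := by
  unfold longestSwitch at h
  obtain ⟨n, hn, hmn⟩ := (Finset.le_sup_iff (by simp : (⊥ : ℕ) < m + 1)).1 h
  simp only [Finset.mem_filter, Finset.mem_Icc] at hn
  obtain ⟨⟨hn1, hnN⟩, i, ⟨hi1, hi2⟩, hsc⟩ := hn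
  have hnm : m + 2 ≤ n := by omega
  -- every term in the switch count equals 1
  have hterm : ∀ x ∈ Finset.Icc (i + 1) (n + i - 1),
      (1 - X (x - 1) ω) * X x ω + X (x - 1) ω * (1 - X x ω) = 1 := by
    by_contra hc
    push_neg at hc
    obtain ⟨x₀, hx₀, hne⟩ := hc
    have hlt : ∑ x ∈ Finset.Icc (i + 1) (n + i - 1),
        ((1 - X (x - 1) ω) * X x ω + X (x - 1) ω * (1 - X x ω))
        < ∑ _x ∈ Finset.Icc (i + 1) (n + i - 1), 1 := by
      apply Finset.sum_lt_sum
      · intro x _; exact term_le_one (hval _ _) (hval _ _)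
      · exact ⟨x₀, hx₀, lt_of_le_of_ne (term_le_one (hval _ _) (hval _ _)) hne⟩
    rw [Finset.sum_const, smul_eq_mul, mul_one, Nat.card_Icc] at hlt
    unfold switchCount at hsc
    omega
  -- alternation
  have halt : ∀ t ≤ m, X (i + t) ω = (X i ω + t) % 2 := by
    intro t ht
    induction t with
    | zero => have := hval i ω; simp only [Nat.add_zero]; omega
    | succ s ihs =>
      have hs := ihs (by omega)
      show X (i + s + 1) ω = (X i ω + (s + 1)) % 2
      have hx : i + s + 1 ∈ Finset.Icc (i + 1) (n + i - 1) := by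
        rw [Finset.mem_Icc]; omega
      have h1 := hterm _ hx
      have h2 : i + s + 1 - 1 = i + s := by omega
      rw [h2] at h1
      have hne := term_ne (hval _ _) (hval _ _) h1
      have hu := hval (i + s) ω
      have hv := hval (i + s + 1) ω
      have := hval i ω
      omega
  exact ⟨i, by omega, by omega, hval i ω, halt⟩

end ERDet

noncomputable section ERUp

variable {Ω : Type*} [MeasurableSpace Ω] {μ : Measure Ω} [IsProbabilityMeasure μ]
  {p q : ℝ} {X : ℕ → Ω → ℕ}

/-- the event that the window `[i, i+m]` shows the alternating pattern starting
with digit `ξ`. -/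
def upEvt (X : ℕ → Ω → ℕ) (i m ξ : ℕ) : Set Ω :=
  ⋂ i' ∈ Finset.Ico i (i + (m + 1)), {ω | X i' ω = (ξ + (i' - i)) % 2}

section up
variable (hp0 : 0 < p) (hp1 : p < 1) (hq : q = 1 - p)
  (hmeas : ∀ i, Measurable (X i)) (hval : ∀ i ω, X i ω ≤ 1)
  (hdist : ∀ i, μ {ω | X i ω = 1} = ENNReal.ofReal p)
  (hindep : iIndepFun X μ)

set_option linter.unusedSectionVars false
include hp0 hp1 hq hmeas hval hdist hindep

lemma upEvt_meas (i m ξ : ℕ) :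
    μ (upEvt X i m ξ) ≤ ENNReal.ofReal (Real.sqrt (p * q) ^ m) := by
  classical
  set c : ℕ → ℝ := fun t => if (ξ + t) % 2 = 1 then p else q with hc
  have hq0' : 0 < q := hq0 hp0 hp1 hq
  have hmarg : ∀ t : ℕ, μ {ω | X (i + t) ω = (ξ + t) % 2} = ENNReal.ofReal (c t) := by
    intro t
    have h2 : (ξ + t) % 2 = 0 ∨ (ξ + t) % 2 = 1 := by omega
    rcases h2 with h | h
    · rw [h]; simp only [hc, h]
      rw [if_neg (by omega)]
      exact marg0 hp0 hp1 hq hmeas hval hdist hindep (i + t)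
    · rw [h]; simp only [hc, h, if_pos rfl]
      exact hdist (i + t)
  have hm : μ (upEvt X i m ξ) = ENNReal.ofReal (∏ t ∈ Finset.range (m + 1), c t) := by
    unfold upEvt
    rw [window_meas hp0 hp1 hq hmeas hval hdist hindep]
    rw [ENNReal.ofReal_prod_of_nonneg (fun t _ => by
      simp only [hc]; split
      · exact hp0.le
      · exact hq0'.le)]
    apply Finset.prod_congr rfl
    intro t _
    have : i + t - i = t := by omega
    rw [this, hmarg t]
  rw [hm]
  apply ENNReal.ofReal_le_ofReal
  apply prod_alt_le hp0 hp1 hq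
  · intro t; simp only [hc]; split
    · exact hp0.le
    · exact hq0'.le
  · intro t; simp only [hc]; split
    · exact hp1.le
    · exact (hq1 hp0 hp1 hq).le
  · intro t
    have h2 : (ξ + t) % 2 = 0 ∨ (ξ + t) % 2 = 1 := by omega
    have h3 : ξ + (t + 1) = (ξ + t) + 1 := by omega
    rcases h2 with h | h <;>
      · simp only [hc, h3, Nat.add_mod_right, h]
        rw [Nat.add_mod, h] <;> norm_num <;> ring

end up
end ERUp
noncomputable section ERBC

/-- `r ^ (x * logb (1/r) N) = N ^ (-x)`. -/
lemma rpow_mul_logb_eq {r : ℝ} (hr0 : 0 < r) (hr1 : r < 1) {N : ℕ} (hN : 1 ≤ N) (x : ℝ) :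
    r ^ (x * Real.logb (1 / r) N) = (N : ℝ) ^ (-x) := by
  have hb1 : 1 < 1 / r := (one_lt_div hr0).2 hr1
  have hb0 : 0 < 1 / r := by positivity
  have hN0 : (0 : ℝ) < N := by exact_mod_cast hN
  set L := Real.logb (1 / r) N with hL
  have hbL : (1 / r) ^ L = (N : ℝ) := Real.rpow_logb hb0 (ne_of_gt hb1) hN0
  rw [← hbL, ← Real.rpow_mul hb0.le]
  rw [one_div, Real.inv_rpow hr0.le, ← Real.rpow_neg hr0.le]
  congr 1
  ring

variable {Ω : Type*} [MeasurableSpace Ω] {μ : Measure Ω} [IsProbabilityMeasure μ]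
  {p q : ℝ} {X : ℕ → Ω → ℕ}

/-- threshold for the upper bound. -/
def mUp (p q : ℝ) (N : ℕ) : ℕ := ⌈3 * Real.logb (1 / Real.sqrt (p * q)) N⌉₊

lemma summable_aux : Summable (fun N : ℕ => 16 / ((N : ℝ) + 1) ^ 2) := by
  have h1 : Summable (fun n : ℕ => (1 : ℝ) / (n : ℝ) ^ 2) :=
    Real.summable_one_div_nat_pow.2 one_lt_two
  have h2 := (summable_nat_add_iff 1).2 h1
  have h3 : (fun n : ℕ => (1 : ℝ) / (((n + 1 : ℕ) : ℕ) : ℝ) ^ 2)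
      = fun n : ℕ => (1 : ℝ) / ((n : ℝ) + 1) ^ 2 := by
    funext n; push_cast; ring
  rw [show (fun N : ℕ => 16 / ((N : ℝ) + 1) ^ 2)
      = fun N : ℕ => 16 * ((1 : ℝ) / ((N : ℝ) + 1) ^ 2) by funext n; ring]
  exact Summable.mul_left 16 (h3 ▸ h2)

lemma tsum_ofReal_aux : (∑' N : ℕ, ENNReal.ofReal (16 / ((N : ℝ) + 1) ^ 2)) ≠ ⊤ := by
  rw [← ENNReal.ofReal_tsum_of_nonneg (fun N => by positivity) summable_aux]
  exact ENNReal.ofReal_ne_top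

section bc
variable (hp0 : 0 < p) (hp1 : p < 1) (hq : q = 1 - p)
  (hmeas : ∀ i, Measurable (X i)) (hval : ∀ i ω, X i ω ≤ 1)
  (hdist : ∀ i, μ {ω | X i ω = 1} = ENNReal.ofReal p)
  (hindep : iIndepFun X μ)

set_option linter.unusedSectionVars false
include hp0 hp1 hq hmeas hval hdist hindep

lemma upper_ae : ∀ᵐ ω ∂μ, ∀ᶠ N in Filter.atTop, longestSwitch X N 1 ω ≤ mUp p q N := by
  classical
  set r := Real.sqrt (p * q) with hr
  have hr0 : 0 < r := sqrtpq_pos hp0 hp1 hq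
  have hr1 : r < 1 := sqrtpq_lt_one hp0 hp1 hq
  set UB : ℕ → Set Ω := fun N =>
    ⋃ i ∈ Finset.Icc 1 (N + 1), (upEvt X i (mUp p q N) 0 ∪ upEvt X i (mUp p q N) 1) with hUB
  have hbound : ∀ N : ℕ, μ (UB N) ≤ ENNReal.ofReal (16 / ((N : ℝ) + 1) ^ 2) := by
    intro N
    rcases Nat.eq_zero_or_pos N with rfl | hN
    · calc μ (UB 0) ≤ 1 := prob_le_one
        _ ≤ ENNReal.ofReal (16 / (((0 : ℕ) : ℝ) + 1) ^ 2) := by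
            rw [ENNReal.one_le_ofReal]; norm_num
    · have h2 : ∀ i ∈ Finset.Icc 1 (N + 1),
          μ (upEvt X i (mUp p q N) 0 ∪ upEvt X i (mUp p q N) 1)
          ≤ ENNReal.ofReal (2 * r ^ mUp p q N) := by
        intro i _
        calc μ (upEvt X i (mUp p q N) 0 ∪ upEvt X i (mUp p q N) 1)
            ≤ μ (upEvt X i (mUp p q N) 0) + μ (upEvt X i (mUp p q N) 1) := measure_union_le _ _
          _ ≤ ENNReal.ofReal (r ^ mUp p q N) + ENNReal.ofReal (r ^ mUp p q N) := by
              gcongr <;> exact upEvt_meas hp0 hp1 hq hmeas hval hdist hindep _ _ _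
          _ = ENNReal.ofReal (2 * r ^ mUp p q N) := by
              rw [two_mul, ENNReal.ofReal_add (by positivity) (by positivity)]
      have hNR : (1 : ℝ) ≤ (N : ℝ) := by exact_mod_cast hN
      have hm : r ^ mUp p q N ≤ ((N : ℝ) ^ (3 : ℕ))⁻¹ := by
        have h5 : r ^ mUp p q N ≤ (N : ℝ) ^ (-(3 : ℝ)) := by
          rw [← rpow_mul_logb_eq hr0 hr1 hN 3, ← Real.rpow_natCast r (mUp p q N)]
          exact Real.rpow_le_rpow_of_exponent_ge hr0 hr1.le (Nat.le_ceil _)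
        have h3 : (N : ℝ) ^ (-(3 : ℝ)) = ((N : ℝ) ^ (3 : ℕ))⁻¹ := by
          rw [Real.rpow_neg (by positivity), ← Real.rpow_natCast (N : ℝ) 3]
          norm_num
        rw [← h3]; exact h5
      calc μ (UB N) ≤ ∑ i ∈ Finset.Icc 1 (N + 1),
            μ (upEvt X i (mUp p q N) 0 ∪ upEvt X i (mUp p q N) 1) :=
          measure_biUnion_finset_le _ _
        _ ≤ (Finset.Icc 1 (N + 1)).card • ENNReal.ofReal (2 * r ^ mUp p q N) :=
          Finset.sum_le_card_nsmul _ _ _ h2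
        _ = ENNReal.ofReal (((N : ℝ) + 1) * (2 * r ^ mUp p q N)) := by
            rw [Nat.card_Icc, nsmul_eq_mul, show N + 1 + 1 - 1 = N + 1 from rfl,
              ← ENNReal.ofReal_natCast (N + 1), ← ENNReal.ofReal_mul (by positivity)]
            congr 1
            push_cast
            ring
        _ ≤ ENNReal.ofReal (16 / ((N : ℝ) + 1) ^ 2) := by
            apply ENNReal.ofReal_le_ofReal
            have hNpos : (0 : ℝ) < (N : ℝ) ^ (3 : ℕ) := by positivity
            calc ((N : ℝ) + 1) * (2 * r ^ mUp p q N)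
                ≤ ((N : ℝ) + 1) * (2 * ((N : ℝ) ^ (3 : ℕ))⁻¹) := by gcongr
              _ = (2 * ((N : ℝ) + 1)) / (N : ℝ) ^ (3 : ℕ) := by field_simp
              _ ≤ 16 / ((N : ℝ) + 1) ^ 2 := by
                  rw [div_le_div_iff₀ hNpos (by positivity)]
                  have h6 : (N : ℝ) ^ 2 ≤ (N : ℝ) ^ 3 := by nlinarith [hNR]
                  have h7 : (N : ℝ) ≤ (N : ℝ) ^ 2 := by nlinarith [hNR]
                  nlinarith [hNR, h6, h7]
  have hsum : (∑' N, μ (UB N)) ≠ ⊤ :=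
    ne_top_of_le_ne_top tsum_ofReal_aux (ENNReal.tsum_le_tsum hbound)
  filter_upwards [MeasureTheory.ae_eventually_notMem hsum] with ω hω
  filter_upwards [hω] with N hN
  by_contra hcon
  push_neg at hcon
  obtain ⟨i, hi1, hi2, hξ, halt⟩ := longestSwitch_window hval hcon
  apply hN
  have hmem : ω ∈ upEvt X i (mUp p q N) (X i ω) := by
    unfold upEvt
    refine Set.mem_iInter₂.2 fun i' hi' => ?_
    rw [Finset.mem_Ico] at hi'
    have ht : i' = i + (i' - i) := by omega
    have := halt (i' - i) (by omega)
    simp only [Set.mem_setOf_eq]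
    rw [ht, this]
    congr 2
    omega
  refine Set.mem_biUnion (Finset.mem_Icc.2 ⟨hi1, hi2⟩) ?_
  interval_cases h : (X i ω)
  · exact Set.mem_union_left _ hmem
  · exact Set.mem_union_right _ hmem

end bc
end ERBC
noncomputable section ERLow

variable {Ω : Type*} [MeasurableSpace Ω] {μ : Measure Ω} [IsProbabilityMeasure μ]
  {p q : ℝ} {X : ℕ → Ω → ℕ}

/-- block length for the lower bound at scale `N` with margin `ε`. -/
def klow (p q ε : ℝ) (N : ℕ) : ℕ :=
  ⌈(1 - ε) * Real.logb (1 / Real.sqrt (p * q)) N⌉₊ + 1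

/-- the conditions on `N` under which the lower bound estimate works. -/
def goodN (p q ε : ℝ) (N : ℕ) : Prop :=
  1 ≤ N ∧ 2 * klow p q ε N ≤ N ∧
    (4 / (p * q)) * (Real.log N * klow p q ε N) ≤ (N : ℝ) ^ (ε : ℝ)

/-- the event that all blocks fail at scale `N`. -/
def lowSet (X : ℕ → Ω → ℕ) (p q ε : ℝ) (N : ℕ) : Set Ω :=
  if goodN p q ε N then
    ⋂ j ∈ Finset.range (N / klow p q ε N), (blockEvt X p q (klow p q ε N) j)ᶜ
  else ∅

section low
variable (hp0 : 0 < p) (hp1 : p < 1) (hq : q = 1 - p)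
  (hmeas : ∀ i, Measurable (X i)) (hval : ∀ i ω, X i ω ≤ 1)
  (hdist : ∀ i, μ {ω | X i ω = 1} = ENNReal.ofReal p)
  (hindep : iIndepFun X μ)
  {ε : ℝ} (hε0 : 0 < ε) (hε1 : ε < 1)

set_option linter.unusedSectionVars false
include hp0 hp1 hq hmeas hval hdist hindep hε0 hε1

set_option maxHeartbeats 1000000 in
lemma lowSet_bound (N : ℕ) :
    μ (lowSet X p q ε N) ≤ ENNReal.ofReal (16 / ((N : ℝ) + 1) ^ 2) := by
  classical
  set r := Real.sqrt (p * q) with hrdef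
  have hr0 : 0 < r := sqrtpq_pos hp0 hp1 hq
  have hr1 : r < 1 := sqrtpq_lt_one hp0 hp1 hq
  have hpq : r ^ 2 = p * q := sq_sqrtpq hp0 hp1 hq
  have hpq0 : 0 < p * q := by nlinarith [hq0 hp0 hp1 hq]
  unfold lowSet
  split_ifs with hg
  swap
  · simp
  obtain ⟨hN1, hN2, hN3⟩ := hg
  set k := klow p q ε N with hkdef
  set M := N / k with hMdef
  have hk1 : 1 ≤ k := Nat.le_add_left 1 _
  have hNR : (1 : ℝ) ≤ (N : ℝ) := by exact_mod_cast hN1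
  have hNpos : (0 : ℝ) < N := by linarith
  have hkR : (1 : ℝ) ≤ (k : ℝ) := by exact_mod_cast hk1
  have hk0 : (0 : ℝ) < k := by linarith
  rw [blockEvt_compl_meas hp0 hp1 hq hmeas hval hdist hindep hk1 M]
  set c := ∏ t ∈ Finset.range k, pr p q t with hcdef
  have hc0 : 0 ≤ c := Finset.prod_nonneg fun t _ => pr_nonneg hp0 hp1 hq t
  have hc1 : c ≤ 1 :=
    Finset.prod_le_one (fun t _ => pr_nonneg hp0 hp1 hq t) (fun t _ => pr_le_one hp0 hp1 hq t)
  have hrk : r ^ k ≤ c := prod_pr_ge hp0 hp1 hq k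
  have hrk0 : (0 : ℝ) < r ^ k := by positivity
  have hrk1 : r ^ k ≤ 1 := pow_le_one₀ hr0.le hr1.le
  rw [← ENNReal.ofReal_pow (by linarith)]
  apply ENNReal.ofReal_le_ofReal
  -- logb facts
  set L := Real.logb (1 / r) N with hLdef
  have hb1 : 1 < 1 / r := (one_lt_div hr0).2 hr1
  have hL0 : 0 ≤ L := Real.logb_nonneg hb1 hNR
  have hkup : (k : ℝ) ≤ (1 - ε) * L + 2 := by
    have h1 : (⌈(1 - ε) * L⌉₊ : ℝ) < (1 - ε) * L + 1 :=
      Nat.ceil_lt_add_one (by nlinarith)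
    have h2 : (k : ℝ) = (⌈(1 - ε) * L⌉₊ : ℝ) + 1 := by
      rw [hkdef]; unfold klow; push_cast; rw [hLdef, hrdef]
    rw [h2]; linarith
  -- r ^ k ≥ r² N^(ε-1)
  have hrk2 : r ^ 2 * (N : ℝ) ^ (ε - 1) ≤ r ^ k := by
    have h1 : r ^ (k : ℝ) = r ^ k := Real.rpow_natCast r k
    have h2 : r ^ ((1 - ε) * L + 2) ≤ r ^ (k : ℝ) :=
      Real.rpow_le_rpow_of_exponent_ge hr0 hr1.le hkup
    have h3 : r ^ ((1 - ε) * L + 2) = (N : ℝ) ^ (-(1 - ε)) * r ^ (2 : ℝ) := by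
      rw [Real.rpow_add hr0, rpow_mul_logb_eq hr0 hr1 hN1 (1 - ε)]
    have h4 : r ^ (2 : ℝ) = r ^ (2 : ℕ) := by
      rw [← Real.rpow_natCast r 2]; norm_num
    have h5 : -(1 - ε) = ε - 1 := by ring
    calc r ^ 2 * (N : ℝ) ^ (ε - 1) = (N : ℝ) ^ (-(1 - ε)) * r ^ (2 : ℝ) := by
          rw [h4, h5]; ring
      _ = r ^ ((1 - ε) * L + 2) := h3.symm
      _ ≤ r ^ (k : ℝ) := h2
      _ = r ^ k := h1
  -- M is large
  have hMk : (N : ℝ) - k ≤ (M : ℝ) * k := by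
    have h1 := Nat.div_add_mod N k
    have h2 : N % k < k := Nat.mod_lt N (by omega)
    have h3 : (N : ℝ) = (k : ℝ) * M + (N % k : ℕ) := by
      rw [hMdef]; exact_mod_cast (congrArg (Nat.cast : ℕ → ℝ) h1).symm
    have h4 : ((N % k : ℕ) : ℝ) < (k : ℝ) := by exact_mod_cast h2
    nlinarith
  have h2kN : 2 * (k : ℝ) ≤ (N : ℝ) := by exact_mod_cast hN2
  have hMhalf : (N : ℝ) / 2 ≤ (M : ℝ) * k := by linarith
  have hM0 : (0 : ℝ) ≤ M := by positivity
  have hNe0 : (0 : ℝ) < (N : ℝ) ^ (ε : ℝ) := Real.rpow_pos_of_pos hNpos ε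
  -- key exponent bound
  have hlogN : 0 ≤ Real.log N := Real.log_nonneg hNR
  have hexp : 2 * Real.log N ≤ (M : ℝ) * r ^ k := by
    have h6 : 4 * (Real.log N * k) ≤ p * q * (N : ℝ) ^ (ε : ℝ) := by
      have h7 := mul_le_mul_of_nonneg_right hN3 hpq0.le
      rw [div_mul_eq_mul_div, div_mul_cancel₀ _ hpq0.ne'] at h7
      linarith
    have hNe : (N : ℝ) ^ (ε - 1) = (N : ℝ) ^ (ε : ℝ) / (N : ℝ) := by
      rw [show ε - 1 = ε + (-1) from by ring, Real.rpow_add hNpos, Real.rpow_neg_one]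
      ring
    calc 2 * Real.log N ≤ (r ^ 2 / 2) * ((N : ℝ) ^ (ε : ℝ) / k) := by
          have he : (r ^ 2 / 2) * ((N : ℝ) ^ (ε : ℝ) / k)
              = (p * q * (N : ℝ) ^ (ε : ℝ)) / (2 * k) := by
            rw [hpq]; field_simp
          rw [he, le_div_iff₀ (by positivity)]
          nlinarith [h6]
      _ = ((N : ℝ) / 2) * (r ^ 2 * (N : ℝ) ^ (ε : ℝ) / ((N : ℝ) * k)) := by
          field_simp
      _ ≤ ((M : ℝ) * k) * (r ^ 2 * (N : ℝ) ^ (ε : ℝ) / ((N : ℝ) * k)) := by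
          apply mul_le_mul_of_nonneg_right hMhalf
          positivity
      _ = (M : ℝ) * (r ^ 2 * (N : ℝ) ^ (ε - 1)) := by
          rw [hNe]; field_simp
      _ ≤ (M : ℝ) * r ^ k := mul_le_mul_of_nonneg_left hrk2 hM0
  -- final chain
  calc (1 - c) ^ M ≤ (1 - r ^ k) ^ M := by
        apply pow_le_pow_left₀ (by linarith) (by linarith)
    _ ≤ Real.exp (-(r ^ k)) ^ M := by
        apply pow_le_pow_left₀ (by linarith)
        linarith [Real.add_one_le_exp (-(r ^ k))]
    _ = Real.exp (-((M : ℝ) * r ^ k)) := by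
        rw [← Real.exp_nat_mul]; congr 1; ring
    _ ≤ Real.exp (-(2 * Real.log N)) := Real.exp_le_exp.2 (by linarith)
    _ = ((N : ℝ) ^ (2 : ℕ))⁻¹ := by
        rw [show -(2 * Real.log N) = Real.log N * (-2) from by ring,
          ← Real.rpow_def_of_pos hNpos, Real.rpow_neg hNpos.le,
          ← Real.rpow_natCast (N : ℝ) 2]
        norm_num
    _ ≤ 16 / ((N : ℝ) + 1) ^ 2 := by
        rw [inv_eq_one_div, div_le_div_iff₀ (by positivity) (by positivity)]
        nlinarith [hNR]

end low
end ERLow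
section low2
variable {Ω : Type*} [MeasurableSpace Ω] {μ : Measure Ω} [IsProbabilityMeasure μ]
  {p q : ℝ} {X : ℕ → Ω → ℕ}
variable (hp0 : 0 < p) (hp1 : p < 1) (hq : q = 1 - p)
  (hmeas : ∀ i, Measurable (X i)) (hval : ∀ i ω, X i ω ≤ 1)
  (hdist : ∀ i, μ {ω | X i ω = 1} = ENNReal.ofReal p)
  (hindep : iIndepFun X μ)
  {ε : ℝ} (hε0 : 0 < ε) (hε1 : ε < 1)

set_option linter.unusedSectionVars false
include hp0 hp1 hq hε0 hε1

lemma good_eventually : ∀ᶠ N in Filter.atTop, goodN p q ε N := by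
  classical
  set r := Real.sqrt (p * q) with hrdef
  have hr0 : 0 < r := sqrtpq_pos hp0 hp1 hq
  have hr1 : r < 1 := sqrtpq_lt_one hp0 hp1 hq
  have hpq0 : 0 < p * q := by nlinarith [hq0 hp0 hp1 hq]
  set b := 1 / r with hbdef
  have hb1 : 1 < b := (one_lt_div hr0).2 hr1
  have hlb : 0 < Real.log b := Real.log_pos hb1
  set C : ℝ := (4 / (p * q)) * (1 / Real.log b + 2) with hCdef
  have hC : 0 < C := by positivity
  have hA : ∀ᶠ x : ℝ in Filter.atTop, Real.log x ≤ (Real.log b / 8) * x := by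
    have h := Real.isLittleO_log_id_atTop.bound
      (show (0 : ℝ) < Real.log b / 8 by positivity)
    filter_upwards [h, Filter.eventually_ge_atTop (1 : ℝ)] with x hx hx1
    calc Real.log x ≤ |Real.log x| := le_abs_self _
      _ ≤ Real.log b / 8 * |x| := by simpa [Real.norm_eq_abs] using hx
      _ = Real.log b / 8 * x := by rw [abs_of_nonneg (by linarith)]
  have hB : ∀ᶠ x : ℝ in Filter.atTop, (Real.log x) ^ (2 : ℕ) ≤ (1 / C) * x ^ (ε : ℝ) := by
    have h := (isLittleO_log_rpow_rpow_atTop (2 : ℝ) hε0).bound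
      (show (0 : ℝ) < 1 / C by positivity)
    filter_upwards [h, Filter.eventually_ge_atTop (1 : ℝ)] with x hx hx1
    have hlx : 0 ≤ Real.log x := Real.log_nonneg hx1
    have hx0 : (0 : ℝ) ≤ x := by linarith
    have h2 : Real.log x ^ (2 : ℝ) = Real.log x ^ (2 : ℕ) := by
      rw [← Real.rpow_natCast (Real.log x) 2]; norm_num
    calc (Real.log x) ^ (2 : ℕ) ≤ |Real.log x ^ (2 : ℝ)| := by
          rw [h2]; exact le_abs_self _
      _ ≤ 1 / C * |x ^ (ε : ℝ)| := by simpa [Real.norm_eq_abs] using hx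
      _ = 1 / C * x ^ (ε : ℝ) := by rw [abs_of_nonneg (Real.rpow_nonneg hx0 ε)]
  have hcast : Filter.Tendsto (fun N : ℕ => (N : ℝ)) Filter.atTop Filter.atTop :=
    tendsto_natCast_atTop_atTop
  have hlog : ∀ᶠ N : ℕ in Filter.atTop, 1 ≤ Real.log N := by
    apply (Real.tendsto_log_atTop.comp hcast).eventually_ge_atTop
  filter_upwards [hcast.eventually hA, hcast.eventually hB, hlog,
    Filter.eventually_ge_atTop 8] with N hA' hB' hlog' hN8
  have hN1 : 1 ≤ N := by omega
  have hNR : (1 : ℝ) ≤ (N : ℝ) := by exact_mod_cast hN1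
  have hNR8 : (8 : ℝ) ≤ (N : ℝ) := by exact_mod_cast hN8
  set L := Real.logb b N with hLdef
  have hL0 : 0 ≤ L := Real.logb_nonneg hb1 hNR
  have hkcast : (klow p q ε N : ℝ) = (⌈(1 - ε) * L⌉₊ : ℝ) + 1 := by
    unfold klow; push_cast; rw [hLdef, hbdef, hrdef]
  have hkup : (klow p q ε N : ℝ) ≤ (1 - ε) * L + 2 := by
    have h1 : (⌈(1 - ε) * L⌉₊ : ℝ) < (1 - ε) * L + 1 :=
      Nat.ceil_lt_add_one (by nlinarith)
    rw [hkcast]; linarith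
  have hkup2 : (klow p q ε N : ℝ) ≤ L + 2 := by nlinarith
  have hLN8 : L ≤ (N : ℝ) / 8 := by
    rw [hLdef, Real.logb, div_le_iff₀ hlb]
    calc Real.log N ≤ Real.log b / 8 * N := hA'
      _ = (N : ℝ) / 8 * Real.log b := by ring
  refine ⟨hN1, ?_, ?_⟩
  · -- 2 * klow ≤ N
    have hreal : 2 * (klow p q ε N : ℝ) ≤ (N : ℝ) := by
      calc 2 * (klow p q ε N : ℝ) ≤ 2 * (L + 2) := by linarith
        _ ≤ 2 * ((N : ℝ) / 8 + 2) := by linarith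
        _ ≤ (N : ℝ) := by linarith
    exact_mod_cast hreal
  · -- (4/(p*q)) * (log N * klow) ≤ N^ε
    have hkC : (klow p q ε N : ℝ) ≤ (1 / Real.log b + 2) * Real.log N := by
      calc (klow p q ε N : ℝ) ≤ L + 2 := hkup2
        _ = (1 / Real.log b) * Real.log N + 2 := by
            rw [hLdef, Real.logb]; ring
        _ ≤ (1 / Real.log b) * Real.log N + 2 * Real.log N := by linarith
        _ = (1 / Real.log b + 2) * Real.log N := by ring
    have hlogN0 : 0 ≤ Real.log N := by linarith
    calc (4 / (p * q)) * (Real.log N * klow p q ε N)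
        ≤ (4 / (p * q)) * (Real.log N * ((1 / Real.log b + 2) * Real.log N)) := by
          apply mul_le_mul_of_nonneg_left _ (by positivity)
          exact mul_le_mul_of_nonneg_left hkC hlogN0
      _ = C * (Real.log N ^ (2 : ℕ)) := by rw [hCdef]; ring
      _ ≤ C * ((1 / C) * (N : ℝ) ^ (ε : ℝ)) := by
          apply mul_le_mul_of_nonneg_left hB' hC.le
      _ = (N : ℝ) ^ (ε : ℝ) := by field_simp

include hmeas hval hdist hindep

lemma lower_ae : ∀ᵐ ω ∂μ, ∀ᶠ N : ℕ in Filter.atTop,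
    (1 - ε) * Real.logb (1 / Real.sqrt (p * q)) N ≤ (longestSwitch X N 1 ω : ℝ) := by
  classical
  have hsum : (∑' N, μ (lowSet X p q ε N)) ≠ ⊤ :=
    ne_top_of_le_ne_top tsum_ofReal_aux (ENNReal.tsum_le_tsum
      (lowSet_bound hp0 hp1 hq hmeas hval hdist hindep hε0 hε1))
  filter_upwards [MeasureTheory.ae_eventually_notMem hsum] with ω hω
  filter_upwards [hω, good_eventually hp0 hp1 hq hε0 hε1] with N hN hg
  rw [lowSet, if_pos hg] at hN
  set k := klow p q ε N with hkdef
  have hk1 : 1 ≤ k := Nat.le_add_left 1 _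
  obtain ⟨j, hj, hmem⟩ : ∃ j ∈ Finset.range (N / k), ω ∈ blockEvt X p q k j := by
    by_contra hc
    push_neg at hc
    exact hN (Set.mem_iInter₂.2 fun j hj => hc j hj)
  have hjk : (j + 1) * k ≤ N := by
    have h1 : j + 1 ≤ N / k := Finset.mem_range.1 hj
    calc (j + 1) * k ≤ (N / k) * k := Nat.mul_le_mul_right k h1
      _ ≤ N := Nat.div_mul_le_self N k
  have hls : k - 1 ≤ longestSwitch X N 1 ω :=
    blockEvt_longestSwitch hval hk1 hjk hmem
  have hceil : (1 - ε) * Real.logb (1 / Real.sqrt (p * q)) N ≤ ((k - 1 : ℕ) : ℝ) := by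
    have h1 : k - 1 = ⌈(1 - ε) * Real.logb (1 / Real.sqrt (p * q)) N⌉₊ := by
      rw [hkdef]; unfold klow; omega
    rw [h1]
    exact Nat.le_ceil _
  calc (1 - ε) * Real.logb (1 / Real.sqrt (p * q)) N ≤ ((k - 1 : ℕ) : ℝ) := hceil
    _ ≤ (longestSwitch X N 1 ω : ℝ) := by exact_mod_cast hls

end low2

theorem one_le_liminf_longestSwitch_div_logb
    {Ω : Type*} [MeasurableSpace Ω] (μ : Measure Ω) [IsProbabilityMeasure μ]
    (p q : ℝ) (hp0 : 0 < p) (hp1 : p < 1) (hq : q = 1 - p)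
    (X : ℕ → Ω → ℕ)
    (hmeas : ∀ i, Measurable (X i))
    (hval : ∀ i ω, X i ω ≤ 1)
    (hdist : ∀ i, μ {ω | X i ω = 1} = ENNReal.ofReal p)
    (hindep : iIndepFun X μ) :
    ∀ᵐ ω ∂μ, 1 ≤ atTop.liminf
      (fun N : ℕ => (longestSwitch X N 1 ω : ℝ) / Real.logb (1 / Real.sqrt (p * q)) (N : ℝ)) := by
  classical
  set r := Real.sqrt (p * q) with hrdef
  have hr0 : 0 < r := sqrtpq_pos hp0 hp1 hq
  have hr1 : r < 1 := sqrtpq_lt_one hp0 hp1 hq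
  have hb1 : 1 < 1 / r := (one_lt_div hr0).2 hr1
  have hup := upper_ae hp0 hp1 hq hmeas hval hdist hindep
  have hεpos : ∀ n : ℕ, (0 : ℝ) < 1 / ((n : ℝ) + 2) := fun n => by positivity
  have hεlt : ∀ n : ℕ, 1 / ((n : ℝ) + 2) < 1 := fun n => by
    rw [div_lt_one (by positivity)]
    have : (0 : ℝ) ≤ (n : ℝ) := Nat.cast_nonneg n
    linarith
  have hlow : ∀ᵐ ω ∂μ, ∀ n : ℕ, ∀ᶠ N : ℕ in atTop,
      (1 - 1 / ((n : ℝ) + 2)) * Real.logb (1 / Real.sqrt (p * q)) N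
        ≤ (longestSwitch X N 1 ω : ℝ) :=
    ae_all_iff.2 fun n => lower_ae hp0 hp1 hq hmeas hval hdist hindep (hεpos n) (hεlt n)
  filter_upwards [hup, hlow] with ω hωu hωl
  set u : ℕ → ℝ := fun N =>
    (longestSwitch X N 1 ω : ℝ) / Real.logb (1 / Real.sqrt (p * q)) (N : ℝ) with hudef
  have hL1 : ∀ᶠ N : ℕ in atTop, 1 ≤ Real.logb (1 / r) (N : ℝ) := by
    have h := (Real.tendsto_logb_atTop hb1).comp
      (tendsto_natCast_atTop_atTop (R := ℝ))
    exact h.eventually_ge_atTop 1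
  have hcb : IsCoboundedUnder (· ≥ ·) atTop u := by
    apply isCoboundedUnder_ge_of_eventually_le atTop (x := 4)
    filter_upwards [hωu, hL1] with N hN hL
    have hLpos : 0 < Real.logb (1 / r) (N : ℝ) := by linarith
    have h1 : (longestSwitch X N 1 ω : ℝ) ≤ (mUp p q N : ℝ) := Nat.cast_le.2 hN
    have h2 : (mUp p q N : ℝ) ≤ 3 * Real.logb (1 / r) (N : ℝ) + 1 := by
      unfold mUp
      have h3 : (0 : ℝ) ≤ 3 * Real.logb (1 / Real.sqrt (p * q)) N := by
        rw [← hrdef]; linarith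
      have := Nat.ceil_lt_add_one h3
      rw [← hrdef] at this ⊢
      linarith
    have hu : u N = (longestSwitch X N 1 ω : ℝ) / Real.logb (1 / r) (N : ℝ) := by
      rw [hudef, hrdef]
    rw [hu, div_le_iff₀ hLpos]
    nlinarith [h1, h2, hL]
  have hbound : ∀ n : ℕ, (1 - 1 / ((n : ℝ) + 2)) ≤ atTop.liminf u := by
    intro n
    apply le_liminf_of_le hcb
    filter_upwards [hωl n, hL1] with N h1 h2
    have hLpos : 0 < Real.logb (1 / r) (N : ℝ) := by linarith
    rw [hudef]
    simp only
    rw [le_div_iff₀ (by rw [← hrdef]; exact hLpos)]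
    exact h1
  by_contra hcon
  push_neg at hcon
  set l := atTop.liminf u with hldef
  have h1l : 0 < 1 - l := by linarith
  obtain ⟨n, hn⟩ := exists_nat_gt (1 / (1 - l))
  have hb := hbound n
  have h2 : 1 - l ≤ 1 / ((n : ℝ) + 2) := by linarith
  have h3 : (n : ℝ) + 2 ≤ 1 / (1 - l) := by
    rw [le_div_iff₀ h1l]
    rw [le_div_iff₀ (by positivity : (0:ℝ) < (n : ℝ) + 2)] at h2
    linarith
  linarith
end

section
/- Let {γ_n} be a sequence of positive numbers such that ∑_{n=1}^∞ (pq)^{γ_n/2} = ∞. Then for almost every ω in the sample space there exists an infinite increasing sequence of integers N_i = N_i(ω,{γ_n}), i = 1,2,…, such that M_{N_i}(ω) ≥ γ_{N_i} − 1. -/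
open MeasureTheory ProbabilityTheory Filter
open scoped Classical
open Finset
open scoped ENNReal
set_option linter.unusedSectionVars false
set_option linter.unusedVariables false
set_option maxHeartbeats 1000000

namespace LSAux

variable {Ω : Type*} [MeasurableSpace Ω]

/-- A cylinder event: the coordinates in `t` take the values prescribed by `c`. -/
def cyl (X : ℕ → Ω → ℕ) (t : Finset ℕ) (c : ℕ → ℕ) : Set Ω :=
  ⋂ i ∈ t, {ω | X i ω = c i}

lemma measurableSet_cyl (X : ℕ → Ω → ℕ) (hmeas : ∀ i, Measurable (X i))
    (t : Finset ℕ) (c : ℕ → ℕ) : MeasurableSet (cyl X t c) := by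
  refine MeasurableSet.biInter t.countable_toSet fun i _ => ?_
  exact hmeas i (measurableSet_singleton (c i))

lemma cyl_congr (X : ℕ → Ω → ℕ) {t : Finset ℕ} {c c' : ℕ → ℕ}
    (h : ∀ i ∈ t, c i = c' i) : cyl X t c = cyl X t c' := by
  unfold cyl
  exact Set.iInter₂_congr fun i hi => by rw [h i hi]

lemma cyl_union (X : ℕ → Ω → ℕ) (t₁ t₂ : Finset ℕ) (c : ℕ → ℕ) :
    cyl X (t₁ ∪ t₂) c = cyl X t₁ c ∩ cyl X t₂ c := by
  unfold cyl
  ext ω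
  simp only [Set.mem_iInter, Set.mem_inter_iff, Finset.mem_union]
  constructor
  · intro h; exact ⟨fun i hi => h i (Or.inl hi), fun i hi => h i (Or.inr hi)⟩
  · rintro ⟨h₁, h₂⟩ i (hi | hi); exacts [h₁ i hi, h₂ i hi]

lemma cyl_mono (X : ℕ → Ω → ℕ) {t₁ t₂ : Finset ℕ} (h : t₁ ⊆ t₂) (c : ℕ → ℕ) :
    cyl X t₂ c ⊆ cyl X t₁ c := by
  intro ω hω
  simp only [cyl, Set.mem_iInter] at hω ⊢
  exact fun i hi => hω i (h hi)

lemma meas_cyl (μ : Measure Ω) (X : ℕ → Ω → ℕ)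
    (hindep : iIndepFun X μ)
    (t : Finset ℕ) (c : ℕ → ℕ) :
    μ (cyl X t c) = ∏ i ∈ t, μ {ω | X i ω = c i} := by
  have := hindep.measure_inter_preimage_eq_mul t
    (sets := fun i => ({c i} : Set ℕ)) (fun i _ => measurableSet_singleton _)
  have heq : ∀ i, X i ⁻¹' ({c i} : Set ℕ) = {ω | X i ω = c i} := fun i => rfl
  simpa [heq, cyl] using this

/-! ### alternating products -/

noncomputable def par (P Q : ℝ≥0∞) (j : ℕ) : ℝ≥0∞ := if j % 2 = 0 then P else Q

lemma par_mul_par_succ (P Q : ℝ≥0∞) (x : ℕ) : par P Q x * par P Q (x + 1) = P * Q := by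
  rcases Nat.even_or_odd x with h | h
  · have h0 : x % 2 = 0 := Nat.even_iff.mp h
    have h1 : (x + 1) % 2 = 1 := by omega
    simp [par, h0, h1, mul_comm]
  · have h0 : x % 2 = 1 := Nat.odd_iff.mp h
    have h1 : (x + 1) % 2 = 0 := by omega
    simp [par, h0, h1, mul_comm]

lemma prod_par_even (P Q : ℝ≥0∞) (off : ℕ) :
    ∀ k, ∏ j ∈ range (2 * k), par P Q (j + off) = (P * Q) ^ k := by
  intro k
  induction k with
  | zero => simp
  | succ k ih =>
    have h2 : 2 * (k + 1) = (2 * k) + 1 + 1 := by ring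
    rw [h2, Finset.prod_range_succ, Finset.prod_range_succ, ih, mul_assoc]
    have : par P Q (2 * k + off) * par P Q (2 * k + 1 + off) = P * Q := by
      have := par_mul_par_succ P Q (2 * k + off)
      simpa [Nat.add_right_comm] using this
    rw [this, pow_succ]

lemma prod_par_upper {P Q : ℝ≥0∞} (hP : P ≤ 1) (hQ : Q ≤ 1) (off L : ℕ) :
    ∏ j ∈ range L, par P Q (j + off) ≤ (P * Q) ^ (L / 2) := by
  rcases Nat.even_or_odd L with h | h
  · obtain ⟨k, hk⟩ := h
    have : L = 2 * k := by omega
    subst this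
    rw [prod_par_even]
    simp [Nat.mul_div_cancel_left]
  · obtain ⟨k, hk⟩ := h
    subst hk
    rw [Finset.prod_range_succ, prod_par_even]
    have hpar : par P Q (2 * k + off) ≤ 1 := by
      unfold par; split <;> assumption
    calc (P * Q) ^ k * par P Q (2 * k + off) ≤ (P * Q) ^ k * 1 :=
          mul_le_mul_right hpar _
      _ = (P * Q) ^ ((2 * k + 1) / 2) := by simp; congr 1; omega

lemma prod_par_lower {P Q : ℝ≥0∞} (hP : P ≤ 1) (hQ : Q ≤ 1) (off L : ℕ) :
    (P * Q) ^ ((L + 1) / 2) ≤ ∏ j ∈ range L, par P Q (j + off) := by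
  rcases Nat.even_or_odd L with h | h
  · obtain ⟨k, hk⟩ := h
    have : L = 2 * k := by omega
    subst this
    rw [prod_par_even]
    have : (2 * k + 1) / 2 = k := by omega
    rw [this]
  · obtain ⟨k, hk⟩ := h
    subst hk
    rw [Finset.prod_range_succ, prod_par_even]
    have hpar : P * Q ≤ par P Q (2 * k + off) := by
      unfold par; split
      · calc P * Q ≤ P * 1 := mul_le_mul_right hQ _
          _ = P := mul_one P
      · calc P * Q ≤ 1 * Q := mul_le_mul_left hP _
          _ = Q := one_mul Q
    have hdiv : (2 * k + 1 + 1) / 2 = k + 1 := by omega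
    rw [hdiv, pow_succ]
    exact mul_le_mul_right hpar _

/-! ### single coordinate measures -/

noncomputable def pv (p q : ℝ) (v : ℕ) : ℝ≥0∞ :=
  if v = 1 then ENNReal.ofReal p else ENNReal.ofReal q

section
variable (μ : Measure Ω) [IsProbabilityMeasure μ] {p q : ℝ} (X : ℕ → Ω → ℕ)

lemma meas_val (hp0 : 0 ≤ p) (hp1 : p ≤ 1) (hq : q = 1 - p)
    (hmeas : ∀ i, Measurable (X i)) (hval : ∀ i ω, X i ω ≤ 1)
    (hdist : ∀ i, μ {ω | X i ω = 1} = ENNReal.ofReal p)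
    (i : ℕ) {v : ℕ} (hv : v ≤ 1) :
    μ {ω | X i ω = v} = pv p q v := by
  interval_cases v
  · have hcompl : {ω | X i ω = 0} = {ω | X i ω = 1}ᶜ := by
      ext ω
      have := hval i ω
      simp only [Set.mem_setOf_eq, Set.mem_compl_iff]
      omega
    have hm : MeasurableSet {ω | X i ω = 1} := hmeas i (measurableSet_singleton 1)
    rw [pv, if_neg (by norm_num), hcompl, measure_compl hm (measure_ne_top μ _), hdist,
      measure_univ, hq]
    rw [ENNReal.ofReal_sub 1 hp0, ENNReal.ofReal_one]
  · rw [pv, if_pos rfl, hdist]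

/-- the alternating 1,0,1,0,… pattern starting at position `s` -/
def blockPat (s : ℕ) : ℕ → ℕ := fun t => (t - s + 1) % 2

lemma pv_blockPat (p q : ℝ) (s t : ℕ) :
    pv p q (blockPat s t) = par (ENNReal.ofReal q) (ENNReal.ofReal p) (t - s + 1) := by
  unfold pv blockPat par
  rcases Nat.even_or_odd (t - s + 1) with h | h
  · have h0 : (t - s + 1) % 2 = 0 := Nat.even_iff.mp h
    simp [h0]
  · have h0 : (t - s + 1) % 2 = 1 := Nat.odd_iff.mp h
    simp [h0]

lemma prod_pv_tail (hp0 : 0 ≤ p) (hp1 : p ≤ 1) (hq : q = 1 - p)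
    (hmeas : ∀ i, Measurable (X i)) (hval : ∀ i ω, X i ω ≤ 1)
    (hdist : ∀ i, μ {ω | X i ω = 1} = ENNReal.ofReal p)
    {s a : ℕ} (b : ℕ) (hsa : s ≤ a) :
    ∏ t ∈ Finset.Icc a b, μ {ω | X t ω = blockPat s t}
      = ∏ j ∈ range (b + 1 - a), par (ENNReal.ofReal q) (ENNReal.ofReal p)
          (j + (a - s + 1)) := by
  have hicc : Finset.Icc a b = Finset.Ico a (b + 1) := by
    rw [Finset.Ico_add_one_right_eq_Icc]
  rw [hicc, Finset.prod_Ico_eq_prod_range]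
  refine Finset.prod_congr rfl fun j hj => ?_
  have h1 : blockPat s (a + j) ≤ 1 := Nat.lt_succ_iff.mp (Nat.mod_lt _ (by norm_num))
  rw [meas_val μ X hp0 hp1 hq hmeas hval hdist _ h1, pv_blockPat p q s (a + j)]
  congr 1
  omega

end

section Events

variable (μ : Measure Ω) [IsProbabilityMeasure μ] {p q : ℝ} (X : ℕ → Ω → ℕ) (L : ℕ → ℕ)

/-- The event that the `L n` coordinates `X (n - L n + 1), …, X n` alternate `…,0,1,0,1`
(ending with value `(1:ℕ)` at position `n`... pattern starts with 1 at `n - L n + 1`). -/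
def ev (n : ℕ) : Set Ω := cyl X (Finset.Icc (n - L n + 1) n) (blockPat (n - L n + 1))

variable (hp0 : 0 < p) (hp1 : p < 1) (hq : q = 1 - p)
    (hmeas : ∀ i, Measurable (X i)) (hval : ∀ i ω, X i ω ≤ 1)
    (hdist : ∀ i, μ {ω | X i ω = 1} = ENNReal.ofReal p)
    (hindep : iIndepFun X μ)

include hp0 hp1 hq hmeas hval hdist hindep

lemma meas_ev_eq {n : ℕ} (h1 : 1 ≤ L n) (hn : L n ≤ n) :
    μ (ev X L n)
      = ∏ j ∈ range (L n), par (ENNReal.ofReal q) (ENNReal.ofReal p) (j + 1) := by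
  rw [ev, meas_cyl μ X hindep,
    prod_pv_tail μ X hp0.le hp1.le hq hmeas hval hdist n le_rfl]
  have h2 : n + 1 - (n - L n + 1) = L n := by omega
  rw [h2]
  refine Finset.prod_congr rfl fun j hj => ?_
  congr 1
  omega

lemma meas_ev_lower {n : ℕ} (h1 : 1 ≤ L n) (hn : L n ≤ n) :
    ENNReal.ofReal (p * q) ^ ((L n + 1) / 2) ≤ μ (ev X L n) := by
  rw [meas_ev_eq μ X L hp0 hp1 hq hmeas hval hdist hindep h1 hn]
  have hP : ENNReal.ofReal q ≤ 1 := by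
    rw [hq]; exact ENNReal.ofReal_le_one.mpr (by linarith)
  have hQ : ENNReal.ofReal p ≤ 1 := ENNReal.ofReal_le_one.mpr hp1.le
  have := prod_par_lower hP hQ 1 (L n)
  have hmul : ENNReal.ofReal q * ENNReal.ofReal p = ENNReal.ofReal (p * q) := by
    rw [← ENNReal.ofReal_mul (by rw [hq]; linarith), mul_comm]
  rwa [hmul] at this

lemma meas_ev_pair {i j : ℕ} (hij : i < j)
    (h1i : 1 ≤ L i) (hi : L i ≤ i) (h1j : 1 ≤ L j) (hj : L j ≤ j) :
    μ (ev X L i ∩ ev X L j)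
      ≤ μ (ev X L i) * μ (ev X L j)
        + μ (ev X L i) * ENNReal.ofReal (p * q) ^ ((j - i) / 2) := by
  have hq0 : 0 ≤ q := by rw [hq]; linarith
  have hP : ENNReal.ofReal q ≤ 1 := ENNReal.ofReal_le_one.mpr (by rw [hq]; linarith)
  have hQ : ENNReal.ofReal p ≤ 1 := ENNReal.ofReal_le_one.mpr hp1.le
  have hmul : ENNReal.ofReal q * ENNReal.ofReal p = ENNReal.ofReal (p * q) := by
    rw [← ENNReal.ofReal_mul hq0, mul_comm]
  set si := i - L i + 1 with hsi
  set sj := j - L j + 1 with hsj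
  by_cases hover : sj ≤ i
  · -- overlapping blocks
    have hsub : ev X L i ∩ ev X L j
        ⊆ ev X L i ∩ cyl X (Finset.Icc (i + 1) j) (blockPat sj) := by
      refine Set.inter_subset_inter_right _ ?_
      exact cyl_mono X (by
        intro t ht
        simp only [Finset.mem_Icc] at ht ⊢
        omega) _
    have hglue : ev X L i ∩ cyl X (Finset.Icc (i + 1) j) (blockPat sj)
        = cyl X (Finset.Icc si i ∪ Finset.Icc (i + 1) j)
            (fun t => if t ≤ i then blockPat si t else blockPat sj t) := by
      rw [cyl_union]
      congr 1
      · exact (cyl_congr X fun t ht => by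
          simp only [Finset.mem_Icc] at ht
          rw [if_pos ht.2]).symm
      · exact (cyl_congr X fun t ht => by
          simp only [Finset.mem_Icc] at ht
          rw [if_neg (by omega)]).symm
    have hdisj : Disjoint (Finset.Icc si i) (Finset.Icc (i + 1) j) := by
      rw [Finset.disjoint_left]
      intro t ht ht'
      simp only [Finset.mem_Icc] at ht ht'
      omega
    calc μ (ev X L i ∩ ev X L j)
        ≤ μ (cyl X (Finset.Icc si i ∪ Finset.Icc (i + 1) j)
            (fun t => if t ≤ i then blockPat si t else blockPat sj t)) := by
          rw [← hglue]; exact measure_mono hsub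
      _ = (∏ t ∈ Finset.Icc si i, μ {ω | X t ω
              = if t ≤ i then blockPat si t else blockPat sj t})
          * ∏ t ∈ Finset.Icc (i + 1) j, μ {ω | X t ω
              = if t ≤ i then blockPat si t else blockPat sj t} := by
          rw [meas_cyl μ X hindep, Finset.prod_union hdisj]
      _ = μ (ev X L i) * ∏ t ∈ Finset.Icc (i + 1) j, μ {ω | X t ω = blockPat sj t} := by
          congr 1
          · rw [ev, meas_cyl μ X hindep]
            refine Finset.prod_congr rfl fun t ht => ?_
            simp only [Finset.mem_Icc] at ht
            rw [if_pos ht.2]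
          · refine Finset.prod_congr rfl fun t ht => ?_
            simp only [Finset.mem_Icc] at ht
            rw [if_neg (by omega)]
      _ ≤ μ (ev X L i) * ENNReal.ofReal (p * q) ^ ((j - i) / 2) := by
          refine mul_le_mul_right ?_ _
          rw [prod_pv_tail μ X hp0.le hp1.le hq hmeas hval hdist j (by omega)]
          have hcard : j + 1 - (i + 1) = j - i := by omega
          rw [hcard, ← hmul]
          exact prod_par_upper hP hQ _ _
      _ ≤ μ (ev X L i) * μ (ev X L j)
          + μ (ev X L i) * ENNReal.ofReal (p * q) ^ ((j - i) / 2) := le_add_self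
  · -- disjoint blocks
    push_neg at hover
    have hglue : ev X L i ∩ ev X L j
        = cyl X (Finset.Icc si i ∪ Finset.Icc sj j)
            (fun t => if t ≤ i then blockPat si t else blockPat sj t) := by
      rw [cyl_union]
      congr 1
      · exact (cyl_congr X fun t ht => by
          simp only [Finset.mem_Icc] at ht
          rw [if_pos ht.2]).symm
      · exact (cyl_congr X fun t ht => by
          simp only [Finset.mem_Icc] at ht
          rw [if_neg (by omega)]).symm
    have hdisj : Disjoint (Finset.Icc si i) (Finset.Icc sj j) := by
      rw [Finset.disjoint_left]
      intro t ht ht'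
      simp only [Finset.mem_Icc] at ht ht'
      omega
    have heq : μ (ev X L i ∩ ev X L j) = μ (ev X L i) * μ (ev X L j) := by
      rw [hglue, meas_cyl μ X hindep, Finset.prod_union hdisj]
      congr 1
      · rw [ev, meas_cyl μ X hindep]
        refine Finset.prod_congr rfl fun t ht => ?_
        simp only [Finset.mem_Icc] at ht
        rw [if_pos ht.2]
      · rw [ev, meas_cyl μ X hindep]
        refine Finset.prod_congr rfl fun t ht => ?_
        simp only [Finset.mem_Icc] at ht
        rw [if_neg (by omega)]
    rw [heq]
    exact self_le_add_right _ _

end Events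

section CS

variable (μ : Measure Ω)

lemma cs_union (T : Finset ℕ) (A : ℕ → Set Ω) (hA : ∀ i, MeasurableSet (A i)) :
    (∑ i ∈ T, μ (A i)) ^ 2
      ≤ (∑ i ∈ T, ∑ j ∈ T, μ (A i ∩ A j)) * μ (⋃ i ∈ T, A i) := by
  classical
  set f : Ω → ℝ≥0∞ := fun ω => ∑ i ∈ T, (A i).indicator 1 ω with hf
  set U : Set Ω := ⋃ i ∈ T, A i with hU
  have hUm : MeasurableSet U := MeasurableSet.biUnion T.countable_toSet fun i _ => hA i
  set g : Ω → ℝ≥0∞ := U.indicator 1 with hg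
  have hfm : Measurable f := by
    apply Finset.measurable_sum
    intro i _
    exact (measurable_one : Measurable (1 : Ω → ℝ≥0∞)).indicator (hA i)
  have hgm : Measurable g := (measurable_one : Measurable (1 : Ω → ℝ≥0∞)).indicator hUm
  have hfg : f * g = f := by
    funext ω
    by_cases hω : ω ∈ U
    · simp [hg, Set.indicator_of_mem hω]
    · have hzero : f ω = 0 := by
        rw [hf]
        refine Finset.sum_eq_zero fun i hi => ?_
        have : ω ∉ A i := fun hmem => hω (Set.mem_biUnion hi hmem)
        simp [Set.indicator_of_notMem this]
      simp [hzero]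
  have hconj : Real.HolderConjugate 2 2 := Real.HolderConjugate.two_two
  have key := ENNReal.lintegral_mul_le_Lp_mul_Lq μ hconj hfm.aemeasurable hgm.aemeasurable
  rw [hfg] at key
  have hIf : ∫⁻ ω, f ω ∂μ = ∑ i ∈ T, μ (A i) := by
    rw [hf]
    rw [lintegral_finset_sum _ fun i _ =>
      (measurable_one : Measurable (1 : Ω → ℝ≥0∞)).indicator (hA i)]
    exact Finset.sum_congr rfl fun i _ => lintegral_indicator_one (hA i)
  have hIf2 : ∫⁻ ω, f ω ^ (2 : ℝ) ∂μ = ∑ i ∈ T, ∑ j ∈ T, μ (A i ∩ A j) := by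
    have hsq : ∀ ω, f ω ^ (2 : ℝ)
        = ∑ i ∈ T, ∑ j ∈ T, ((A i ∩ A j).indicator 1 ω) := by
      intro ω
      have h2 : f ω ^ (2 : ℝ) = f ω * f ω := by
        rw [show (2 : ℝ) = ((2 : ℕ) : ℝ) by norm_num, ENNReal.rpow_natCast, sq]
      rw [h2, hf, Finset.sum_mul_sum]
      refine Finset.sum_congr rfl fun i _ => Finset.sum_congr rfl fun j _ => ?_
      rw [Set.inter_indicator_one]
      rfl
    calc ∫⁻ ω, f ω ^ (2 : ℝ) ∂μ
        = ∫⁻ ω, ∑ i ∈ T, ∑ j ∈ T, ((A i ∩ A j).indicator 1 ω) ∂μ := by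
          exact lintegral_congr hsq
      _ = ∑ i ∈ T, ∑ j ∈ T, μ (A i ∩ A j) := by
          rw [lintegral_finset_sum _ fun i _ => Finset.measurable_sum _ fun j _ =>
            (measurable_one : Measurable (1 : Ω → ℝ≥0∞)).indicator ((hA i).inter (hA j))]
          refine Finset.sum_congr rfl fun i _ => ?_
          rw [lintegral_finset_sum _ fun j _ =>
            (measurable_one : Measurable (1 : Ω → ℝ≥0∞)).indicator ((hA i).inter (hA j))]
          exact Finset.sum_congr rfl fun j _ => lintegral_indicator_one ((hA i).inter (hA j))
  have hIg2 : ∫⁻ ω, g ω ^ (2 : ℝ) ∂μ = μ U := by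
    have hgg : ∀ ω, g ω ^ (2 : ℝ) = g ω := by
      intro ω
      rw [hg]
      by_cases hω : ω ∈ U
      · simp [Set.indicator_of_mem hω, ENNReal.one_rpow]
      · simp [Set.indicator_of_notMem hω, ENNReal.zero_rpow_of_pos (by norm_num : (0:ℝ) < 2)]
    rw [lintegral_congr hgg, hg, lintegral_indicator_one hUm]
  rw [hIf, hIf2, hIg2] at key
  -- key : ∑ μ A ≤ (b) ^ (1/2) * (μ U) ^ (1/2)
  have hsq := mul_le_mul' key key
  calc (∑ i ∈ T, μ (A i)) ^ 2 = (∑ i ∈ T, μ (A i)) * (∑ i ∈ T, μ (A i)) := sq _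
    _ ≤ ((∑ i ∈ T, ∑ j ∈ T, μ (A i ∩ A j)) ^ (1/2 : ℝ) * μ U ^ (1/2 : ℝ))
        * ((∑ i ∈ T, ∑ j ∈ T, μ (A i ∩ A j)) ^ (1/2 : ℝ) * μ U ^ (1/2 : ℝ)) := hsq
    _ = ((∑ i ∈ T, ∑ j ∈ T, μ (A i ∩ A j)) ^ (1/2 : ℝ)
          * (∑ i ∈ T, ∑ j ∈ T, μ (A i ∩ A j)) ^ (1/2 : ℝ))
        * (μ U ^ (1/2 : ℝ) * μ U ^ (1/2 : ℝ)) := by ring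
    _ = (∑ i ∈ T, ∑ j ∈ T, μ (A i ∩ A j)) * μ U := by
        rw [← ENNReal.rpow_add_of_nonneg _ _ (by norm_num) (by norm_num),
          ← ENNReal.rpow_add_of_nonneg _ _ (by norm_num) (by norm_num)]
        norm_num

end CS

section PairSum

variable (μ : Measure Ω) [IsProbabilityMeasure μ] {p q ρ : ℝ} (X : ℕ → Ω → ℕ) (L : ℕ → ℕ)

lemma pow_pq_le (hρ0 : 0 ≤ ρ) (hρ1 : ρ < 1) (hρpq : ρ ^ 2 = p * q) {d : ℕ} (hd : 1 ≤ d) :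
    ENNReal.ofReal (p * q) ^ (d / 2) ≤ ENNReal.ofReal (ρ ^ (d - 1)) := by
  have hpq0 : 0 ≤ p * q := hρpq ▸ sq_nonneg ρ
  rw [← ENNReal.ofReal_pow hpq0]
  apply ENNReal.ofReal_le_ofReal
  rw [← hρpq, ← pow_mul]
  exact pow_le_pow_of_le_one hρ0 hρ1.le (by omega)

lemma geo_sum_bound (hρ0 : 0 ≤ ρ) (hρ1 : ρ < 1) (T : Finset ℕ) (i : ℕ) :
    ∑ j ∈ T.filter (fun j => i < j), ENNReal.ofReal (ρ ^ (j - i - 1))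
      ≤ ENNReal.ofReal (1 - ρ)⁻¹ := by
  rw [← ENNReal.ofReal_sum_of_nonneg fun j _ => pow_nonneg hρ0 _]
  apply ENNReal.ofReal_le_ofReal
  have hinj : Set.InjOn (fun j => j - i - 1) (T.filter (fun j => i < j)) := by
    intro a ha b hb hab
    simp only [Finset.coe_filter, Set.mem_setOf_eq] at ha hb
    replace hab : a - i - 1 = b - i - 1 := hab
    omega
  rw [← Finset.sum_image (f := fun t => ρ ^ t) (g := fun j => j - i - 1)
    (fun a ha b hb hab => hinj ha hb hab)]
  exact Summable.sum_le_tsum _ (fun t _ => pow_nonneg hρ0 _)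
    (summable_geometric_of_lt_one hρ0 hρ1) |>.trans_eq
    (tsum_geometric_of_lt_one hρ0 hρ1)

variable (hp0 : 0 < p) (hp1 : p < 1) (hq : q = 1 - p)
    (hmeas : ∀ i, Measurable (X i)) (hval : ∀ i ω, X i ω ≤ 1)
    (hdist : ∀ i, μ {ω | X i ω = 1} = ENNReal.ofReal p)
    (hindep : iIndepFun X μ)
    (hρ0 : 0 ≤ ρ) (hρ1 : ρ < 1) (hρpq : ρ ^ 2 = p * q)

include hp0 hp1 hq hmeas hval hdist hindep hρ0 hρ1 hρpq

lemma pair_sum_bound (T : Finset ℕ) (hT : ∀ k ∈ T, 1 ≤ L k ∧ L k ≤ k) :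
    ∑ i ∈ T, ∑ j ∈ T, μ (ev X L i ∩ ev X L j)
      ≤ (∑ i ∈ T, μ (ev X L i)) ^ 2
        + 2 * ENNReal.ofReal (1 + (1 - ρ)⁻¹) * ∑ i ∈ T, μ (ev X L i) := by
  classical
  set w : ℕ → ℝ≥0∞ := fun d => if d = 0 then 1 else ENNReal.ofReal (ρ ^ (d - 1)) with hw
  set K : ℝ≥0∞ := ENNReal.ofReal (1 + (1 - ρ)⁻¹) with hK
  set u : ℕ → ℕ → ℝ≥0∞ := fun i j => if i ≤ j then μ (ev X L i) * w (j - i) else 0 with hu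
  -- pairwise bound
  have hpair : ∀ i ∈ T, ∀ j ∈ T,
      μ (ev X L i ∩ ev X L j) ≤ μ (ev X L i) * μ (ev X L j) + (u i j + u j i) := by
    intro i hi j hj
    rcases lt_trichotomy i j with hij | hij | hij
    · have h := meas_ev_pair μ X L hp0 hp1 hq hmeas hval hdist hindep hij
        (hT i hi).1 (hT i hi).2 (hT j hj).1 (hT j hj).2
      refine h.trans (add_le_add_right ?_ _)
      have : u i j = μ (ev X L i) * w (j - i) := by rw [hu]; simp [hij.le]
      rw [this]
      refine le_add_right (mul_le_mul_right ?_ _)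
      rw [hw]
      simp only [show j - i ≠ 0 by omega, if_neg]
      exact pow_pq_le hρ0 hρ1 hρpq (by omega)
    · subst hij
      rw [Set.inter_self]
      have : u i i = μ (ev X L i) := by rw [hu, hw]; simp
      rw [this]
      calc μ (ev X L i) ≤ μ (ev X L i) + (μ (ev X L i) * μ (ev X L i) + μ (ev X L i)) :=
            le_add_self.trans (by rw [add_comm]; exact le_add_self)
        _ = μ (ev X L i) * μ (ev X L i) + (μ (ev X L i) + μ (ev X L i)) := by ring
    · have h := meas_ev_pair μ X L hp0 hp1 hq hmeas hval hdist hindep hij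
        (hT j hj).1 (hT j hj).2 (hT i hi).1 (hT i hi).2
      rw [Set.inter_comm]
      refine h.trans ?_
      rw [mul_comm]
      refine add_le_add_right ?_ _
      have : u j i = μ (ev X L j) * w (i - j) := by rw [hu]; simp [hij.le]
      rw [this]
      refine le_add_left (mul_le_mul_right ?_ _)
      rw [hw]
      simp only [show i - j ≠ 0 by omega, if_neg]
      exact pow_pq_le hρ0 hρ1 hρpq (by omega)
  -- inner u-sum bound
  have husum : ∀ i ∈ T, ∑ j ∈ T, u i j ≤ μ (ev X L i) * K := by
    intro i hi
    have h1 : ∑ j ∈ T, u i j = ∑ j ∈ T.filter (fun j => i ≤ j), μ (ev X L i) * w (j - i) := by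
      rw [Finset.sum_filter]
    rw [h1, ← Finset.mul_sum]
    refine mul_le_mul_right ?_ _
    have hsplit : T.filter (fun j => i ≤ j) ⊆ (T.filter (fun j => i < j)) ∪ {i} := by
      intro j hj
      simp only [Finset.mem_filter, Finset.mem_union, Finset.mem_singleton] at hj ⊢
      rcases eq_or_lt_of_le hj.2 with h | h
      · right; omega
      · left; exact ⟨hj.1, h⟩
    calc ∑ j ∈ T.filter (fun j => i ≤ j), w (j - i)
        ≤ ∑ j ∈ (T.filter (fun j => i < j)) ∪ {i}, w (j - i) :=
          Finset.sum_le_sum_of_subset hsplit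
      _ = ∑ j ∈ T.filter (fun j => i < j), w (j - i) + ∑ j ∈ ({i} : Finset ℕ), w (j - i) :=
          Finset.sum_union (by
            simp only [Finset.disjoint_singleton_right, Finset.mem_filter]
            intro h
            exact absurd h.2 (lt_irrefl i))
      _ ≤ ENNReal.ofReal (1 - ρ)⁻¹ + 1 := by
          refine add_le_add ?_ ?_
          · refine le_trans (le_of_eq (Finset.sum_congr rfl fun j hj => ?_))
              (geo_sum_bound hρ0 hρ1 T i)
            simp only [Finset.mem_filter] at hj
            rw [hw]
            simp [show j - i ≠ 0 by omega]
          · simp [hw]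
      _ = K := by
          rw [hK, ENNReal.ofReal_add (by linarith) (inv_nonneg.mpr (by linarith)), ENNReal.ofReal_one,
            add_comm]
  have hswap : ∑ i ∈ T, ∑ j ∈ T, u j i = ∑ i ∈ T, ∑ j ∈ T, u i j := Finset.sum_comm
  have h1 : ∑ i ∈ T, ∑ j ∈ T, u i j ≤ K * ∑ i ∈ T, μ (ev X L i) := by
    calc ∑ i ∈ T, ∑ j ∈ T, u i j ≤ ∑ i ∈ T, μ (ev X L i) * K := Finset.sum_le_sum husum
      _ = K * ∑ i ∈ T, μ (ev X L i) := by rw [← Finset.sum_mul, mul_comm]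
  calc ∑ i ∈ T, ∑ j ∈ T, μ (ev X L i ∩ ev X L j)
      ≤ ∑ i ∈ T, ∑ j ∈ T, (μ (ev X L i) * μ (ev X L j) + (u i j + u j i)) :=
        Finset.sum_le_sum fun i hi => Finset.sum_le_sum fun j hj => hpair i hi j hj
    _ = (∑ i ∈ T, ∑ j ∈ T, μ (ev X L i) * μ (ev X L j))
        + ((∑ i ∈ T, ∑ j ∈ T, u i j) + (∑ i ∈ T, ∑ j ∈ T, u j i)) := by
        simp only [Finset.sum_add_distrib]
    _ ≤ (∑ i ∈ T, μ (ev X L i)) ^ 2 + 2 * K * ∑ i ∈ T, μ (ev X L i) := by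
        have hab : ∑ i ∈ T, ∑ j ∈ T, μ (ev X L i) * μ (ev X L j)
            = (∑ i ∈ T, μ (ev X L i)) ^ 2 := by
          rw [sq, Finset.sum_mul_sum]
        rw [hab, hswap]
        refine add_le_add_right ?_ _
        calc (∑ i ∈ T, ∑ j ∈ T, u i j) + (∑ i ∈ T, ∑ j ∈ T, u i j)
            ≤ K * (∑ i ∈ T, μ (ev X L i)) + K * (∑ i ∈ T, μ (ev X L i)) := add_le_add h1 h1
          _ = 2 * K * ∑ i ∈ T, μ (ev X L i) := by ring

end PairSum

section Diverge

variable {p q : ℝ} (γ : ℕ → ℝ)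

lemma exists_big_T (hpq0 : 0 < p * q) (hpq1 : p * q < 1)
    (hγ : ∀ n : ℕ, 1 ≤ n → 0 < γ n)
    (hdiv : ¬ Summable fun n : ℕ => (p * q) ^ (γ (n + 1) / 2))
    (m : ℕ) (R : ℝ) :
    ∃ T : Finset ℕ, (∀ k ∈ T, (1 ≤ k ∧ ⌈γ k⌉₊ ≤ k) ∧ m ≤ k)
      ∧ R ≤ ∑ k ∈ T, (p * q) * (p * q) ^ (γ k / 2) := by
  classical
  set g : ℕ → ℝ := fun k => (p * q) ^ (γ k / 2) with hg
  have hgpos : ∀ k, 0 < g k := fun k => Real.rpow_pos_of_pos hpq0 _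
  set Pm : ℕ → Prop := fun k => (1 ≤ k ∧ ⌈γ k⌉₊ ≤ k) ∧ m ≤ k with hPm
  have hgdiv : ¬ Summable g := by
    intro h
    exact hdiv (((_root_.summable_nat_add_iff 1).mpr h).congr fun n => rfl)
  set ρ : ℝ := (p * q) ^ ((1 : ℝ) / 2) with hρ
  have hρ0 : 0 < ρ := Real.rpow_pos_of_pos hpq0 _
  have hρ1 : ρ < 1 := Real.rpow_lt_one hpq0.le hpq1 (by norm_num)
  have hFsummable : Summable (fun k => if Pm k then 0 else g k) := by
    rw [← _root_.summable_nat_add_iff (m + 1)]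
    have hbound : ∀ n : ℕ, (if Pm (n + (m + 1)) then 0 else g (n + (m + 1))) ≤ ρ ^ n := by
      intro n
      split
      · positivity
      · next hnot =>
        set k := n + (m + 1) with hk
        have hk1 : 1 ≤ k := by omega
        have hkm : m ≤ k := by omega
        have hceil : k < ⌈γ k⌉₊ := by
          by_contra hcon
          exact hnot ⟨⟨hk1, by omega⟩, hkm⟩
        have hγk : (k : ℝ) < γ k := Nat.lt_ceil.mp hceil
        have h1 : g k ≤ (p * q) ^ ((k : ℝ) / 2) :=
          Real.rpow_le_rpow_of_exponent_ge hpq0 hpq1.le (by linarith)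
        have h2 : (p * q) ^ ((k : ℝ) / 2) = ρ ^ k := by
          rw [hρ, ← Real.rpow_natCast ((p * q) ^ ((1:ℝ)/2)) k, ← Real.rpow_mul hpq0.le]
          congr 1
          ring
        have h3 : ρ ^ k ≤ ρ ^ n := pow_le_pow_of_le_one hρ0.le hρ1.le (by omega)
        calc g k ≤ (p * q) ^ ((k : ℝ) / 2) := h1
          _ = ρ ^ k := h2
          _ ≤ ρ ^ n := h3
    exact Summable.of_nonneg_of_le
      (fun n => by
        split
        · exact le_rfl
        · exact (hgpos _).le) hbound
      (summable_geometric_of_lt_one hρ0.le hρ1)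
  have hGdiv : ¬ Summable (fun k => if Pm k then g k else 0) := by
    intro h
    apply hgdiv
    have := h.add hFsummable
    refine this.congr fun k => ?_
    by_cases hk : Pm k
    · rw [if_pos hk, if_pos hk, add_zero]
    · rw [if_neg hk, if_neg hk, zero_add]
  have htend := (not_summable_iff_tendsto_nat_atTop_of_nonneg
    (f := fun k => if Pm k then g k else 0)
    (fun k => by
      split
      · exact (hgpos _).le
      · exact le_rfl)).mp hGdiv
  obtain ⟨n, hn⟩ := (htend.eventually_ge_atTop (R / (p * q))).exists
  refine ⟨(Finset.range n).filter Pm, fun k hk => (Finset.mem_filter.mp hk).2, ?_⟩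
  have hsum : ∑ k ∈ (Finset.range n).filter Pm, g k
      = ∑ k ∈ Finset.range n, (if Pm k then g k else 0) := Finset.sum_filter Pm g
  have h4 : R / (p * q) ≤ ∑ k ∈ (Finset.range n).filter Pm, g k := by rw [hsum]; exact hn
  calc R = (p * q) * (R / (p * q)) := by rw [mul_div_assoc', eq_div_iff hpq0.ne', mul_comm]
    _ ≤ (p * q) * ∑ k ∈ (Finset.range n).filter Pm, g k :=
        mul_le_mul_of_nonneg_left h4 hpq0.le
    _ = ∑ k ∈ (Finset.range n).filter Pm, (p * q) * g k := Finset.mul_sum _ _ _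

end Diverge

section MainMeasure

variable (μ : Measure Ω) [IsProbabilityMeasure μ] {p q : ℝ} (X : ℕ → Ω → ℕ) (γ : ℕ → ℝ)

variable (hp0 : 0 < p) (hp1 : p < 1) (hq : q = 1 - p)
    (hmeas : ∀ i, Measurable (X i)) (hval : ∀ i ω, X i ω ≤ 1)
    (hdist : ∀ i, μ {ω | X i ω = 1} = ENNReal.ofReal p)
    (hindep : iIndepFun X μ)

include hp0 hp1 hq hmeas hval hdist hindep

lemma meas_ev_lower_real {n : ℕ} (hγn : 0 < γ n) (hn : ⌈γ n⌉₊ ≤ n) :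
    ENNReal.ofReal ((p * q) * (p * q) ^ (γ n / 2))
      ≤ μ (ev X (fun j => ⌈γ j⌉₊) n) := by
  have hq0 : 0 < q := by rw [hq]; linarith
  have hpq0 : 0 < p * q := mul_pos hp0 hq0
  have hpq1 : p * q < 1 := by nlinarith
  have h1 : 1 ≤ ⌈γ n⌉₊ := Nat.ceil_pos.mpr hγn
  refine le_trans ?_ (meas_ev_lower μ X (fun j => ⌈γ j⌉₊) hp0 hp1 hq hmeas hval hdist hindep h1 hn)
  rw [← ENNReal.ofReal_pow hpq0.le]
  apply ENNReal.ofReal_le_ofReal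
  set k : ℕ := (⌈γ n⌉₊ + 1) / 2 with hk
  have hcast : ((p * q) ^ k : ℝ) = (p * q) ^ ((k : ℕ) : ℝ) := (Real.rpow_natCast _ _).symm
  rw [hcast]
  have hkle : ((k : ℕ) : ℝ) ≤ 1 + γ n / 2 := by
    have hceil : (⌈γ n⌉₊ : ℝ) < γ n + 1 := Nat.ceil_lt_add_one hγn.le
    have hdivle : ((((⌈γ n⌉₊ + 1) / 2 : ℕ)) : ℝ) ≤ ((⌈γ n⌉₊ : ℝ) + 1) / 2 := by
      have := Nat.cast_div_le (m := ⌈γ n⌉₊ + 1) (n := 2) (α := ℝ)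
      simpa using this
    calc ((k : ℕ) : ℝ) ≤ ((⌈γ n⌉₊ : ℝ) + 1) / 2 := hdivle
      _ ≤ (γ n + 1 + 1) / 2 := by linarith
      _ = 1 + γ n / 2 := by ring
  calc (p * q) * (p * q) ^ (γ n / 2) = (p * q) ^ (1 + γ n / 2 : ℝ) := by
        rw [Real.rpow_add hpq0, Real.rpow_one]
    _ ≤ (p * q) ^ ((k : ℕ) : ℝ) :=
        Real.rpow_le_rpow_of_exponent_ge hpq0 hpq1.le hkle

lemma meas_biUnion_one
    (hγ : ∀ n : ℕ, 1 ≤ n → 0 < γ n)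
    (hdiv : ¬ Summable fun n : ℕ => (p * q) ^ (γ (n + 1) / 2))
    (m : ℕ) :
    μ (⋃ k ∈ {k : ℕ | (1 ≤ k ∧ ⌈γ k⌉₊ ≤ k) ∧ m ≤ k},
        ev X (fun j => ⌈γ j⌉₊) k) = 1 := by
  classical
  have hq0 : 0 < q := by rw [hq]; linarith
  have hpq0 : 0 < p * q := mul_pos hp0 hq0
  have hpq1 : p * q < 1 := by nlinarith
  set L : ℕ → ℕ := fun j => ⌈γ j⌉₊ with hL
  set U : Set Ω := ⋃ k ∈ {k : ℕ | (1 ≤ k ∧ ⌈γ k⌉₊ ≤ k) ∧ m ≤ k}, ev X L k with hU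
  have hUne : μ U ≠ ∞ := measure_ne_top μ U
  set ρ : ℝ := Real.sqrt (p * q) with hρ
  have hρ0 : 0 ≤ ρ := Real.sqrt_nonneg _
  have hρpq : ρ ^ 2 = p * q := Real.sq_sqrt hpq0.le
  have hρ1 : ρ < 1 := by nlinarith [Real.sq_sqrt hpq0.le, Real.sqrt_nonneg (p * q)]
  set c : ℝ≥0∞ := 2 * ENNReal.ofReal (1 + (1 - ρ)⁻¹) with hc
  have hcne : c ≠ ∞ := by
    rw [hc]
    exact ENNReal.mul_ne_top (by norm_num) ENNReal.ofReal_ne_top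
  set cr : ℝ := c.toReal with hcr
  have hcr0 : 0 ≤ cr := ENNReal.toReal_nonneg
  set u : ℝ := (μ U).toReal with hu
  have hu1 : u ≤ 1 := by
    rw [hu]
    exact ENNReal.toReal_le_of_le_ofReal zero_le_one (by simpa using prob_le_one (μ := μ) (s := U))
  -- main estimate
  have hmain : ∀ R : ℝ, 0 < R → (1 - u) * R ≤ cr := by
    intro R hR
    obtain ⟨T, hT, hTsum⟩ := exists_big_T γ hpq0 hpq1 hγ hdiv m R
    set a : ℝ≥0∞ := ∑ k ∈ T, μ (ev X L k) with ha
    have hane : a ≠ ∞ := by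
      rw [ha]
      exact (lt_of_le_of_lt (Finset.sum_le_sum fun k _ => prob_le_one)
        (by simp [lt_top_iff_ne_top])).ne
    have haR : ENNReal.ofReal R ≤ a := by
      calc ENNReal.ofReal R
          ≤ ENNReal.ofReal (∑ k ∈ T, (p * q) * (p * q) ^ (γ k / 2)) :=
            ENNReal.ofReal_le_ofReal hTsum
        _ = ∑ k ∈ T, ENNReal.ofReal ((p * q) * (p * q) ^ (γ k / 2)) :=
            ENNReal.ofReal_sum_of_nonneg fun k _ => by positivity
        _ ≤ a := Finset.sum_le_sum fun k hk => by
            have hkk := hT k hk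
            exact meas_ev_lower_real μ X γ hp0 hp1 hq hmeas hval hdist hindep
              (hγ k hkk.1.1) hkk.1.2
    have hmeasA : ∀ i, MeasurableSet (ev X L i) := fun i =>
      measurableSet_cyl X hmeas _ _
    have hsub : (⋃ i ∈ T, ev X L i) ⊆ U := by
      rw [hU]
      refine Set.iUnion₂_subset fun i hi => ?_
      exact Set.subset_biUnion_of_mem (hT i hi)
    have hCS : a ^ 2 ≤ (a ^ 2 + c * a) * μ U := by
      calc a ^ 2 ≤ (∑ i ∈ T, ∑ j ∈ T, μ (ev X L i ∩ ev X L j)) * μ (⋃ i ∈ T, ev X L i) :=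
            cs_union μ T (ev X L) hmeasA
        _ ≤ (a ^ 2 + c * a) * μ U := by
            refine mul_le_mul' ?_ (measure_mono hsub)
            have := pair_sum_bound μ X L hp0 hp1 hq hmeas hval hdist hindep
              hρ0 hρ1 hρpq T (fun k hk => ⟨Nat.ceil_pos.mpr (hγ k (hT k hk).1.1), (hT k hk).1.2⟩)
            calc ∑ i ∈ T, ∑ j ∈ T, μ (ev X L i ∩ ev X L j)
                ≤ a ^ 2 + 2 * ENNReal.ofReal (1 + (1 - ρ)⁻¹) * a := this
              _ = a ^ 2 + c * a := by rw [hc]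
    set x : ℝ := a.toReal with hx
    have hxR : R ≤ x := by
      rw [hx]
      exact (ENNReal.ofReal_le_iff_le_toReal hane).mp haR
    have hx0 : 0 < x := lt_of_lt_of_le hR hxR
    have hfin : (a ^ 2 + c * a) * μ U ≠ ∞ :=
      ENNReal.mul_ne_top
        (ENNReal.add_ne_top.mpr ⟨ENNReal.pow_ne_top hane,
          ENNReal.mul_ne_top hcne hane⟩) hUne
    have hCSr : x ^ 2 ≤ (x ^ 2 + cr * x) * u := by
      have := ENNReal.toReal_mono hfin hCS
      rw [ENNReal.toReal_mul, ENNReal.toReal_add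
          (ENNReal.pow_ne_top hane) (ENNReal.mul_ne_top hcne hane),
        ENNReal.toReal_pow, ENNReal.toReal_mul] at this
      exact this
    -- real arithmetic
    have h6 : x * (x * (1 - u)) ≤ x * cr := by
      have hu0 : 0 ≤ u := ENNReal.toReal_nonneg
      nlinarith [mul_le_mul_of_nonneg_left hu1 (mul_nonneg hcr0 hx0.le)]
    have h5 : x * (1 - u) ≤ cr := le_of_mul_le_mul_left h6 hx0
    calc (1 - u) * R ≤ (1 - u) * x := by
          refine mul_le_mul_of_nonneg_left hxR (by linarith)
      _ = x * (1 - u) := by ring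
      _ ≤ cr := h5
  -- conclude u ≥ 1
  have hu_ge : 1 ≤ u := by
    by_contra hlt
    push_neg at hlt
    have hpos : 0 < 1 - u := by linarith
    have := hmain ((cr + 1) / (1 - u)) (by positivity)
    rw [mul_div_cancel₀ _ (by linarith : (1 : ℝ) - u ≠ 0)] at this
    linarith
  refine le_antisymm prob_le_one ?_
  calc (1 : ℝ≥0∞) = ENNReal.ofReal 1 := ENNReal.ofReal_one.symm
    _ ≤ ENNReal.ofReal u := ENNReal.ofReal_le_ofReal hu_ge
    _ = μ U := ENNReal.ofReal_toReal hUne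

end MainMeasure

section Deterministic

lemma switchCount_of_ev (X : ℕ → Ω → ℕ) (γ : ℕ → ℝ) {n : ℕ}
    (h1 : 1 ≤ ⌈γ n⌉₊) (hn : ⌈γ n⌉₊ ≤ n) {ω : Ω}
    (hω : ω ∈ ev X (fun j => ⌈γ j⌉₊) n) :
    switchCount X (⌈γ n⌉₊) (n - ⌈γ n⌉₊ + 1) ω = ⌈γ n⌉₊ - 1 := by
  set L : ℕ := ⌈γ n⌉₊ with hL
  set s : ℕ := n - L + 1 with hs
  have hval : ∀ t, s ≤ t → t ≤ n → X t ω = (t - s + 1) % 2 := by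
    intro t ht1 ht2
    have := hω
    simp only [ev, cyl, Set.mem_iInter, Set.mem_setOf_eq] at this
    exact this t (Finset.mem_Icc.mpr ⟨ht1, ht2⟩)
  rw [switchCount]
  have hcard : (Finset.Icc (s + 1) (L + s - 1)).card = L - 1 := by
    rw [Nat.card_Icc]; omega
  have hterm : ∀ i ∈ Finset.Icc (s + 1) (L + s - 1),
      (1 - X (i - 1) ω) * X i ω + X (i - 1) ω * (1 - X i ω) = 1 := by
    intro i hi
    simp only [Finset.mem_Icc] at hi
    have hi1 : s ≤ i - 1 := by omega
    have hi2 : i - 1 ≤ n := by omega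
    have hi3 : s ≤ i := by omega
    have hi4 : i ≤ n := by omega
    rw [hval (i - 1) hi1 hi2, hval i hi3 hi4]
    have harg : i - 1 - s + 1 = i - s := by omega
    rw [harg]
    rcases Nat.even_or_odd (i - s) with h | h
    · have h0 : (i - s) % 2 = 0 := Nat.even_iff.mp h
      have h1' : (i - s + 1) % 2 = 1 := by omega
      rw [h0, h1']
    · have h0 : (i - s) % 2 = 1 := Nat.odd_iff.mp h
      have h1' : (i - s + 1) % 2 = 0 := by omega
      rw [h0, h1']
  rw [Finset.sum_congr rfl hterm, Finset.sum_const, hcard, smul_eq_mul, mul_one]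

lemma gamma_le_longestSwitch (X : ℕ → Ω → ℕ) (γ : ℕ → ℝ) {n : ℕ}
    (hγn : 0 < γ n) (hn : ⌈γ n⌉₊ ≤ n) {ω : Ω}
    (hω : ω ∈ ev X (fun j => ⌈γ j⌉₊) n) :
    γ n - 1 ≤ (longestSwitch X n 1 ω : ℝ) := by
  set L : ℕ := ⌈γ n⌉₊ with hL
  have h1 : 1 ≤ L := Nat.ceil_pos.mpr hγn
  have hsw := switchCount_of_ev X γ h1 hn hω
  have hle : L - 1 ≤ longestSwitch X n 1 ω := by
    rw [longestSwitch]
    refine Finset.le_sup (f := fun n' => n' - 1) ?_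
    simp only [Finset.mem_filter, Finset.mem_Icc]
    exact ⟨⟨h1, hn⟩, n - L + 1, ⟨by omega, by omega⟩, hsw⟩
  have hcast : ((L - 1 : ℕ) : ℝ) = (L : ℝ) - 1 := by
    rw [Nat.cast_sub h1, Nat.cast_one]
  calc γ n - 1 ≤ (L : ℝ) - 1 := by
        have := Nat.le_ceil (γ n)
        simp only [← hL] at this
        linarith
    _ = ((L - 1 : ℕ) : ℝ) := hcast.symm
    _ ≤ (longestSwitch X n 1 ω : ℝ) := Nat.cast_le.mpr hle

end Deterministic

end LSAux

theorem longestSwitch_ge_gamma_infinitely_often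
    {Ω : Type*} [MeasurableSpace Ω] (μ : Measure Ω) [IsProbabilityMeasure μ]
    (p q : ℝ) (hp0 : 0 < p) (hp1 : p < 1) (hq : q = 1 - p)
    (X : ℕ → Ω → ℕ)
    (hmeas : ∀ i, Measurable (X i))
    (hval : ∀ i ω, X i ω ≤ 1)
    (hdist : ∀ i, μ {ω | X i ω = 1} = ENNReal.ofReal p)
    (hindep : iIndepFun X μ)
    (γ : ℕ → ℝ) (hγ : ∀ n : ℕ, 1 ≤ n → 0 < γ n)
    (hdiv : ¬ Summable fun n : ℕ => (p * q) ^ (γ (n + 1) / 2)) :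
    ∀ᵐ ω ∂μ, ∃ Ns : ℕ → ℕ, StrictMono Ns ∧ (∀ i : ℕ, 1 ≤ Ns i) ∧ ∀ i : ℕ,
      γ (Ns i) - 1 ≤ (longestSwitch X (Ns i) 1 ω : ℝ) := by
  classical
  set L : ℕ → ℕ := fun j => ⌈γ j⌉₊ with hL
  have hae : ∀ᵐ ω ∂μ, ∀ m : ℕ,
      ω ∈ ⋃ k ∈ {k : ℕ | (1 ≤ k ∧ ⌈γ k⌉₊ ≤ k) ∧ m ≤ k}, LSAux.ev X L k := by
    rw [ae_all_iff]
    intro m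
    have h1 := LSAux.meas_biUnion_one μ X γ hp0 hp1 hq hmeas hval hdist hindep hγ hdiv m
    have hUm : MeasurableSet
        (⋃ k ∈ {k : ℕ | (1 ≤ k ∧ ⌈γ k⌉₊ ≤ k) ∧ m ≤ k}, LSAux.ev X L k) :=
      MeasurableSet.biUnion (Set.to_countable _) fun k _ =>
        LSAux.measurableSet_cyl X hmeas _ _
    have hcompl : μ (⋃ k ∈ {k : ℕ | (1 ≤ k ∧ ⌈γ k⌉₊ ≤ k) ∧ m ≤ k}, LSAux.ev X L k)ᶜ = 0 := by
      rw [measure_compl hUm (measure_ne_top μ _), measure_univ, h1, tsub_self]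
    rw [MeasureTheory.ae_iff]
    exact hcompl
  filter_upwards [hae] with ω hω
  set P : ℕ → Prop := fun k => 1 ≤ k ∧ γ k - 1 ≤ (longestSwitch X k 1 ω : ℝ) with hP
  have hinf : (setOf P).Infinite := by
    apply Set.infinite_of_forall_exists_gt
    intro a
    have hmem := hω (a + 1)
    simp only [Set.mem_iUnion, Set.mem_setOf_eq] at hmem
    obtain ⟨k, ⟨⟨hk1, hk2⟩, hk3⟩, hkev⟩ := hmem
    exact ⟨k, ⟨hk1, LSAux.gamma_le_longestSwitch X γ (hγ k hk1) hk2 hkev⟩, by omega⟩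
  exact ⟨Nat.nth P, Nat.nth_strictMono hinf, fun i => (Nat.nth_mem_of_infinite hinf i).1,
    fun i => (Nat.nth_mem_of_infinite hinf i).2⟩
end

section
/- Let N, K ∈ ℕ with N ≥ 2K. Then P(M_N < K−1) ≤ ( 1 − (K+2)(pq)^{K/2} + 2(pq)^{K} )^{(⌊N/K⌋ − 1)/2}. -/
open MeasureTheory ProbabilityTheory Filter
open scoped Classical

namespace SwitchAux

open scoped ENNReal

variable {Ω : Type*} [MeasurableSpace Ω]

/-- Pattern event: trials `X_s, …, X_{s+L-1}` take prescribed values `v 0, …, v (L-1)`. -/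
def patSet (X : ℕ → Ω → ℕ) (s L : ℕ) (v : ℕ → ℕ) : Set Ω :=
  {ω | ∀ t, t < L → X (s + t) ω = v t}

noncomputable def D (p q : ℝ) (a : ℕ) : ℝ≥0∞ :=
  if a = 1 then ENNReal.ofReal p else ENNReal.ofReal q

lemma patSet_eq_biInter (X : ℕ → Ω → ℕ) (s L : ℕ) (v : ℕ → ℕ) :
    patSet X s L v = ⋂ t ∈ Finset.range L, (X (s + t)) ⁻¹' {v t} := by
  ext ω
  simp [patSet, Set.mem_iInter]

lemma measurableSet_patSet {X : ℕ → Ω → ℕ} (hmeas : ∀ i, Measurable (X i))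
    (s L : ℕ) (v : ℕ → ℕ) : MeasurableSet (patSet X s L v) := by
  rw [patSet_eq_biInter]
  exact Finset.measurableSet_biInter _ fun t _ => (hmeas _) (measurableSet_singleton _)

section Meas
variable {μ : Measure Ω} [IsProbabilityMeasure μ] {p q : ℝ} {X : ℕ → Ω → ℕ}

lemma meas_coord (hp0 : 0 ≤ p) (hp1 : p ≤ 1) (hq : q = 1 - p)
    (hmeas : ∀ i, Measurable (X i)) (hval : ∀ i ω, X i ω ≤ 1)
    (hdist : ∀ i, μ {ω | X i ω = 1} = ENNReal.ofReal p)
    (i a : ℕ) (ha : a ≤ 1) : μ (X i ⁻¹' {a}) = D p q a := by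
  have h1 : (X i ⁻¹' {1} : Set Ω) = {ω | X i ω = 1} := rfl
  interval_cases a
  · have h0 : (X i ⁻¹' {0} : Set Ω) = {ω | X i ω = 1}ᶜ := by
      ext ω
      have := hval i ω
      simp only [Set.mem_preimage, Set.mem_singleton_iff, Set.mem_compl_iff, Set.mem_setOf_eq]
      omega
    have hms : MeasurableSet {ω | X i ω = 1} := by
      rw [← h1]; exact (hmeas i) (measurableSet_singleton _)
    rw [h0, prob_compl_eq_one_sub hms, hdist i]
    have : ENNReal.ofReal q = 1 - ENNReal.ofReal p := by
      rw [hq, ENNReal.ofReal_sub _ hp0, ENNReal.ofReal_one]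
    simp [D, this]
  · rw [h1, hdist i]; simp [D]

lemma meas_patSet (hp0 : 0 ≤ p) (hp1 : p ≤ 1) (hq : q = 1 - p)
    (hmeas : ∀ i, Measurable (X i)) (hval : ∀ i ω, X i ω ≤ 1)
    (hdist : ∀ i, μ {ω | X i ω = 1} = ENNReal.ofReal p)
    (hindep : iIndepFun X μ)
    (s L : ℕ) (v : ℕ → ℕ) (hv : ∀ t, t < L → v t ≤ 1) :
    μ (patSet X s L v) = ∏ t ∈ Finset.range L, D p q (v t) := by
  have key := hindep.measure_inter_preimage_eq_mul
      ((Finset.range L).image (fun t => s + t))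
      (sets := fun i => {v (i - s)}) (fun i _ => measurableSet_singleton _)
  have hset : patSet X s L v
      = ⋂ i ∈ (Finset.range L).image (fun t => s + t), X i ⁻¹' {v (i - s)} := by
    ext ω
    simp only [patSet, Set.mem_setOf_eq, Set.mem_iInter, Finset.mem_image, Finset.mem_range,
      Set.mem_preimage, Set.mem_singleton_iff]
    constructor
    · rintro h i ⟨t, ht, rfl⟩
      have : s + t - s = t := by omega
      rw [this]; exact h t ht
    · intro h t ht
      have := h (s + t) ⟨t, ht, rfl⟩
      have h2 : s + t - s = t := by omega
      rwa [h2] at this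
  rw [hset, key, Finset.prod_image (by intro a _ b _ h; exact Nat.add_left_cancel h)]
  refine Finset.prod_congr rfl fun t ht => ?_
  have h2 : s + t - s = t := by omega
  beta_reduce
  rw [h2, meas_coord hp0 hp1 hq hmeas hval hdist _ _ (hv t (Finset.mem_range.1 ht))]

lemma prodD_alt (p q : ℝ) (m : ℕ) : ∀ (ε : ℕ),
    ∏ t ∈ Finset.range m, D p q ((ε + t) % 2)
      = (ENNReal.ofReal p * ENNReal.ofReal q) ^ (m / 2)
        * (if m % 2 = 1 then D p q (ε % 2) else 1) := by
  induction m with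
  | zero => simp
  | succ m ih =>
    intro ε
    rw [Finset.prod_range_succ, ih ε]
    have hd0 : D p q 0 = ENNReal.ofReal q := by simp [D]
    have hd1 : D p q 1 = ENNReal.ofReal p := by simp [D]
    rcases Nat.even_or_odd m with hm | hm
    · obtain ⟨b, rfl⟩ := hm
      have h1 : (b + b) % 2 = 0 := by omega
      have h2 : (b + b + 1) % 2 = 1 := by omega
      have h3 : (b + b + 1) / 2 = (b + b) / 2 := by omega
      have h4 : (ε + (b + b)) % 2 = ε % 2 := by omega
      simp [h1, h2, h3, h4]
    · obtain ⟨b, rfl⟩ := hm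
      have h1 : (2 * b + 1) % 2 = 1 := by omega
      have h2 : (2 * b + 1 + 1) % 2 = 0 := by omega
      have h3 : (2 * b + 1 + 1) / 2 = (2 * b + 1) / 2 + 1 := by omega
      have h4 : (ε + (2 * b + 1)) % 2 = (ε + 1) % 2 := by omega
      have hD : D p q (ε % 2) * D p q ((ε + 1) % 2)
          = ENNReal.ofReal p * ENNReal.ofReal q := by
        have : ε % 2 = 0 ∨ ε % 2 = 1 := by omega
        rcases this with h | h
        · have h' : (ε + 1) % 2 = 1 := by omega
          rw [h, h', hd0, hd1, mul_comm]
        · have h' : (ε + 1) % 2 = 0 := by omega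
          rw [h, h', hd0, hd1]
      rw [h1, h2, h3, h4]
      simp only [if_pos rfl, if_neg (by omega : ¬(0 = 1)), if_true]
      rw [pow_succ, mul_one, mul_assoc, hD]

lemma exists_code : ∀ (n : ℕ) (f : ℕ → ℕ), (∀ t, t < n → f t ≤ 1) →
    ∃ m, m < 2 ^ n ∧ ∀ t, t < n → (m.testBit t).toNat = f t := by
  intro n
  induction n with
  | zero => exact fun f _ => ⟨0, by simp, fun t ht => by omega⟩
  | succ n ih =>
    intro f hf
    obtain ⟨m', hm', hbit⟩ := ih (fun t => f (t + 1)) (fun t ht => hf _ (by omega))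
    have hf0 : f 0 ≤ 1 := hf 0 (by omega)
    refine ⟨f 0 + 2 * m', ?_, ?_⟩
    · have h2 : 2 ^ (n + 1) = 2 ^ n * 2 := pow_succ 2 n
      omega
    · intro t ht
      match t with
      | 0 =>
        rw [Nat.testBit_zero]
        have : (f 0 + 2 * m') % 2 = f 0 := by omega
        rw [this]
        interval_cases h : f 0 <;> simp
      | t + 1 =>
        rw [Nat.testBit_add_one]
        have : (f 0 + 2 * m') / 2 = m' := by omega
        rw [this]
        exact hbit t (by omega)

end Meas

/-- alternating pattern values -/
def altv (ε : ℕ) : ℕ → ℕ := fun t => (ε + t) % 2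

/-- event: some window of `K` consecutive trials among `X_l, …, X_{l+2K-1}` alternates -/
def runEv (X : ℕ → Ω → ℕ) (K l : ℕ) : Set Ω :=
  ⋃ i ∈ Finset.range (K + 1), ⋃ ε ∈ Finset.range 2, patSet X (l + i) K (altv ε)

def Cev (X : ℕ → Ω → ℕ) (K l : ℕ) : Set Ω := (runEv X K l)ᶜ

def batom (X : ℕ → Ω → ℕ) (n l m : ℕ) : Set Ω :=
  patSet X l n (fun t => (m.testBit t).toNat)

def good (K m : ℕ) : Prop :=
  ∀ i, i < K + 1 → ∀ ε, ε < 2 → ∃ t, t < K ∧ (m.testBit (i + t)).toNat ≠ (ε + t) % 2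

noncomputable def goodF (K : ℕ) : Finset ℕ := (Finset.range (2 ^ (2 * K))).filter (good K)

lemma Cev_eq {X : ℕ → Ω → ℕ} (hval : ∀ i ω, X i ω ≤ 1) (K l : ℕ) :
    Cev X K l = ⋃ m ∈ goodF K, batom X (2 * K) l m := by
  ext ω
  constructor
  · intro hω
    have hrun : ω ∉ runEv X K l := hω
    obtain ⟨m, hm, hbit⟩ := exists_code (2 * K) (fun t => X (l + t) ω)
      (fun t _ => hval _ ω)
    have hgood : good K m := by
      intro i hi ε hε
      by_contra h
      push_neg at h
      apply hrun
      refine Set.mem_biUnion (Finset.mem_range.2 hi) ?_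
      refine Set.mem_biUnion (Finset.mem_range.2 hε) ?_
      show ∀ t, t < K → X (l + i + t) ω = altv ε t
      intro t ht
      have h1 : i + t < 2 * K := by omega
      have h2 : l + i + t = l + (i + t) := by omega
      rw [h2, ← hbit (i + t) h1]
      exact h t ht
    refine Set.mem_biUnion (Finset.mem_filter.2 ⟨Finset.mem_range.2 hm, hgood⟩) ?_
    show ∀ t, t < 2 * K → X (l + t) ω = (m.testBit t).toNat
    exact fun t ht => (hbit t ht).symm
  · intro hmem
    obtain ⟨m, hm, hb⟩ := Set.mem_iUnion₂.1 hmem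
    have hmg : good K m := (Finset.mem_filter.1 hm).2
    show ω ∉ runEv X K l
    intro hrun
    obtain ⟨i, hi, hrun2⟩ := Set.mem_iUnion₂.1 hrun
    obtain ⟨ε, hε, hpat⟩ := Set.mem_iUnion₂.1 hrun2
    have hi' : i < K + 1 := Finset.mem_range.1 hi
    obtain ⟨t, ht, hne⟩ := hmg i hi' ε (Finset.mem_range.1 hε)
    apply hne
    have h1 : i + t < 2 * K := by omega
    have hbval : X (l + (i + t)) ω = (m.testBit (i + t)).toNat := hb (i + t) h1
    have h2 : l + (i + t) = l + i + t := by omega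
    rw [h2] at hbval
    rw [← hbval]
    exact hpat t ht

lemma batom_disj {X : ℕ → Ω → ℕ} {n m m' : ℕ} (hm : m < 2 ^ n) (hm' : m' < 2 ^ n)
    (hne : m ≠ m') (l : ℕ) : Disjoint (batom X n l m) (batom X n l m') := by
  rw [Set.disjoint_left]
  intro ω h1 h2
  have hex : ∃ t, m.testBit t ≠ m'.testBit t := by
    by_contra h
    push_neg at h
    exact hne (Nat.eq_of_testBit_eq h)
  obtain ⟨t, ht⟩ := hex
  have htn : t < n := by
    by_contra hc
    push_neg at hc
    have e1 : m.testBit t = false :=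
      Nat.testBit_eq_false_of_lt (lt_of_lt_of_le hm (Nat.pow_le_pow_right (by omega) hc))
    have e2 : m'.testBit t = false :=
      Nat.testBit_eq_false_of_lt (lt_of_lt_of_le hm' (Nat.pow_le_pow_right (by omega) hc))
    rw [e1, e2] at ht
    exact ht rfl
  have v1 := h1 t htn
  have v2 := h2 t htn
  apply ht
  have h3 : (m.testBit t).toNat = (m'.testBit t).toNat := by
    simpa using v1.symm.trans v2
  cases hb : m.testBit t <;> cases hb' : m'.testBit t <;> simp_all

lemma prod_blocks {M : Type*} [CommMonoid M] (f : ℕ → M) (n : ℕ) : ∀ J,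
    ∏ t ∈ Finset.range (J * n), f t = ∏ j ∈ Finset.range J, ∏ t ∈ Finset.range n, f (j * n + t) := by
  intro J
  induction J with
  | zero => simp
  | succ J ih =>
    rw [show (J + 1) * n = J * n + n by ring, Finset.prod_range_add, ih,
      Finset.prod_range_succ]

section Blocks
variable {μ : Measure Ω} [IsProbabilityMeasure μ] {p q : ℝ} {X : ℕ → Ω → ℕ}

lemma meas_batom (hp0 : 0 ≤ p) (hp1 : p ≤ 1) (hq : q = 1 - p)
    (hmeas : ∀ i, Measurable (X i)) (hval : ∀ i ω, X i ω ≤ 1)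
    (hdist : ∀ i, μ {ω | X i ω = 1} = ENNReal.ofReal p)
    (hindep : iIndepFun X μ) (n l m : ℕ) :
    μ (batom X n l m) = ∏ t ∈ Finset.range n, D p q ((m.testBit t).toNat) :=
  meas_patSet hp0 hp1 hq hmeas hval hdist hindep l n _
    (fun t _ => by cases m.testBit t <;> simp)

lemma meas_Cev (hp0 : 0 ≤ p) (hp1 : p ≤ 1) (hq : q = 1 - p)
    (hmeas : ∀ i, Measurable (X i)) (hval : ∀ i ω, X i ω ≤ 1)
    (hdist : ∀ i, μ {ω | X i ω = 1} = ENNReal.ofReal p)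
    (hindep : iIndepFun X μ) (K l : ℕ) :
    μ (Cev X K l) = ∑ m ∈ goodF K, ∏ t ∈ Finset.range (2 * K), D p q ((m.testBit t).toNat) := by
  rw [Cev_eq hval]
  have hdisj : (↑(goodF K) : Set ℕ).PairwiseDisjoint (fun m => batom X (2 * K) l m) := by
    intro m hm m' hm' hne
    have h1 := Finset.mem_range.1 (Finset.mem_filter.1 (Finset.mem_coe.1 hm)).1
    have h2 := Finset.mem_range.1 (Finset.mem_filter.1 (Finset.mem_coe.1 hm')).1
    exact batom_disj h1 h2 hne l
  rw [measure_biUnion_finset hdisj (fun m _ => measurableSet_patSet hmeas _ _ _)]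
  exact Finset.sum_congr rfl fun m _ => meas_batom hp0 hp1 hq hmeas hval hdist hindep _ _ _

lemma meas_iInter_Cev (hp0 : 0 ≤ p) (hp1 : p ≤ 1) (hq : q = 1 - p)
    (hmeas : ∀ i, Measurable (X i)) (hval : ∀ i ω, X i ω ≤ 1)
    (hdist : ∀ i, μ {ω | X i ω = 1} = ENNReal.ofReal p)
    (hindep : iIndepFun X μ)
    (K : ℕ) (hK : 1 ≤ K) (J : ℕ) :
    μ (⋂ j ∈ Finset.range J, Cev X K (1 + j * (2 * K)))
      = (μ (Cev X K 1)) ^ J := by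
  set n := 2 * K with hn
  have hn0 : 0 < n := by omega
  set g : ℕ → ℝ≥0∞ := fun m => ∏ t ∈ Finset.range n, D p q ((m.testBit t).toNat) with hg
  -- step A : set equality
  have hA : (⋂ j ∈ Finset.range J, Cev X K (1 + j * n))
      = ⋃ W ∈ Fintype.piFinset (fun _ : Fin J => goodF K),
          ⋂ j : Fin J, batom X n (1 + (j : ℕ) * n) (W j) := by
    ext ω
    simp only [Set.mem_iInter, Set.mem_iUnion, Finset.mem_range, exists_prop,
      Fintype.mem_piFinset]
    constructor
    · intro hω
      have h1 : ∀ j : Fin J, ∃ m ∈ goodF K, ω ∈ batom X n (1 + (j : ℕ) * n) m := by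
        intro j
        have := hω j j.isLt
        rw [Cev_eq hval] at this
        simpa using this
      choose W hW1 hW2 using h1
      exact ⟨W, hW1, hW2⟩
    · rintro ⟨W, hW1, hW2⟩ j hj
      rw [Cev_eq hval]
      exact Set.mem_biUnion (hW1 ⟨j, hj⟩) (hW2 ⟨j, hj⟩)
  have hdisj : (↑(Fintype.piFinset fun _ : Fin J => goodF K) :
      Set (Fin J → ℕ)).PairwiseDisjoint
      (fun W => ⋂ j : Fin J, batom X n (1 + (j : ℕ) * n) (W j)) := by
    intro W hW W' hW' hne
    have hj : ∃ j : Fin J, W j ≠ W' j := by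
      by_contra h
      push_neg at h
      exact hne (funext h)
    obtain ⟨j, hjne⟩ := hj
    have hWm := Finset.mem_range.1
      (Finset.mem_filter.1 ((Fintype.mem_piFinset.1 (Finset.mem_coe.1 hW)) j)).1
    have hWm' := Finset.mem_range.1
      (Finset.mem_filter.1 ((Fintype.mem_piFinset.1 (Finset.mem_coe.1 hW')) j)).1
    exact Disjoint.mono (Set.iInter_subset _ j) (Set.iInter_subset _ j)
      (batom_disj hWm hWm' hjne _)
  rw [hA, measure_biUnion_finset hdisj
    (fun W _ => MeasurableSet.iInter fun j => measurableSet_patSet hmeas _ _ _)]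
  -- step C  -- step C : measure of each intersection of atoms
  have hC : ∀ W ∈ Fintype.piFinset (fun _ : Fin J => goodF K),
      μ (⋂ j : Fin J, batom X n (1 + (j : ℕ) * n) (W j)) = ∏ j : Fin J, g (W j) := by
    intro W _
    have hdiv : ∀ (j t' : ℕ), t' < n → (j * n + t') / n = j := by
      intro j t' ht'
      rw [show j * n + t' = t' + n * j by ring, Nat.add_mul_div_left _ _ hn0,
        Nat.div_eq_of_lt ht', Nat.zero_add]
    have hmod : ∀ (j t' : ℕ), t' < n → (j * n + t') % n = t' := by
      intro j t' ht'
      rw [show j * n + t' = t' + n * j by ring, Nat.add_mul_mod_self_left,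
        Nat.mod_eq_of_lt ht']
    have hkey : ∀ (j : Fin J) (t' : ℕ) (ht' : t' < n),
        (if h : ((j : ℕ) * n + t') / n < J then
          ((W ⟨((j : ℕ) * n + t') / n, h⟩).testBit (((j : ℕ) * n + t') % n)).toNat
         else 0) = ((W j).testBit t').toNat := by
      intro j t' ht'
      have hd := hdiv (j : ℕ) t' ht'
      have hmm := hmod (j : ℕ) t' ht'
      have hlt : ((j : ℕ) * n + t') / n < J := by rw [hd]; exact j.isLt
      rw [dif_pos hlt, hmm]
      have hfin : (⟨((j : ℕ) * n + t') / n, hlt⟩ : Fin J) = j := Fin.ext hd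
      rw [hfin]
    have hset : (⋂ j : Fin J, batom X n (1 + (j : ℕ) * n) (W j))
        = patSet X 1 (J * n) (fun t => if h : t / n < J then
            ((W ⟨t / n, h⟩).testBit (t % n)).toNat else 0) := by
      ext ω
      simp only [Set.mem_iInter]
      constructor
      · intro h
        show ∀ t, t < J * n → _
        intro t ht
        have hjJ : t / n < J := Nat.div_lt_of_lt_mul (by rwa [mul_comm] at ht)
        have htn : t % n < n := Nat.mod_lt _ hn0
        have hx := h ⟨t / n, hjJ⟩ (t % n) htn
        have hdm : (t / n) * n + t % n = t := by
          rw [mul_comm]; exact Nat.div_add_mod t n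
        have hco : 1 + (t / n) * n + t % n = 1 + t := by omega
        rw [hco] at hx
        rw [hx]
        simp only [dif_pos hjJ]
      · intro h j
        show ∀ t', t' < n → _
        intro t' ht'
        have htJ : (j : ℕ) * n + t' < J * n := by
          have h1 : (j : ℕ) + 1 ≤ J := j.isLt
          calc (j : ℕ) * n + t' < ((j : ℕ) + 1) * n := by
                have : ((j : ℕ) + 1) * n = (j : ℕ) * n + n := by ring
                omega
          _ ≤ J * n := Nat.mul_le_mul_right _ h1
        have hx := h ((j : ℕ) * n + t') htJ
        have hco : 1 + ((j : ℕ) * n + t') = 1 + (j : ℕ) * n + t' := by omega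
        rw [hco] at hx
        rw [hx]
        exact hkey j t' ht'
    rw [hset, meas_patSet hp0 hp1 hq hmeas hval hdist hindep 1 (J * n) _
      (fun t _ => by
        show (if h : t / n < J then ((W ⟨t / n, h⟩).testBit (t % n)).toNat else 0) ≤ 1
        split
        · exact Bool.toNat_le _
        · omega)]
    rw [prod_blocks (fun t => D p q (if h : t / n < J then
      ((W ⟨t / n, h⟩).testBit (t % n)).toNat else 0)) n J]
    have hrhs : ∏ j : Fin J, g (W j)
        = ∏ j ∈ Finset.range J, (fun jn => if h : jn < J then g (W ⟨jn, h⟩) else 1) j := by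
      rw [← Fin.prod_univ_eq_prod_range]
      exact Finset.prod_congr rfl fun j _ => by rw [dif_pos j.isLt]
    rw [hrhs]
    refine Finset.prod_congr rfl fun jn hjn => ?_
    have hjn' : jn < J := Finset.mem_range.1 hjn
    show (∏ t' ∈ Finset.range n, D p q (if h : (jn * n + t') / n < J then
          ((W ⟨(jn * n + t') / n, h⟩).testBit ((jn * n + t') % n)).toNat else 0))
        = (if h : jn < J then g (W ⟨jn, h⟩) else 1)
    rw [dif_pos hjn']
    show _ = ∏ t' ∈ Finset.range n, D p q (((W ⟨jn, hjn'⟩).testBit t').toNat)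
    refine Finset.prod_congr rfl fun t' ht' => ?_
    exact congrArg (D p q) (hkey ⟨jn, hjn'⟩ t' (Finset.mem_range.1 ht'))
  rw [Finset.sum_congr rfl hC, ← Finset.prod_univ_sum (fun _ : Fin J => goodF K)
    (fun _ m => g m), Finset.prod_const, Finset.card_univ, Fintype.card_fin]
  rw [meas_Cev hp0 hp1 hq hmeas hval hdist hindep K 1]

end Blocks

def hookv (K ε : ℕ) : ℕ → ℕ := fun t => if t < K then (ε + t) % 2 else (ε + K - 1) % 2
def fullv (K ε : ℕ) : ℕ → ℕ := fun t => if t < K then (ε + t) % 2 else (ε + t - 1) % 2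

def Bev (X : ℕ → Ω → ℕ) (K i : ℕ) : Set Ω :=
  if i = K then patSet X (1 + K) K (altv 0) ∪ patSet X (1 + K) K (altv 1)
  else patSet X (1 + i) (K + 1) (hookv K 0) ∪ patSet X (1 + i) (K + 1) (hookv K 1)

def FullE (X : ℕ → Ω → ℕ) (K : ℕ) : Set Ω :=
  patSet X 1 (2 * K) (fullv K 0) ∪ patSet X 1 (2 * K) (fullv K 1)

lemma measurableSet_runEv {X : ℕ → Ω → ℕ} (hmeas : ∀ i, Measurable (X i)) (K l : ℕ) :
    MeasurableSet (runEv X K l) :=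
  Finset.measurableSet_biUnion _ fun i _ =>
    Finset.measurableSet_biUnion _ fun ε _ => measurableSet_patSet hmeas _ _ _

lemma measurableSet_Bev {X : ℕ → Ω → ℕ} (hmeas : ∀ i, Measurable (X i)) (K i : ℕ) :
    MeasurableSet (Bev X K i) := by
  unfold Bev
  split <;>
    exact (measurableSet_patSet hmeas _ _ _).union (measurableSet_patSet hmeas _ _ _)

lemma measurableSet_FullE {X : ℕ → Ω → ℕ} (hmeas : ∀ i, Measurable (X i)) (K : ℕ) :
    MeasurableSet (FullE X K) :=
  (measurableSet_patSet hmeas _ _ _).union (measurableSet_patSet hmeas _ _ _)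

lemma mem_Bev_lt {X : ℕ → Ω → ℕ} {K i : ℕ} (hi : i < K) {ω : Ω} (hω : ω ∈ Bev X K i) :
    ∃ ε, ε < 2 ∧ (∀ t, t < K → X (1 + i + t) ω = (ε + t) % 2)
      ∧ X (1 + i + K) ω = (ε + K - 1) % 2 := by
  rw [Bev, if_neg (by omega)] at hω
  rcases hω with h | h
  · refine ⟨0, by omega, fun t ht => ?_, ?_⟩
    · have := h t (by omega)
      rwa [hookv, if_pos ht] at this
    · have := h K (by omega)
      rwa [hookv, if_neg (by omega)] at this
  · refine ⟨1, by omega, fun t ht => ?_, ?_⟩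
    · have := h t (by omega)
      rwa [hookv, if_pos ht] at this
    · have := h K (by omega)
      rwa [hookv, if_neg (by omega)] at this

lemma mem_Bev_K {X : ℕ → Ω → ℕ} {K : ℕ} {ω : Ω} (hω : ω ∈ Bev X K K) :
    ∃ ε, ε < 2 ∧ ∀ t, t < K → X (1 + K + t) ω = (ε + t) % 2 := by
  rw [Bev, if_pos rfl] at hω
  rcases hω with h | h
  · exact ⟨0, by omega, fun t ht => h t ht⟩
  · exact ⟨1, by omega, fun t ht => h t ht⟩

lemma mem_Bev_lt_of (X : ℕ → Ω → ℕ) {K i ε : ℕ} (hi : i < K) (hε : ε < 2) {ω : Ω}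
    (h1 : ∀ t, t < K → X (1 + i + t) ω = (ε + t) % 2)
    (h2 : X (1 + i + K) ω = (ε + K - 1) % 2) : ω ∈ Bev X K i := by
  rw [Bev, if_neg (by omega)]
  have hmem : ω ∈ patSet X (1 + i) (K + 1) (hookv K ε) := by
    intro t ht
    rw [hookv]
    split
    · exact h1 t (by omega)
    · have : t = K := by omega
      rw [this]; exact h2
  interval_cases ε
  · exact Or.inl hmem
  · exact Or.inr hmem

lemma mem_Bev_K_of (X : ℕ → Ω → ℕ) {K ε : ℕ} (hε : ε < 2) {ω : Ω}
    (h1 : ∀ t, t < K → X (1 + K + t) ω = (ε + t) % 2) : ω ∈ Bev X K K := by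
  rw [Bev, if_pos rfl]
  interval_cases ε
  · exact Or.inl h1
  · exact Or.inr h1

lemma Bev_disj_aux {X : ℕ → Ω → ℕ} {K : ℕ} (hK : 1 ≤ K) {i j : ℕ}
    (hij : i < j) (hjK : j ≤ K) (hcase : j < K ∨ 1 ≤ i) :
    Disjoint (Bev X K i) (Bev X K j) := by
  rw [Set.disjoint_left]
  intro ω h1 h2
  have hiK : i < K := by omega
  obtain ⟨ε, hε, hpat, hext⟩ := mem_Bev_lt hiK h1
  have e1 : X (1 + i + (K - 1)) ω = (ε + (K - 1)) % 2 := hpat (K - 1) (by omega)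
  have e2 : X (1 + i + K) ω = (ε + K - 1) % 2 := hext
  rcases Nat.lt_or_ge j K with hjK' | hjK'
  · obtain ⟨δ, hδ, hpat', _⟩ := mem_Bev_lt hjK' h2
    have f1 : X (1 + j + (i + K - 1 - j)) ω = (δ + (i + K - 1 - j)) % 2 :=
      hpat' _ (by omega)
    have f2 : X (1 + j + (i + K - j)) ω = (δ + (i + K - j)) % 2 :=
      hpat' _ (by omega)
    have c1 : 1 + i + (K - 1) = 1 + j + (i + K - 1 - j) := by omega
    have c2 : 1 + i + K = 1 + j + (i + K - j) := by omega
    rw [c1] at e1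
    rw [c2] at e2
    have g1 := e1.symm.trans f1
    have g2 := e2.symm.trans f2
    omega
  · have hjeq : j = K := by omega
    rw [hjeq] at h2
    obtain ⟨δ, hδ, hpat'⟩ := mem_Bev_K h2
    have hi1 : 1 ≤ i := by omega
    have f1 : X (1 + K + (i - 1)) ω = (δ + (i - 1)) % 2 := hpat' _ (by omega)
    have f2 : X (1 + K + i) ω = (δ + i) % 2 := hpat' _ (by omega)
    have c1 : 1 + i + (K - 1) = 1 + K + (i - 1) := by omega
    have c2 : 1 + i + K = 1 + K + i := by omega
    rw [c1] at e1
    rw [c2] at e2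
    have g1 := e1.symm.trans f1
    have g2 := e2.symm.trans f2
    omega

lemma Bev_inter_full {X : ℕ → Ω → ℕ} {K : ℕ} (hK : 1 ≤ K) :
    Bev X K 0 ∩ Bev X K K = FullE X K := by
  ext ω
  constructor
  · rintro ⟨h0, hk⟩
    obtain ⟨ε, hε, hpat, hext⟩ := mem_Bev_lt (by omega : 0 < K) h0
    obtain ⟨δ, hδ, hpatK⟩ := mem_Bev_K hk
    have hlink : δ % 2 = (ε + K - 1) % 2 := by
      have a1 : X (1 + 0 + K) ω = (ε + K - 1) % 2 := hext
      have a2 : X (1 + K + 0) ω = (δ + 0) % 2 := hpatK 0 (by omega)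
      have c : 1 + 0 + K = 1 + K + 0 := by omega
      rw [c] at a1
      have := a1.symm.trans a2
      omega
    have hfull : ω ∈ patSet X 1 (2 * K) (fullv K ε) := by
      intro t ht
      rw [fullv]
      split
      · next h =>
        have := hpat t h
        have c : 1 + 0 + t = 1 + t := by omega
        rwa [c] at this
      · next h =>
        push_neg at h
        have := hpatK (t - K) (by omega)
        have c : 1 + K + (t - K) = 1 + t := by omega
        rw [c] at this
        rw [this]
        omega
    rw [FullE]
    interval_cases ε
    · exact Or.inl hfull
    · exact Or.inr hfull
  · intro hω
    have hfull : ∃ ε, ε < 2 ∧ ω ∈ patSet X 1 (2 * K) (fullv K ε) := by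
      rcases hω with h | h
      · exact ⟨0, by omega, h⟩
      · exact ⟨1, by omega, h⟩
    obtain ⟨ε, hε, h⟩ := hfull
    constructor
    · refine mem_Bev_lt_of X (by omega : 0 < K) hε ?_ ?_
      · intro t ht
        have := h t (by omega)
        have c : 1 + 0 + t = 1 + t := by omega
        rw [c]
        rwa [fullv, if_pos ht] at this
      · have := h K (by omega)
        have c : 1 + 0 + K = 1 + K := by omega
        rw [c]
        rw [fullv, if_neg (by omega)] at this
        exact this
    · have hδ : (ε + K - 1) % 2 < 2 := by omega
      refine mem_Bev_K_of X hδ ?_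
      intro t ht
      have := h (K + t) (by omega)
      have c : 1 + K + t = 1 + (K + t) := by omega
      rw [c, this, fullv, if_neg (by omega)]
      omega

section BonMeas
variable {μ : Measure Ω} [IsProbabilityMeasure μ] {X : ℕ → Ω → ℕ}

lemma bonferroni (hmeas : ∀ i, Measurable (X i)) (K : ℕ) (hK : 1 ≤ K) :
    μ (Cev X K 1) + (μ (Bev X K 0) + ∑ i ∈ Finset.Icc 1 K, μ (Bev X K i))
      ≤ 1 + μ (FullE X K) := by
  set U : Set Ω := ⋃ i ∈ Finset.Icc 1 K, Bev X K i with hU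
  have hUmeas : MeasurableSet U :=
    Finset.measurableSet_biUnion _ fun i _ => measurableSet_Bev hmeas K i
  have hdisj : (↑(Finset.Icc 1 K) : Set ℕ).PairwiseDisjoint (Bev X K) := by
    intro i hi j hj hne
    have hi' := Finset.mem_Icc.1 (Finset.mem_coe.1 hi)
    have hj' := Finset.mem_Icc.1 (Finset.mem_coe.1 hj)
    rcases Nat.lt_or_ge i j with hlt | hge
    · exact Bev_disj_aux hK hlt hj'.2 (Or.inr hi'.1)
    · have hlt : j < i := by omega
      exact (Bev_disj_aux hK hlt hi'.2 (Or.inr hj'.1)).symm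
  have hUmeasure : μ U = ∑ i ∈ Finset.Icc 1 K, μ (Bev X K i) :=
    measure_biUnion_finset hdisj fun i _ => measurableSet_Bev hmeas K i
  -- Bev ⊆ runEv
  have hBsub : ∀ i, i ≤ K → Bev X K i ⊆ runEv X K 1 := by
    intro i hi
    intro ω hω
    rcases Nat.lt_or_ge i K with hiK | hiK
    · obtain ⟨ε, hε, hpat, _⟩ := mem_Bev_lt hiK hω
      exact Set.mem_biUnion (Finset.mem_range.2 (by omega))
        (Set.mem_biUnion (Finset.mem_range.2 hε) hpat)
    · have : i = K := by omega
      subst this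
      obtain ⟨ε, hε, hpat⟩ := mem_Bev_K hω
      exact Set.mem_biUnion (Finset.mem_range.2 (by omega))
        (Set.mem_biUnion (Finset.mem_range.2 hε) hpat)
  have hsub : Bev X K 0 ∪ U ⊆ runEv X K 1 := by
    apply Set.union_subset (hBsub 0 (by omega))
    intro ω hω
    obtain ⟨i, hi, hB⟩ := Set.mem_iUnion₂.1 hω
    exact hBsub i (Finset.mem_Icc.1 hi).2 hB
  have hCdisj : Disjoint (Cev X K 1) (Bev X K 0 ∪ U) :=
    (disjoint_compl_left : Disjoint (runEv X K 1)ᶜ (runEv X K 1)).mono_right hsub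
  have h1 : μ (Cev X K 1) + μ (Bev X K 0 ∪ U) ≤ 1 := by
    rw [← measure_union hCdisj ((measurableSet_Bev hmeas K 0).union hUmeas)]
    exact prob_le_one
  have h2 : μ (Bev X K 0 ∪ U) + μ (Bev X K 0 ∩ U) = μ (Bev X K 0) + μ U :=
    measure_union_add_inter _ hUmeas
  have h3 : Bev X K 0 ∩ U = FullE X K := by
    ext ω
    constructor
    · rintro ⟨h0, hu⟩
      obtain ⟨i, hi, hB⟩ := Set.mem_iUnion₂.1 hu
      have hi' := Finset.mem_Icc.1 hi
      rcases Nat.lt_or_ge i K with hiK | hiK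
      · exfalso
        exact Set.disjoint_left.1
          (Bev_disj_aux hK (by omega : 0 < i) (by omega) (Or.inl hiK)) h0 hB
      · have : i = K := by omega
        subst this
        rw [← Bev_inter_full hK]
        exact ⟨h0, hB⟩
    · intro hω
      rw [← Bev_inter_full hK] at hω
      refine ⟨hω.1, ?_⟩
      exact Set.mem_biUnion (Finset.mem_Icc.2 ⟨hK, le_refl K⟩) hω.2
  calc μ (Cev X K 1) + (μ (Bev X K 0) + ∑ i ∈ Finset.Icc 1 K, μ (Bev X K i))
      = μ (Cev X K 1) + (μ (Bev X K 0 ∪ U) + μ (Bev X K 0 ∩ U)) := by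
        rw [h2, hUmeasure]
    _ = (μ (Cev X K 1) + μ (Bev X K 0 ∪ U)) + μ (FullE X K) := by
        rw [h3]; ring
    _ ≤ 1 + μ (FullE X K) := by
        exact add_le_add h1 le_rfl

end BonMeas

section M
variable {μ : Measure Ω} [IsProbabilityMeasure μ] {p q : ℝ} {X : ℕ → Ω → ℕ}

lemma patSet_disj {X : ℕ → Ω → ℕ} {s L : ℕ} {v w : ℕ → ℕ} (hL : 0 < L)
    (hne : v 0 ≠ w 0) : Disjoint (patSet X s L v) (patSet X s L w) :=
  Set.disjoint_left.2 fun ω h1 h2 => hne (((h1 0 hL).symm.trans (h2 0 hL)))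

lemma nsmul_ofReal (n : ℕ) {x : ℝ} (hx : 0 ≤ x) :
    n • ENNReal.ofReal x = ENNReal.ofReal ((n : ℝ) * x) := by
  rw [nsmul_eq_mul, ← ENNReal.ofReal_natCast n, ← ENNReal.ofReal_mul (Nat.cast_nonneg n)]

lemma ofReal_ineq {a1 a2 a3 a4 a5 : ℝ} (h1 : 0 ≤ a1) (h2 : 0 ≤ a2) (h3 : 0 ≤ a3)
    (h4 : 0 ≤ a4) (h5 : 0 ≤ a5)
    (h : ENNReal.ofReal a1 + (ENNReal.ofReal a2 + (ENNReal.ofReal a3 + ENNReal.ofReal a4))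
      ≤ 1 + ENNReal.ofReal a5) :
    a1 + (a2 + (a3 + a4)) ≤ 1 + a5 := by
  rw [← ENNReal.ofReal_add h3 h4, ← ENNReal.ofReal_add h2 (by positivity),
    ← ENNReal.ofReal_add h1 (by positivity), ← ENNReal.ofReal_one,
    ← ENNReal.ofReal_add (by norm_num) h5] at h
  exact (ENNReal.ofReal_le_ofReal_iff (by positivity)).1 h

lemma oddIneq (K b : ℕ) (hKeq : K = 2 * b + 1) (hb1 : 1 ≤ b) {r A S cR : ℝ}
    (hcR0 : 0 ≤ cR)
    (hr0 : 0 < r) (hrhalf : r ≤ 1 / 2) (hA0 : 0 < A) (hAr : A = r ^ (2 * b))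
    (hSr : S = 1 - 2 * r ^ 2)
    (hreal : cR + (A * S + (A + ((K : ℝ) - 1) * (A * S))) ≤ 1 + A ^ 2 * S) :
    cR ≤ 1 - ((K : ℝ) + 2) * (A * r) + 2 * (A ^ 2 * r ^ 2) := by
  have hK3 : (3 : ℝ) ≤ (K : ℝ) := by
    have : 3 ≤ K := by omega
    exact_mod_cast this
  have hr1 : r ≤ 1 := by linarith
  have hAler : A ≤ r ^ 2 := by
    rw [hAr]
    exact pow_le_pow_of_le_one (le_of_lt hr0) hr1 (by omega)
  have e2 : r ^ 2 ≤ 1 := by nlinarith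
  have e3 : r ^ 3 ≤ 1 := by nlinarith
  have e4 : (0 : ℝ) ≤ (K : ℝ) * r := by positivity
  have h1 : (0 : ℝ) ≤ (1 - 2 * r) * ((K : ℝ) + 1 + (K : ℝ) * r - r ^ 2 - 2 * r ^ 3) := by
    apply mul_nonneg
    · linarith
    · linarith
  have h2 : (0 : ℝ) ≤ (r ^ 2 - A) * (1 - 4 * r ^ 2) := by
    apply mul_nonneg
    · linarith
    · nlinarith
  have hkey : (0 : ℝ) ≤ (K : ℝ) * S + 1 - A * S - ((K : ℝ) + 2) * r + 2 * A * r ^ 2 := by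
    rw [hSr]
    nlinarith [h1, h2]
  nlinarith [mul_nonneg (le_of_lt hA0) hkey, hreal]

lemma Cev_toReal_bound (hp0 : 0 < p) (hp1 : p < 1) (hq : q = 1 - p)
    (hmeas : ∀ i, Measurable (X i)) (hval : ∀ i ω, X i ω ≤ 1)
    (hdist : ∀ i, μ {ω | X i ω = 1} = ENNReal.ofReal p)
    (hindep : iIndepFun X μ)
    (K : ℕ) (hK : 2 ≤ K) :
    (μ (Cev X K 1)).toReal
      ≤ 1 - ((K : ℝ) + 2) * (p * q) ^ ((K : ℝ) / 2) + 2 * (p * q) ^ (K : ℝ) := by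
  have hp0' : (0:ℝ) ≤ p := le_of_lt hp0
  have hp1' : p ≤ 1 := le_of_lt hp1
  have hq0 : (0:ℝ) ≤ q := by rw [hq]; linarith
  have hq0' : (0:ℝ) < q := by rw [hq]; linarith
  have hpq : (0:ℝ) < p * q := mul_pos hp0 hq0'
  have hK0 : (0:ℕ) < K := by omega
  have hD0 : D p q 0 = ENNReal.ofReal q := by simp [D]
  have hD1 : D p q 1 = ENNReal.ofReal p := by simp [D]
  set cR := (μ (Cev X K 1)).toReal with hcR
  have hCfin : μ (Cev X K 1) ≠ ⊤ := measure_ne_top μ _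
  have hCof : μ (Cev X K 1) = ENNReal.ofReal cR := (ENNReal.ofReal_toReal hCfin).symm
  -- generic measure values
  have hDalt : ∀ (s ε : ℕ), μ (patSet X s K (altv ε))
      = (ENNReal.ofReal p * ENNReal.ofReal q) ^ (K / 2)
        * (if K % 2 = 1 then D p q (ε % 2) else 1) := by
    intro s ε
    rw [meas_patSet hp0' hp1' hq hmeas hval hdist hindep s K (altv ε)
      (fun t _ => by simp only [altv]; omega)]
    exact (Finset.prod_congr rfl fun t _ => rfl).trans (prodD_alt p q K ε)
  have hDhook : ∀ (s ε : ℕ), μ (patSet X s (K + 1) (hookv K ε))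
      = ((ENNReal.ofReal p * ENNReal.ofReal q) ^ (K / 2)
        * (if K % 2 = 1 then D p q (ε % 2) else 1)) * D p q ((ε + K - 1) % 2) := by
    intro s ε
    rw [meas_patSet hp0' hp1' hq hmeas hval hdist hindep s (K + 1) (hookv K ε)
      (fun t _ => by simp only [hookv]; split <;> omega)]
    rw [Finset.prod_range_succ]
    congr 1
    · refine (Finset.prod_congr rfl fun t ht => ?_).trans (prodD_alt p q K ε)
      have ht' := Finset.mem_range.1 ht
      simp only [hookv]
      rw [if_pos ht']
    · simp only [hookv]
      rw [if_neg (by omega)]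
  have hDfull : ∀ (ε : ℕ), μ (patSet X 1 (2 * K) (fullv K ε))
      = ((ENNReal.ofReal p * ENNReal.ofReal q) ^ (K / 2)
          * (if K % 2 = 1 then D p q (ε % 2) else 1))
        * ((ENNReal.ofReal p * ENNReal.ofReal q) ^ (K / 2)
          * (if K % 2 = 1 then D p q ((ε + K - 1) % 2) else 1)) := by
    intro ε
    rw [meas_patSet hp0' hp1' hq hmeas hval hdist hindep 1 (2 * K) (fullv K ε)
      (fun t _ => by simp only [fullv]; split <;> omega)]
    rw [show 2 * K = K + K by ring, Finset.prod_range_add]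
    congr 1
    · refine (Finset.prod_congr rfl fun t ht => ?_).trans (prodD_alt p q K ε)
      have ht' := Finset.mem_range.1 ht
      simp only [fullv]
      rw [if_pos ht']
    · refine (Finset.prod_congr rfl fun t ht => ?_).trans (prodD_alt p q K (ε + K - 1))
      simp only [fullv]
      rw [if_neg (by omega)]
      congr 1
      omega
  -- unions
  have hBevK : μ (Bev X K K)
      = μ (patSet X (1 + K) K (altv 0)) + μ (patSet X (1 + K) K (altv 1)) := by
    rw [Bev, if_pos rfl]
    exact measure_union (patSet_disj hK0 (by simp [altv])) (measurableSet_patSet hmeas _ _ _)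
  have hBevlt : ∀ i, i < K → μ (Bev X K i)
      = μ (patSet X (1 + i) (K + 1) (hookv K 0)) + μ (patSet X (1 + i) (K + 1) (hookv K 1)) := by
    intro i hi
    rw [Bev, if_neg (by omega)]
    refine measure_union (patSet_disj (by omega) ?_) (measurableSet_patSet hmeas _ _ _)
    simp only [hookv]
    rw [if_pos hK0, if_pos hK0]
    omega
  have hFullE : μ (FullE X K)
      = μ (patSet X 1 (2 * K) (fullv K 0)) + μ (patSet X 1 (2 * K) (fullv K 1)) := by
    rw [FullE]
    refine measure_union (patSet_disj (by omega) ?_) (measurableSet_patSet hmeas _ _ _)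
    simp only [fullv]
    rw [if_pos hK0, if_pos hK0]
    omega
  -- sum over Icc
  have hIcc : Finset.Icc 1 K = insert K (Finset.Icc 1 (K - 1)) := by
    ext x
    simp only [Finset.mem_Icc, Finset.mem_insert]
    omega
  have hKnot : K ∉ Finset.Icc 1 (K - 1) := by
    simp only [Finset.mem_Icc]
    omega
  have hbon := bonferroni (μ := μ) hmeas K (by omega)
  rw [hIcc, Finset.sum_insert hKnot] at hbon
  -- rpow facts
  have hxK : (p * q) ^ ((K : ℝ)) = (p * q) ^ K := Real.rpow_natCast _ K
  -- parity split
  rcases Nat.even_or_odd K with ⟨b, hKeq⟩ | ⟨b, hKeq⟩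
  · -- K = b + b
    have hb1 : 1 ≤ b := by omega
    have hKd : K / 2 = b := by omega
    have hKm : ¬(K % 2 = 1) := by omega
    set A : ℝ := (p * q) ^ b with hA
    have hA0 : (0:ℝ) ≤ A := by positivity
    have hPPb : (ENNReal.ofReal p * ENNReal.ofReal q) ^ (K / 2) = ENNReal.ofReal A := by
      rw [hKd, ← ENNReal.ofReal_mul hp0', ← ENNReal.ofReal_pow (by positivity)]
    -- values
    have vAlt : ∀ s ε, μ (patSet X s K (altv ε)) = ENNReal.ofReal A := by
      intro s ε
      rw [hDalt s ε, if_neg hKm, hPPb, mul_one]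
    have vBK : μ (Bev X K K) = ENNReal.ofReal (2 * A) := by
      rw [hBevK, vAlt, vAlt, ← ENNReal.ofReal_add hA0 hA0]
      congr 1
      ring
    have vBi : ∀ i, i < K → μ (Bev X K i) = ENNReal.ofReal A := by
      intro i hi
      rw [hBevlt i hi, hDhook, hDhook, if_neg hKm, if_neg hKm, hPPb, mul_one,
        show (0 + K - 1) % 2 = 1 by omega, show (1 + K - 1) % 2 = 0 by omega, hD0, hD1,
        ← ENNReal.ofReal_mul hA0, ← ENNReal.ofReal_mul hA0,
        ← ENNReal.ofReal_add (by positivity) (by positivity)]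
      congr 1
      rw [hq]
      ring
    have vF : μ (FullE X K) = ENNReal.ofReal (2 * A ^ 2) := by
      rw [hFullE, hDfull, hDfull, if_neg hKm, if_neg hKm, if_neg hKm, if_neg hKm,
        hPPb, mul_one,
        ← ENNReal.ofReal_mul hA0, ← ENNReal.ofReal_add (by positivity) (by positivity)]
      congr 1
      ring
    have vSum : ∑ i ∈ Finset.Icc 1 (K - 1), μ (Bev X K i)
        = ENNReal.ofReal (((K : ℝ) - 1) * A) := by
      rw [Finset.sum_congr rfl (fun i hi => vBi i (by
        have := Finset.mem_Icc.1 hi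
        omega)), Finset.sum_const, Nat.card_Icc,
        show K - 1 + 1 - 1 = K - 1 by omega, nsmul_ofReal _ hA0]
      congr 1
      rw [Nat.cast_sub (by omega : 1 ≤ K)]
      norm_num
    rw [hCof, vBK, vBi 0 hK0, vSum, vF] at hbon
    have hK1R : (1:ℝ) ≤ (K:ℝ) := by exact_mod_cast (by omega : 1 ≤ K)
    have hreal := ofReal_ineq ENNReal.toReal_nonneg hA0 (by positivity)
      (by nlinarith) (by positivity) hbon
    have hx : (p * q) ^ ((K : ℝ) / 2) = A := by
      have hc : ((K : ℝ)) / 2 = ((b : ℕ) : ℝ) := by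
        rw [hKeq]
        push_cast
        ring
      rw [hc, Real.rpow_natCast, hA]
    have hy : (p * q) ^ ((K : ℝ)) = A ^ 2 := by
      rw [hxK, hA, ← pow_mul, hKeq]
      congr 1
      omega
    rw [hx, hy]
    have hcR0 : (0:ℝ) ≤ cR := ENNReal.toReal_nonneg
    linarith [hreal]
  · -- K = 2 * b + 1
    have hb1 : 1 ≤ b := by omega
    have hKd : K / 2 = b := by omega
    have hKm : K % 2 = 1 := by omega
    set r : ℝ := (p * q) ^ ((1:ℝ)/2) with hr
    have hr0 : (0:ℝ) < r := Real.rpow_pos_of_pos hpq _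
    have hr2 : r ^ 2 = p * q := by
      rw [hr, ← Real.rpow_natCast ((p*q) ^ ((1:ℝ)/2)) 2, ← Real.rpow_mul (le_of_lt hpq)]
      norm_num
    have hpq4 : p * q ≤ 1 / 4 := by nlinarith [sq_nonneg (p - q), hq]
    have hrhalf : r ≤ 1 / 2 := by nlinarith [hr2, hr0]
    set A : ℝ := (p * q) ^ b with hA
    have hA0 : (0:ℝ) < A := by positivity
    have hAr : A = r ^ (2 * b) := by rw [hA, ← hr2, ← pow_mul]
    set S : ℝ := p ^ 2 + q ^ 2 with hS
    have hS0 : (0:ℝ) < S := by positivity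
    have hSr : S = 1 - 2 * r ^ 2 := by rw [hS, hr2, hq]; ring
    have hPPb : (ENNReal.ofReal p * ENNReal.ofReal q) ^ (K / 2) = ENNReal.ofReal A := by
      rw [hKd, ← ENNReal.ofReal_mul hp0', ← ENNReal.ofReal_pow (by positivity)]
    have vBK : μ (Bev X K K) = ENNReal.ofReal A := by
      rw [hBevK, hDalt, hDalt, if_pos hKm, if_pos hKm, hPPb,
        show (0:ℕ) % 2 = 0 by omega, show (1:ℕ) % 2 = 1 by omega, hD0, hD1,
        ← ENNReal.ofReal_mul (le_of_lt hA0), ← ENNReal.ofReal_mul (le_of_lt hA0),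
        ← ENNReal.ofReal_add (by positivity) (by positivity)]
      congr 1
      rw [hq]
      ring
    have vBi : ∀ i, i < K → μ (Bev X K i) = ENNReal.ofReal (A * S) := by
      intro i hi
      rw [hBevlt i hi, hDhook, hDhook, if_pos hKm, if_pos hKm, hPPb,
        show (0:ℕ) % 2 = 0 by omega, show (1:ℕ) % 2 = 1 by omega,
        show (0 + K - 1) % 2 = 0 by omega, show (1 + K - 1) % 2 = 1 by omega,
        hD0, hD1,
        ← ENNReal.ofReal_mul (le_of_lt hA0), ← ENNReal.ofReal_mul (by positivity),
        ← ENNReal.ofReal_mul (le_of_lt hA0), ← ENNReal.ofReal_mul (by positivity),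
        ← ENNReal.ofReal_add (by positivity) (by positivity)]
      congr 1
      rw [hS]
      ring
    have vF : μ (FullE X K) = ENNReal.ofReal (A ^ 2 * S) := by
      rw [hFullE, hDfull, hDfull, if_pos hKm, if_pos hKm, if_pos hKm, if_pos hKm, hPPb,
        show (0:ℕ) % 2 = 0 by omega, show (1:ℕ) % 2 = 1 by omega,
        show (0 + K - 1) % 2 = 0 by omega, show (1 + K - 1) % 2 = 1 by omega,
        hD0, hD1,
        ← ENNReal.ofReal_mul (le_of_lt hA0), ← ENNReal.ofReal_mul (le_of_lt hA0),
        ← ENNReal.ofReal_mul (by positivity), ← ENNReal.ofReal_mul (by positivity),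
        ← ENNReal.ofReal_add (by positivity) (by positivity)]
      congr 1
      rw [hS]
      ring
    have vSum : ∑ i ∈ Finset.Icc 1 (K - 1), μ (Bev X K i)
        = ENNReal.ofReal (((K : ℝ) - 1) * (A * S)) := by
      rw [Finset.sum_congr rfl (fun i hi => vBi i (by
        have := Finset.mem_Icc.1 hi
        omega)), Finset.sum_const, Nat.card_Icc,
        show K - 1 + 1 - 1 = K - 1 by omega,
        nsmul_ofReal _ (by positivity : (0:ℝ) ≤ A * S)]
      congr 1
      rw [Nat.cast_sub (by omega : 1 ≤ K)]
      norm_num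
    rw [hCof, vBK, vBi 0 hK0, vSum, vF] at hbon
    have hK1R : (1:ℝ) ≤ (K:ℝ) := by exact_mod_cast (by omega : 1 ≤ K)
    have hreal := ofReal_ineq ENNReal.toReal_nonneg (by positivity) (le_of_lt hA0)
      (by nlinarith [mul_pos hA0 hS0]) (by positivity) hbon
    -- hreal : cR + (A * S + (A + (K-1) * (A * S))) ≤ 1 + A^2 * S
    have hx : (p * q) ^ ((K : ℝ) / 2) = A * r := by
      have h0 : (p * q) ^ ((K : ℝ) / 2) = r ^ K := by
        rw [show ((K : ℝ)) / 2 = (1/2) * ((K : ℕ) : ℝ) by ring,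
          Real.rpow_mul (le_of_lt hpq), Real.rpow_natCast, hr]
      rw [h0, hKeq, pow_succ, ← hAr]
    have hy : (p * q) ^ ((K : ℝ)) = A ^ 2 * r ^ 2 := by
      have hr2K : A ^ 2 * r ^ 2 = r ^ (2 * b * 2 + 2) := by
        rw [hAr, ← pow_mul, ← pow_add]
      rw [hxK, hKeq, ← hr2, ← pow_mul, hr2K]
      congr 1
      omega
    rw [hx, hy]
    exact oddIneq K b hKeq hb1 ENNReal.toReal_nonneg hr0 hrhalf hA0 hAr hSr hreal
end M

lemma switchCount_pat {X : ℕ → Ω → ℕ} {ω : Ω} {s K ε : ℕ} (hK : 1 ≤ K)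
    (hpat : ∀ t, t < K → X (s + t) ω = (ε + t) % 2) :
    switchCount X K s ω = K - 1 := by
  rw [switchCount]
  have hone : ∀ i ∈ Finset.Icc (s + 1) (K + s - 1),
      ((1 - X (i - 1) ω) * X i ω + X (i - 1) ω * (1 - X i ω)) = 1 := by
    intro i hi
    obtain ⟨h1, h2⟩ := Finset.mem_Icc.1 hi
    have ha := hpat (i - 1 - s) (by omega)
    have hb := hpat (i - s) (by omega)
    have ca : s + (i - 1 - s) = i - 1 := by omega
    have cb : s + (i - s) = i := by omega
    rw [ca] at ha
    rw [cb] at hb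
    have hcase : (X (i - 1) ω = 0 ∧ X i ω = 1) ∨ (X (i - 1) ω = 1 ∧ X i ω = 0) := by
      omega
    rcases hcase with ⟨u, v⟩ | ⟨u, v⟩ <;> rw [u, v]
  rw [Finset.sum_congr rfl hone, Finset.sum_const, Nat.card_Icc, smul_eq_mul, mul_one]
  omega

lemma target_subset {X : ℕ → Ω → ℕ} (N K : ℕ) (hK : 2 ≤ K) (hNK : 2 * K ≤ N) :
    {ω : Ω | (longestSwitch X N 1 ω : ℝ) < (K : ℝ) - 1}
      ⊆ ⋂ j ∈ Finset.range (N / K / 2), Cev X K (1 + j * (2 * K)) := by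
  intro ω hω
  simp only [Set.mem_setOf_eq] at hω
  rw [Set.mem_iInter₂]
  intro j hj
  have hjJ : j < N / K / 2 := Finset.mem_range.1 hj
  intro hrun
  obtain ⟨i, hi, hrun2⟩ := Set.mem_iUnion₂.1 hrun
  obtain ⟨ε, hε, hpat⟩ := Set.mem_iUnion₂.1 hrun2
  have hi' : i < K + 1 := Finset.mem_range.1 hi
  -- the window start
  set s : ℕ := 1 + j * (2 * K) + i with hs
  have hsc : switchCount X K s ω = K - 1 :=
    switchCount_pat (by omega) (fun t ht => hpat t ht)
  -- position bound : s ≤ 1 + N - K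
  have hA : (j + 1) * (2 * K) ≤ (N / K / 2) * (2 * K) :=
    Nat.mul_le_mul_right _ (by omega)
  have hB : (N / K / 2) * (2 * K) = (2 * (N / K / 2)) * K := by ring
  have hC : (2 * (N / K / 2)) * K ≤ (N / K) * K :=
    Nat.mul_le_mul_right _ (by omega)
  have hD : (N / K) * K ≤ N := Nat.div_mul_le_self N K
  have hE : (j + 1) * (2 * K) = j * (2 * K) + 2 * K := by ring
  have hsle : s ≤ 1 + N - K := by omega
  -- K belongs to the filtered set
  have hKmem : K ∈ (Finset.Icc 1 N).filter fun n =>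
      ∃ i' ∈ Finset.Icc 1 (1 + N - n + 1), switchCount X n i' ω = n - 1 := by
    simp only [Finset.mem_filter]
    refine ⟨Finset.mem_Icc.2 ⟨by omega, by omega⟩, ⟨s, Finset.mem_Icc.2 ⟨by omega, by omega⟩, hsc⟩⟩
  have hMle : K - 1 ≤ longestSwitch X N 1 ω := by
    have := Finset.le_sup (f := fun n => n - 1) hKmem
    exact this
  -- contradiction with hω
  have hcast : ((K - 1 : ℕ) : ℝ) ≤ (longestSwitch X N 1 ω : ℝ) := Nat.cast_le.2 hMle
  rw [Nat.cast_sub (by omega : 1 ≤ K)] at hcast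
  norm_num at hcast
  linarith


end SwitchAux

open SwitchAux

theorem prob_longestSwitch_lt_le
    {Ω : Type*} [MeasurableSpace Ω] (μ : Measure Ω) [IsProbabilityMeasure μ]
    (p q : ℝ) (hp0 : 0 < p) (hp1 : p < 1) (hq : q = 1 - p)
    (X : ℕ → Ω → ℕ)
    (hmeas : ∀ i, Measurable (X i))
    (hval : ∀ i ω, X i ω ≤ 1)
    (hdist : ∀ i, μ {ω | X i ω = 1} = ENNReal.ofReal p)
    (hindep : iIndepFun X μ)
    (N K : ℕ) (hK : 1 ≤ K) (hNK : 2 * K ≤ N) :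
    (μ {ω | (longestSwitch X N 1 ω : ℝ) < (K : ℝ) - 1}).toReal
      ≤ (1 - ((K : ℝ) + 2) * (p * q) ^ ((K : ℝ) / 2) + 2 * (p * q) ^ (K : ℝ))
          ^ ((((N / K : ℕ) : ℝ) - 1) / 2) := by
  have hq0 : (0:ℝ) < q := by rw [hq]; linarith
  have hpq : (0:ℝ) < p * q := mul_pos hp0 hq0
  have hpq4 : p * q ≤ 1 / 4 := by nlinarith [sq_nonneg (p - q)]
  rcases eq_or_lt_of_le hK with hK1 | hK2
  · -- K = 1 : the event is empty
    have hempty : {ω : Ω | (longestSwitch X N 1 ω : ℝ) < (K : ℝ) - 1} = ∅ := by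
      apply Set.eq_empty_iff_forall_notMem.2
      intro ω hω
      simp only [Set.mem_setOf_eq, ← hK1] at hω
      norm_num at hω
      have : (0:ℝ) ≤ (longestSwitch X N 1 ω : ℝ) := Nat.cast_nonneg _
      linarith
    rw [hempty]
    simp only [measure_empty, ENNReal.toReal_zero]
    apply Real.rpow_nonneg
    rw [← hK1]
    set r : ℝ := (p * q) ^ ((1:ℝ) / 2) with hr
    have hr0 : (0:ℝ) < r := Real.rpow_pos_of_pos hpq _
    have hr2 : r ^ 2 = p * q := by
      rw [hr, ← Real.rpow_natCast ((p * q) ^ ((1:ℝ)/2)) 2, ← Real.rpow_mul (le_of_lt hpq)]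
      norm_num
    have hrhalf : r ≤ 1 / 2 := by nlinarith [hr2, hr0]
    have hx : (p * q) ^ (((1:ℕ) : ℝ) / 2) = r := by rw [Nat.cast_one]
    have hy : (p * q) ^ (((1:ℕ) : ℝ)) = r ^ 2 := by
      rw [hr2]
      norm_num [Real.rpow_one]
    rw [hx, hy]
    have hfac : (0:ℝ) ≤ (1 - r) * (1 - 2 * r) :=
      mul_nonneg (by linarith) (by linarith)
    push_cast
    nlinarith [hfac]
  · -- 2 ≤ K
    have hK2' : 2 ≤ K := hK2
    have hsub := target_subset (X := X) N K hK2' hNK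
    have hmono : μ {ω : Ω | (longestSwitch X N 1 ω : ℝ) < (K : ℝ) - 1}
        ≤ μ (⋂ j ∈ Finset.range (N / K / 2), Cev X K (1 + j * (2 * K))) :=
      measure_mono hsub
    have hprod := meas_iInter_Cev (μ := μ) (le_of_lt hp0) (le_of_lt hp1) hq hmeas hval hdist
      hindep K (by omega) (N / K / 2)
    set cR := (μ (Cev X K 1)).toReal with hcR
    have hc1 : μ (Cev X K 1) ≤ 1 := prob_le_one
    have hpow1 : (μ (Cev X K 1)) ^ (N / K / 2) ≤ 1 := by
      calc (μ (Cev X K 1)) ^ (N / K / 2) ≤ 1 ^ (N / K / 2) := by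
            exact pow_le_pow_left' hc1 _
        _ = 1 := one_pow _
    have hLHS : (μ {ω : Ω | (longestSwitch X N 1 ω : ℝ) < (K : ℝ) - 1}).toReal
        ≤ cR ^ (N / K / 2) := by
      have h1 : (μ {ω : Ω | (longestSwitch X N 1 ω : ℝ) < (K : ℝ) - 1}).toReal
          ≤ ((μ (Cev X K 1)) ^ (N / K / 2)).toReal := by
        apply ENNReal.toReal_mono
        · exact ne_top_of_le_ne_top ENNReal.one_ne_top hpow1
        · exact hmono.trans_eq hprod
      rwa [ENNReal.toReal_pow] at h1
    have hcR0 : (0:ℝ) ≤ cR := ENNReal.toReal_nonneg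
    have hcR1 : cR ≤ 1 := by
      have := ENNReal.toReal_mono ENNReal.one_ne_top hc1
      simpa using this
    have hbase := Cev_toReal_bound (μ := μ) hp0 hp1 hq hmeas hval hdist hindep K hK2'
    rw [← hcR] at hbase
    have hbase0 : (0:ℝ) ≤ 1 - ((K : ℝ) + 2) * (p * q) ^ ((K : ℝ) / 2)
        + 2 * (p * q) ^ (K : ℝ) := le_trans hcR0 hbase
    have hm2 : 2 ≤ N / K := (Nat.le_div_iff_mul_le (by omega)).2 (by omega)
    have hm2R : (2:ℝ) ≤ ((N / K : ℕ) : ℝ) := by exact_mod_cast hm2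
    have hexp0 : (0:ℝ) ≤ (((N / K : ℕ) : ℝ) - 1) / 2 := by linarith
    have hJle : (((N / K : ℕ) : ℝ) - 1) / 2 ≤ ((N / K / 2 : ℕ) : ℝ) := by
      have h1 : N / K ≤ 2 * (N / K / 2) + 1 := by omega
      have h2 : ((N / K : ℕ) : ℝ) ≤ 2 * ((N / K / 2 : ℕ) : ℝ) + 1 := by exact_mod_cast h1
      linarith
    calc (μ {ω : Ω | (longestSwitch X N 1 ω : ℝ) < (K : ℝ) - 1}).toReal
        ≤ cR ^ (N / K / 2) := hLHS
      _ = cR ^ (((N / K / 2 : ℕ) : ℝ)) := (Real.rpow_natCast cR _).symm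
      _ ≤ cR ^ ((((N / K : ℕ) : ℝ) - 1) / 2) :=
          Real.rpow_le_rpow_of_exponent_ge' hcR0 hcR1 hexp0 hJle
      _ ≤ (1 - ((K : ℝ) + 2) * (p * q) ^ ((K : ℝ) / 2) + 2 * (p * q) ^ (K : ℝ))
            ^ ((((N / K : ℕ) : ℝ) - 1) / 2) :=
          Real.rpow_le_rpow hcR0 hbase hexp0
end
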